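/- arXiv:2004.06471 — 13 statements merged into one kernel-verified Lean document; each statement's English description precedes it below -/
import Mathlib

section
/- Any solution (u,θ) ∈ V × W of the discrete stationary Boussinesq system satisfies the a priori bounds ‖θ‖_W ≤ K₂ = κ⁻¹‖γ‖₋₁ and ‖u‖_V ≤ K₁ = Ri C_P² ν⁻¹ κ⁻¹ ‖γ‖₋₁ + ν⁻¹ ‖f‖₋₁. -/
open scoped RealInnerProductSpace

/-- A priori bounds for solutions of the discrete stationary Boussinesq system:
any solution `(u, θ)` satisfies `‖θ‖ ≤ K₂ = κ⁻¹‖γ‖₋₁` and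
`‖u‖ ≤ K₁ = Ri C_P² ν⁻¹ κ⁻¹ ‖γ‖₋₁ + ν⁻¹‖f‖₋₁`. -/
theorem boussinesq_apriori_bounds
    {V W : Type*} [NormedAddCommGroup V] [InnerProductSpace ℝ V] [FiniteDimensional ℝ V]
    [NormedAddCommGroup W] [InnerProductSpace ℝ W] [FiniteDimensional ℝ W]
    (ν κ Ri M CP : ℝ) (hν : 0 < ν) (hκ : 0 < κ) (hRi : 0 < Ri) (hM : 0 < M) (hCP : 0 < CP)
    (b : V →ₗ[ℝ] V →ₗ[ℝ] V →ₗ[ℝ] ℝ)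
    (hb0 : ∀ u v : V, b u v v = 0)
    (hb : ∀ u v w : V, |b u v w| ≤ M * ‖u‖ * ‖v‖ * ‖w‖)
    (bs : V →ₗ[ℝ] W →ₗ[ℝ] W →ₗ[ℝ] ℝ)
    (hbs0 : ∀ (u : V) (φ : W), bs u φ φ = 0)
    (hbs : ∀ (u : V) (φ ψ : W), |bs u φ ψ| ≤ M * ‖u‖ * ‖φ‖ * ‖ψ‖)
    (c : W →ₗ[ℝ] V →ₗ[ℝ] ℝ)
    (hc : ∀ (θ : W) (v : V), |c θ v| ≤ CP ^ 2 * ‖θ‖ * ‖v‖)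
    (f : V →L[ℝ] ℝ) (γ : W →L[ℝ] ℝ)
    (u : V) (θ : W)
    (hu : ∀ v : V, b u u v + ν * ⟪u, v⟫ = Ri * c θ v + f v)
    (hθ : ∀ χ : W, bs u θ χ + κ * ⟪θ, χ⟫ = γ χ) :
    ‖θ‖ ≤ κ⁻¹ * ‖γ‖ ∧ ‖u‖ ≤ Ri * CP ^ 2 * ν⁻¹ * κ⁻¹ * ‖γ‖ + ν⁻¹ * ‖f‖ := by

  have hθ2 : κ * ‖θ‖ ^ 2 ≤ ‖γ‖ * ‖θ‖ := by
    have h1 := hθ θ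
    rw [hbs0, zero_add, real_inner_self_eq_norm_sq] at h1
    calc κ * ‖θ‖ ^ 2 = γ θ := h1
      _ ≤ |γ θ| := le_abs_self _
      _ ≤ ‖γ‖ * ‖θ‖ := γ.le_opNorm θ
  have hθb : ‖θ‖ ≤ κ⁻¹ * ‖γ‖ := by
    rcases eq_or_lt_of_le (norm_nonneg θ) with h | h
    · rw [← h]; positivity
    · rw [le_inv_mul_iff₀ hκ]
      have := (mul_le_mul_iff_left₀ h).mpr (le_refl (1:ℝ))
      nlinarith [hθ2]
  refine ⟨hθb, ?_⟩
  have hu2 : ν * ‖u‖ ^ 2 ≤ (Ri * CP ^ 2 * (κ⁻¹ * ‖γ‖) + ‖f‖) * ‖u‖ := by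
    have h1 := hu u
    rw [hb0, zero_add, real_inner_self_eq_norm_sq] at h1
    have hcb : Ri * c θ u ≤ Ri * (CP ^ 2 * ‖θ‖ * ‖u‖) :=
      mul_le_mul_of_nonneg_left ((le_abs_self _).trans (hc θ u)) hRi.le
    have hfb : f u ≤ ‖f‖ * ‖u‖ := (le_abs_self _).trans (f.le_opNorm u)
    have hθu : Ri * (CP ^ 2 * ‖θ‖ * ‖u‖) ≤ Ri * (CP ^ 2 * (κ⁻¹ * ‖γ‖) * ‖u‖) := by
      have : CP ^ 2 * ‖θ‖ * ‖u‖ ≤ CP ^ 2 * (κ⁻¹ * ‖γ‖) * ‖u‖ := by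
        apply mul_le_mul_of_nonneg_right _ (norm_nonneg u)
        exact mul_le_mul_of_nonneg_left hθb (by positivity)
      exact mul_le_mul_of_nonneg_left this hRi.le
    nlinarith [h1]
  rcases eq_or_lt_of_le (norm_nonneg u) with h | h
  · rw [← h]; positivity
  · have hgn : (0:ℝ) ≤ ‖γ‖ := norm_nonneg _
    have hfn : (0:ℝ) ≤ ‖f‖ := norm_nonneg _
    rw [show Ri * CP ^ 2 * ν⁻¹ * κ⁻¹ * ‖γ‖ + ν⁻¹ * ‖f‖
        = ν⁻¹ * (Ri * CP ^ 2 * (κ⁻¹ * ‖γ‖) + ‖f‖) by ring, le_inv_mul_iff₀ hν]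
    nlinarith [hu2]
end

section
/- (Small data uniqueness, Lemma 2.1.) If ν⁻¹ M (2K₁ + κ⁻¹ M K₂²) < 1 and ν⁻¹ κ⁻¹ Ri² C_P⁴ < 1, then the discrete stationary Boussinesq system has at most one solution: if (u,θ) and (w,z) in V × W both solve the system, then u = w and θ = z. -/
open scoped RealInnerProductSpace

set_option maxHeartbeats 1600000 in
/-- Small data uniqueness (Lemma 2.1): under the small data conditions, the discrete
stationary Boussinesq system has at most one solution. -/
theorem boussinesq_small_data_uniqueness
    {V W : Type*} [NormedAddCommGroup V] [InnerProductSpace ℝ V] [FiniteDimensional ℝ V]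
    [NormedAddCommGroup W] [InnerProductSpace ℝ W] [FiniteDimensional ℝ W]
    (ν κ Ri M CP : ℝ) (hν : 0 < ν) (hκ : 0 < κ) (hRi : 0 < Ri) (hM : 0 < M) (hCP : 0 < CP)
    (b : V →ₗ[ℝ] V →ₗ[ℝ] V →ₗ[ℝ] ℝ)
    (hb0 : ∀ u v : V, b u v v = 0)
    (hb : ∀ u v w : V, |b u v w| ≤ M * ‖u‖ * ‖v‖ * ‖w‖)
    (bs : V →ₗ[ℝ] W →ₗ[ℝ] W →ₗ[ℝ] ℝ)
    (hbs0 : ∀ (u : V) (φ : W), bs u φ φ = 0)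
    (hbs : ∀ (u : V) (φ ψ : W), |bs u φ ψ| ≤ M * ‖u‖ * ‖φ‖ * ‖ψ‖)
    (c : W →ₗ[ℝ] V →ₗ[ℝ] ℝ)
    (hc : ∀ (θ : W) (v : V), |c θ v| ≤ CP ^ 2 * ‖θ‖ * ‖v‖)
    (f : V →L[ℝ] ℝ) (γ : W →L[ℝ] ℝ)
    (hsd1 : ν⁻¹ * M * (2 * (Ri * CP ^ 2 * ν⁻¹ * κ⁻¹ * ‖γ‖ + ν⁻¹ * ‖f‖) + κ⁻¹ * M * (κ⁻¹ * ‖γ‖) ^ 2) < 1)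
    (hsd2 : ν⁻¹ * κ⁻¹ * Ri ^ 2 * CP ^ 4 < 1)
    (u w : V) (θ z : W)
    (hu : ∀ v : V, b u u v + ν * ⟪u, v⟫ = Ri * c θ v + f v)
    (hθ : ∀ χ : W, bs u θ χ + κ * ⟪θ, χ⟫ = γ χ)
    (hw : ∀ v : V, b w w v + ν * ⟪w, v⟫ = Ri * c z v + f v)
    (hz : ∀ χ : W, bs w z χ + κ * ⟪z, χ⟫ = γ χ) :
    u = w ∧ θ = z := by
  -- notation
  have hνne : (ν:ℝ) ≠ 0 := hν.ne'
  have hκne : (κ:ℝ) ≠ 0 := hκ.ne'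
  set E := ‖u - w‖ with hEdef
  set P := ‖θ - z‖ with hPdef
  have hE0 : 0 ≤ E := norm_nonneg _
  have hP0 : 0 ≤ P := norm_nonneg _
  have hU0 : 0 ≤ ‖u‖ := norm_nonneg _
  have hT0 : 0 ≤ ‖θ‖ := norm_nonneg _
  have hG0 : 0 ≤ ‖γ‖ := norm_nonneg _
  have hF0 : 0 ≤ ‖f‖ := norm_nonneg _
  -- difference equation for velocity
  have key1 : ν * E ^ 2 = Ri * c (θ - z) (u - w) - b (u - w) u (u - w) := by
    have hn : ⟪u - w, u - w⟫ = ‖u - w‖ ^ 2 := real_inner_self_eq_norm_sq _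
    have A := hu (u - w)
    have B := hw (u - w)
    have h0 := hb0 w (u - w)
    rw [hEdef]
    simp only [map_sub, LinearMap.sub_apply, inner_sub_left, inner_sub_right] at A B h0 hn ⊢
    linear_combination A - B - h0 - ν * hn
  -- difference equation for temperature
  have key2 : κ * P ^ 2 = -(bs (u - w) θ (θ - z)) := by
    have hn : ⟪θ - z, θ - z⟫ = ‖θ - z‖ ^ 2 := real_inner_self_eq_norm_sq _
    have A := hθ (θ - z)
    have B := hz (θ - z)
    have h0 := hbs0 w (θ - z)
    rw [hPdef]
    simp only [map_sub, LinearMap.sub_apply, inner_sub_left, inner_sub_right] at A B h0 hn ⊢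
    linear_combination A - B - h0 - κ * hn
  -- a priori bound on θ
  have hT : κ * ‖θ‖ ≤ ‖γ‖ := by
    have A := hθ θ
    have h0 := hbs0 u θ
    have hn : ⟪θ, θ⟫ = ‖θ‖ ^ 2 := real_inner_self_eq_norm_sq _
    have hγθ : γ θ ≤ ‖γ‖ * ‖θ‖ := by
      calc γ θ ≤ |γ θ| := le_abs_self _
        _ = ‖γ θ‖ := (Real.norm_eq_abs _).symm
        _ ≤ ‖γ‖ * ‖θ‖ := γ.le_opNorm θ
    have hAA : κ * ⟪θ, θ⟫ = γ θ := by linarith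
    have hsq : (κ * ‖θ‖) * ‖θ‖ ≤ ‖γ‖ * ‖θ‖ := by
      calc (κ * ‖θ‖) * ‖θ‖ = κ * ⟪θ, θ⟫ := by rw [hn]; ring
        _ = γ θ := hAA
        _ ≤ ‖γ‖ * ‖θ‖ := hγθ
    rcases hT0.eq_or_lt with h | h
    · rw [← h, mul_zero]; exact hG0
    · exact le_of_mul_le_mul_right hsq h
  -- a priori bound on u
  have hU : ν * ‖u‖ ≤ Ri * CP ^ 2 * ‖θ‖ + ‖f‖ := by
    have A := hu u
    have h0 := hb0 u u
    have hn : ⟪u, u⟫ = ‖u‖ ^ 2 := real_inner_self_eq_norm_sq _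
    have hcu : Ri * c θ u ≤ Ri * (CP ^ 2 * ‖θ‖ * ‖u‖) :=
      mul_le_mul_of_nonneg_left (le_trans (le_abs_self _) (hc θ u)) hRi.le
    have hfu : f u ≤ ‖f‖ * ‖u‖ := by
      calc f u ≤ |f u| := le_abs_self _
        _ = ‖f u‖ := (Real.norm_eq_abs _).symm
        _ ≤ ‖f‖ * ‖u‖ := f.le_opNorm u
    have hAA : ν * ⟪u, u⟫ = Ri * c θ u + f u := by linarith
    have hsq : (ν * ‖u‖) * ‖u‖ ≤ (Ri * CP ^ 2 * ‖θ‖ + ‖f‖) * ‖u‖ := by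
      calc (ν * ‖u‖) * ‖u‖ = ν * ⟪u, u⟫ := by rw [hn]; ring
        _ = Ri * c θ u + f u := hAA
        _ ≤ Ri * (CP ^ 2 * ‖θ‖ * ‖u‖) + ‖f‖ * ‖u‖ := by linarith
        _ = (Ri * CP ^ 2 * ‖θ‖ + ‖f‖) * ‖u‖ := by ring
    rcases hU0.eq_or_lt with h | h
    · rw [← h, mul_zero]; positivity
    · exact le_of_mul_le_mul_right hsq h
  -- main energy inequality for the difference
  have hmain : ν * E ^ 2 + κ * P ^ 2 ≤
      Ri * (CP ^ 2 * P * E) + M * ‖u‖ * E ^ 2 + M * ‖θ‖ * E * P := by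
    have h1 : Ri * c (θ - z) (u - w) ≤ Ri * (CP ^ 2 * P * E) := by
      refine mul_le_mul_of_nonneg_left ?_ hRi.le
      calc c (θ - z) (u - w) ≤ |c (θ - z) (u - w)| := le_abs_self _
        _ ≤ CP ^ 2 * ‖θ - z‖ * ‖u - w‖ := hc _ _
        _ = CP ^ 2 * P * E := by rw [hEdef, hPdef]
    have h2 : -(b (u - w) u (u - w)) ≤ M * ‖u‖ * E ^ 2 := by
      calc -(b (u - w) u (u - w)) ≤ |b (u - w) u (u - w)| := neg_le_abs _
        _ ≤ M * ‖u - w‖ * ‖u‖ * ‖u - w‖ := hb _ _ _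
        _ = M * ‖u‖ * E ^ 2 := by rw [hEdef]; ring
    have h3 : -(bs (u - w) θ (θ - z)) ≤ M * ‖θ‖ * E * P := by
      calc -(bs (u - w) θ (θ - z)) ≤ |bs (u - w) θ (θ - z)| := neg_le_abs _
        _ ≤ M * ‖u - w‖ * ‖θ‖ * ‖θ - z‖ := hbs _ _ _
        _ = M * ‖θ‖ * E * P := by rw [hEdef, hPdef]; ring
    linarith [key1, key2]
  -- clear inverses in the smallness hypotheses
  have hsd1'' : 2 * M * Ri * CP ^ 2 * κ ^ 2 * ‖γ‖ + 2 * M * ‖f‖ * κ ^ 3 + M ^ 2 * ν * ‖γ‖ ^ 2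
      < ν ^ 2 * κ ^ 3 := by
    have h := mul_lt_mul_of_pos_left hsd1 (show (0:ℝ) < ν ^ 2 * κ ^ 3 by positivity)
    rw [mul_one] at h
    calc 2 * M * Ri * CP ^ 2 * κ ^ 2 * ‖γ‖ + 2 * M * ‖f‖ * κ ^ 3 + M ^ 2 * ν * ‖γ‖ ^ 2
        = ν ^ 2 * κ ^ 3 * (ν⁻¹ * M *
          (2 * (Ri * CP ^ 2 * ν⁻¹ * κ⁻¹ * ‖γ‖ + ν⁻¹ * ‖f‖) + κ⁻¹ * M * (κ⁻¹ * ‖γ‖) ^ 2)) := by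
          field_simp
      _ < ν ^ 2 * κ ^ 3 := h
  have hsd2'' : Ri ^ 2 * CP ^ 4 < ν * κ := by
    have h := mul_lt_mul_of_pos_left hsd2 (show (0:ℝ) < ν * κ by positivity)
    rw [mul_one] at h
    calc Ri ^ 2 * CP ^ 4 = ν * κ * (ν⁻¹ * κ⁻¹ * Ri ^ 2 * CP ^ 4) := by field_simp
      _ < ν * κ := h
  -- combined velocity bound
  have hU2 : κ * (ν * ‖u‖) ≤ Ri * CP ^ 2 * ‖γ‖ + κ * ‖f‖ := by
    linarith [mul_le_mul_of_nonneg_left hU hκ.le,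
      mul_le_mul_of_nonneg_left hT (by positivity : (0:ℝ) ≤ Ri * CP ^ 2)]
  -- Young's inequalities
  have hy1 : 2 * κ * (Ri * CP ^ 2) * P * E ≤ Ri ^ 2 * CP ^ 4 * E ^ 2 + κ ^ 2 * P ^ 2 := by
    nlinarith [sq_nonneg (Ri * CP ^ 2 * E - κ * P)]
  have hy2 : 2 * κ ^ 2 * (M * ‖γ‖) * E * P ≤ M ^ 2 * ‖γ‖ ^ 2 * E ^ 2 + κ ^ 4 * P ^ 2 := by
    nlinarith [sq_nonneg (M * ‖γ‖ * E - κ ^ 2 * P)]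
  -- scaled versions of the pieces of hmain
  have t1 : 2 * κ ^ 2 * (M * E ^ 2) * (κ * (ν * ‖u‖)) ≤
      2 * κ ^ 2 * (M * E ^ 2) * (Ri * CP ^ 2 * ‖γ‖ + κ * ‖f‖) :=
    mul_le_mul_of_nonneg_left hU2 (by positivity)
  have t2 : (M * E * P) * (κ * ‖θ‖) ≤ (M * E * P) * ‖γ‖ :=
    mul_le_mul_of_nonneg_left hT (by positivity)
  -- final coefficient comparison
  have hE2 : 2 * κ ^ 3 * ν ^ 2 * E ^ 2 ≤
      (κ ^ 2 * ν * (Ri ^ 2 * CP ^ 4) + 2 * κ ^ 2 * M * (Ri * CP ^ 2 * ‖γ‖ + κ * ‖f‖)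
        + ν * M ^ 2 * ‖γ‖ ^ 2) * E ^ 2 := by
    linarith [mul_le_mul_of_nonneg_left hmain (show (0:ℝ) ≤ 2 * κ ^ 3 * ν by positivity),
      mul_le_mul_of_nonneg_left hy1 (show (0:ℝ) ≤ κ ^ 2 * ν by positivity),
      mul_le_mul_of_nonneg_left hy2 (show (0:ℝ) ≤ ν by positivity),
      mul_le_mul_of_nonneg_left t2 (show (0:ℝ) ≤ 2 * κ ^ 2 * ν by positivity),
      t1]
  have hcoeff : κ ^ 2 * ν * (Ri ^ 2 * CP ^ 4) + 2 * κ ^ 2 * M * (Ri * CP ^ 2 * ‖γ‖ + κ * ‖f‖)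
      + ν * M ^ 2 * ‖γ‖ ^ 2 < 2 * κ ^ 3 * ν ^ 2 := by
    linarith [mul_lt_mul_of_pos_left hsd2'' (show (0:ℝ) < κ ^ 2 * ν by positivity), hsd1'']
  have hEzero : E = 0 := by
    have h1 : E ^ 2 ≤ 0 := by nlinarith [hE2, hcoeff, sq_nonneg E]
    have h2 : E ^ 2 = 0 := le_antisymm h1 (sq_nonneg E)
    exact pow_eq_zero_iff two_ne_zero |>.mp h2
  have huw : u = w := by
    have : u - w = 0 := norm_eq_zero.mp hEzero
    exact sub_eq_zero.mp this
  have hPzero : P = 0 := by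
    have hb0' : bs (u - w) θ (θ - z) = 0 := by rw [huw]; simp
    have : κ * P ^ 2 = 0 := by rw [key2, hb0']; ring
    have hP2 : P ^ 2 = 0 := by
      have := mul_eq_zero.mp this
      rcases this with h | h
      · exact absurd h hκne
      · exact h
    exact pow_eq_zero_iff two_ne_zero |>.mp hP2
  have hθz : θ = z := sub_eq_zero.mp (norm_eq_zero.mp hPzero)
  exact ⟨huw, hθz⟩
end

section
/- (Lemma 3.1, a priori bounds.) For any (u,θ) ∈ V × W, every solution (ũ,θ̃) ∈ V × W of the linearized system satisfies ‖ũ‖_V ≤ K₁ and ‖θ̃‖_W ≤ K₂. -/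
open scoped RealInnerProductSpace

/-- Lemma 3.1 (a priori bounds): every solution of the linearized system satisfies
`‖ũ‖ ≤ K₁` and `‖θ̃‖ ≤ K₂`. -/
theorem linearized_boussinesq_apriori_bounds
    {V W : Type*} [NormedAddCommGroup V] [InnerProductSpace ℝ V] [FiniteDimensional ℝ V]
    [NormedAddCommGroup W] [InnerProductSpace ℝ W] [FiniteDimensional ℝ W]
    (ν κ Ri M CP : ℝ) (hν : 0 < ν) (hκ : 0 < κ) (hRi : 0 < Ri) (hM : 0 < M) (hCP : 0 < CP)
    (b : V →ₗ[ℝ] V →ₗ[ℝ] V →ₗ[ℝ] ℝ)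
    (hb0 : ∀ u v : V, b u v v = 0)
    (hb : ∀ u v w : V, |b u v w| ≤ M * ‖u‖ * ‖v‖ * ‖w‖)
    (bs : V →ₗ[ℝ] W →ₗ[ℝ] W →ₗ[ℝ] ℝ)
    (hbs0 : ∀ (u : V) (φ : W), bs u φ φ = 0)
    (hbs : ∀ (u : V) (φ ψ : W), |bs u φ ψ| ≤ M * ‖u‖ * ‖φ‖ * ‖ψ‖)
    (c : W →ₗ[ℝ] V →ₗ[ℝ] ℝ)
    (hc : ∀ (θ : W) (v : V), |c θ v| ≤ CP ^ 2 * ‖θ‖ * ‖v‖)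
    (f : V →L[ℝ] ℝ) (γ : W →L[ℝ] ℝ)
    (u ut : V) (θ θt : W)
    (hut : ∀ v : V, b u ut v + ν * ⟪ut, v⟫ = Ri * c θt v + f v)
    (hθt : ∀ χ : W, bs u θt χ + κ * ⟪θt, χ⟫ = γ χ) :
    ‖ut‖ ≤ (Ri * CP ^ 2 * ν⁻¹ * κ⁻¹ * ‖γ‖ + ν⁻¹ * ‖f‖) ∧ ‖θt‖ ≤ (κ⁻¹ * ‖γ‖) := by

  have hθ : ‖θt‖ ≤ κ⁻¹ * ‖γ‖ := by
    have h1 := hθt θt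
    rw [hbs0, real_inner_self_eq_norm_sq, zero_add] at h1
    have h2 : γ θt ≤ ‖γ‖ * ‖θt‖ := (le_abs_self _).trans (by
      exact Real.norm_eq_abs (γ θt) ▸ γ.le_opNorm θt)
    rcases eq_or_lt_of_le (norm_nonneg θt) with h0 | h0
    · rw [← h0]; positivity
    · rw [le_inv_mul_iff₀ hκ]
      nlinarith
  refine ⟨?_, hθ⟩
  have h1 := hut ut
  rw [hb0, real_inner_self_eq_norm_sq, zero_add] at h1
  have h2 : f ut ≤ ‖f‖ * ‖ut‖ := (le_abs_self _).trans (by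
    exact Real.norm_eq_abs (f ut) ▸ f.le_opNorm ut)
  have h3 : Ri * c θt ut ≤ Ri * (CP ^ 2 * ‖θt‖ * ‖ut‖) := by
    have := (le_abs_self (c θt ut)).trans (hc θt ut)
    nlinarith
  rcases eq_or_lt_of_le (norm_nonneg ut) with h0 | h0
  · rw [← h0]; positivity
  · have key : ν * ‖ut‖ ≤ Ri * CP ^ 2 * ‖θt‖ + ‖f‖ := by
      nlinarith
    have hθ' : Ri * CP ^ 2 * ‖θt‖ ≤ Ri * CP ^ 2 * (κ⁻¹ * ‖γ‖) := by
      have : (0:ℝ) ≤ Ri * CP ^ 2 := by positivity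
      nlinarith
    rw [show Ri * CP ^ 2 * ν⁻¹ * κ⁻¹ * ‖γ‖ + ν⁻¹ * ‖f‖
        = ν⁻¹ * (Ri * CP ^ 2 * (κ⁻¹ * ‖γ‖) + ‖f‖) by ring,
      le_inv_mul_iff₀ hν]
    linarith
end

section
/- (Temperature-component Lipschitz bound.) For all (u,θ), (w,z) ∈ V × W, the temperature components of the solution operator satisfy ‖G₂(u,θ) − G₂(w,z)‖_W ≤ κ⁻¹ M K₂ ‖u − w‖_V. -/
open scoped RealInnerProductSpace

/-- Temperature-component Lipschitz bound for the solution operator. -/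
theorem solution_operator_temperature_lipschitz
    {V W : Type*} [NormedAddCommGroup V] [InnerProductSpace ℝ V] [FiniteDimensional ℝ V]
    [NormedAddCommGroup W] [InnerProductSpace ℝ W] [FiniteDimensional ℝ W]
    (ν κ Ri M CP : ℝ) (hν : 0 < ν) (hκ : 0 < κ) (hRi : 0 < Ri) (hM : 0 < M) (hCP : 0 < CP)
    (b : V →ₗ[ℝ] V →ₗ[ℝ] V →ₗ[ℝ] ℝ)
    (hb0 : ∀ u v : V, b u v v = 0)
    (hb : ∀ u v w : V, |b u v w| ≤ M * ‖u‖ * ‖v‖ * ‖w‖)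
    (bs : V →ₗ[ℝ] W →ₗ[ℝ] W →ₗ[ℝ] ℝ)
    (hbs0 : ∀ (u : V) (φ : W), bs u φ φ = 0)
    (hbs : ∀ (u : V) (φ ψ : W), |bs u φ ψ| ≤ M * ‖u‖ * ‖φ‖ * ‖ψ‖)
    (c : W →ₗ[ℝ] V →ₗ[ℝ] ℝ)
    (hc : ∀ (θ : W) (v : V), |c θ v| ≤ CP ^ 2 * ‖θ‖ * ‖v‖)
    (f : V →L[ℝ] ℝ) (γ : W →L[ℝ] ℝ)
    (G₁ : V → W → V) (G₂ : V → W → W)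
    (hG : ∀ (u : V) (θ : W),
      (∀ v : V, b u (G₁ u θ) v + ν * ⟪G₁ u θ, v⟫ = Ri * c (G₂ u θ) v + f v) ∧
      (∀ χ : W, bs u (G₂ u θ) χ + κ * ⟪G₂ u θ, χ⟫ = γ χ))
    (u w : V) (θ z : W) :
    ‖G₂ u θ - G₂ w z‖ ≤ κ⁻¹ * M * (κ⁻¹ * ‖γ‖) * ‖u - w‖ := by
  set a := G₂ u θ with ha
  set d := G₂ w z with hd
  set e := a - d with he
  -- bound on ‖d‖
  have hd1 := (hG w z).2 d
  rw [hbs0] at hd1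
  have hdnorm : κ * ‖d‖ ^ 2 = γ d := by
    rw [← hd1, real_inner_self_eq_norm_sq]; ring
  have hdbound : ‖d‖ ≤ κ⁻¹ * ‖γ‖ := by
    rcases eq_or_lt_of_le (norm_nonneg d) with h0 | h0
    · rw [← h0]; positivity
    · have h1 : κ * ‖d‖ ^ 2 ≤ ‖γ‖ * ‖d‖ := by
        rw [hdnorm]
        calc γ d ≤ |γ d| := le_abs_self _
          _ ≤ ‖γ‖ * ‖d‖ := γ.le_opNorm d
      have h2 : κ * ‖d‖ ≤ ‖γ‖ := by
        have := (mul_le_mul_iff_left₀ h0).mp (by nlinarith : (κ * ‖d‖) * ‖d‖ ≤ ‖γ‖ * ‖d‖)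
        linarith
      rw [← mul_le_mul_iff_right₀ hκ]
      calc κ * ‖d‖ ≤ ‖γ‖ := h2
        _ = κ * (κ⁻¹ * ‖γ‖) := by field_simp
  -- energy identity for e
  have hu1 := (hG u θ).2 e
  have hw1 := (hG w z).2 e
  have key : κ * ‖e‖ ^ 2 = -(bs (u - w) d e) := by
    have hinner : ⟪a, e⟫ - ⟪d, e⟫ = ‖e‖ ^ 2 := by
      rw [← inner_sub_left, ← he, real_inner_self_eq_norm_sq]
    have hbsplit : bs u a e = bs u d e + bs u e e := by
      simp only [he, map_sub, LinearMap.sub_apply]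
      ring
    have hze : bs u e e = 0 := hbs0 u e
    have : bs u a e + κ * ⟪a, e⟫ = bs w d e + κ * ⟪d, e⟫ := by
      rw [hu1, hw1]
    simp only [map_sub, LinearMap.sub_apply]
    nlinarith [hbsplit, hze, hinner, this]
  have hbound : κ * ‖e‖ ^ 2 ≤ M * ‖u - w‖ * ‖d‖ * ‖e‖ := by
    rw [key]
    calc -(bs (u - w) d e) ≤ |bs (u - w) d e| := neg_le_abs _
      _ ≤ M * ‖u - w‖ * ‖d‖ * ‖e‖ := hbs _ _ _
  rcases eq_or_lt_of_le (norm_nonneg e) with h0 | h0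
  · rw [← h0]; positivity
  · have h2 : κ * ‖e‖ ≤ M * ‖u - w‖ * ‖d‖ := by
      have := (mul_le_mul_iff_left₀ h0).mp (by nlinarith : (κ * ‖e‖) * ‖e‖ ≤ (M * ‖u - w‖ * ‖d‖) * ‖e‖)
      linarith
    have h3 : κ * ‖e‖ ≤ M * ‖u - w‖ * (κ⁻¹ * ‖γ‖) := by
      calc κ * ‖e‖ ≤ M * ‖u - w‖ * ‖d‖ := h2
        _ ≤ M * ‖u - w‖ * (κ⁻¹ * ‖γ‖) := by
            apply mul_le_mul_of_nonneg_left hdbound (by positivity)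
    rw [← mul_le_mul_iff_right₀ hκ]
    calc κ * ‖e‖ ≤ M * ‖u - w‖ * (κ⁻¹ * ‖γ‖) := h3
      _ = κ * (κ⁻¹ * M * (κ⁻¹ * ‖γ‖) * ‖u - w‖) := by field_simp
end

section
/- (Velocity-component Lipschitz bound.) Assume the small data condition. Then for all (u,θ), (w,z) ∈ V × W, the velocity components of the solution operator satisfy ‖G₁(u,θ) − G₁(w,z)‖_V ≤ ν⁻¹ M (K₁ + K₂) ‖u − w‖_V. -/
open scoped RealInnerProductSpace

lemma aux_div_sq {a x c : ℝ} (hc : 0 ≤ c) (hx : 0 ≤ x) (h : a * x ^ 2 ≤ c * x) :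
    a * x ≤ c := by
  rcases hx.eq_or_lt with h0 | h0
  · simpa [← h0] using hc
  · nlinarith

set_option maxHeartbeats 2000000 in
/-- Velocity-component Lipschitz bound for the solution operator, under the small
data condition. -/
theorem solution_operator_velocity_lipschitz
    {V W : Type*} [NormedAddCommGroup V] [InnerProductSpace ℝ V] [FiniteDimensional ℝ V]
    [NormedAddCommGroup W] [InnerProductSpace ℝ W] [FiniteDimensional ℝ W]
    (ν κ Ri M CP : ℝ) (hν : 0 < ν) (hκ : 0 < κ) (hRi : 0 < Ri) (hM : 0 < M) (hCP : 0 < CP)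
    (b : V →ₗ[ℝ] V →ₗ[ℝ] V →ₗ[ℝ] ℝ)
    (hb0 : ∀ u v : V, b u v v = 0)
    (hb : ∀ u v w : V, |b u v w| ≤ M * ‖u‖ * ‖v‖ * ‖w‖)
    (bs : V →ₗ[ℝ] W →ₗ[ℝ] W →ₗ[ℝ] ℝ)
    (hbs0 : ∀ (u : V) (φ : W), bs u φ φ = 0)
    (hbs : ∀ (u : V) (φ ψ : W), |bs u φ ψ| ≤ M * ‖u‖ * ‖φ‖ * ‖ψ‖)
    (c : W →ₗ[ℝ] V →ₗ[ℝ] ℝ)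
    (hc : ∀ (θ : W) (v : V), |c θ v| ≤ CP ^ 2 * ‖θ‖ * ‖v‖)
    (f : V →L[ℝ] ℝ) (γ : W →L[ℝ] ℝ)
    (G₁ : V → W → V) (G₂ : V → W → W)
    (hG : ∀ (u : V) (θ : W),
      (∀ v : V, b u (G₁ u θ) v + ν * ⟪G₁ u θ, v⟫ = Ri * c (G₂ u θ) v + f v) ∧
      (∀ χ : W, bs u (G₂ u θ) χ + κ * ⟪G₂ u θ, χ⟫ = γ χ))
    (hsd1 : (min ν κ)⁻¹ ^ 2 * M *
        (2 * (Ri * CP ^ 2 * κ⁻¹ * ‖γ‖ + ‖f‖) + κ⁻¹ ^ 2 * M * ‖γ‖ ^ 2) < 1)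
    (hsd2 : (min ν κ)⁻¹ * Ri * CP ^ 2 < 1)
    (u w : V) (θ z : W) :
    ‖G₁ u θ - G₁ w z‖ ≤ ν⁻¹ * M * ((Ri * CP ^ 2 * ν⁻¹ * κ⁻¹ * ‖γ‖ + ν⁻¹ * ‖f‖) + (κ⁻¹ * ‖γ‖)) * ‖u - w‖ := by
  obtain ⟨hu1, hθ1⟩ := hG u θ
  obtain ⟨hu2, hθ2⟩ := hG w z
  set a := G₁ u θ with ha
  set a' := G₁ w z with ha'
  set t := G₂ u θ with ht
  set t' := G₂ w z with ht'
  set e := a - a' with he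
  set δ := t - t' with hδ
  have hγn : (0:ℝ) ≤ ‖γ‖ := norm_nonneg _
  have hfn : (0:ℝ) ≤ ‖f‖ := norm_nonneg _
  -- bound on ‖t'‖
  have ht'b : κ * ‖t'‖ ≤ ‖γ‖ := by
    have h1 := hθ2 t'
    rw [hbs0, real_inner_self_eq_norm_sq, zero_add] at h1
    have h2 : γ t' ≤ ‖γ‖ * ‖t'‖ := (le_abs_self _).trans (γ.le_opNorm t')
    exact aux_div_sq hγn (norm_nonneg _) (h1 ▸ h2)
  have ht'n : ‖t'‖ ≤ κ⁻¹ * ‖γ‖ := by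
    have h := mul_le_mul_of_nonneg_left ht'b (inv_pos.mpr hκ).le
    rw [← mul_assoc, inv_mul_cancel₀ hκ.ne', one_mul] at h
    exact h
  -- bound on ‖a'‖
  have ha'b : ν * ‖a'‖ ≤ Ri * CP ^ 2 * κ⁻¹ * ‖γ‖ + ‖f‖ := by
    have h1 := hu2 a'
    rw [hb0, real_inner_self_eq_norm_sq, zero_add] at h1
    have h3 : c t' a' ≤ CP ^ 2 * ‖t'‖ * ‖a'‖ := (le_abs_self _).trans (hc t' a')
    have h4 : f a' ≤ ‖f‖ * ‖a'‖ := (le_abs_self _).trans (f.le_opNorm a')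
    have h3' : c t' a' ≤ CP ^ 2 * (κ⁻¹ * ‖γ‖) * ‖a'‖ := by
      refine h3.trans (mul_le_mul_of_nonneg_right ?_ (norm_nonneg _))
      exact mul_le_mul_of_nonneg_left ht'n (by positivity)
    have h5 : Ri * c t' a' ≤ Ri * (CP ^ 2 * (κ⁻¹ * ‖γ‖) * ‖a'‖) :=
      mul_le_mul_of_nonneg_left h3' hRi.le
    have h2 : Ri * c t' a' + f a' ≤ (Ri * CP ^ 2 * κ⁻¹ * ‖γ‖ + ‖f‖) * ‖a'‖ := by
      nlinarith [h4, h5]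
    exact aux_div_sq (by positivity) (norm_nonneg _) (h1 ▸ h2)
  have hK1 : ‖a'‖ ≤ Ri * CP ^ 2 * ν⁻¹ * κ⁻¹ * ‖γ‖ + ν⁻¹ * ‖f‖ := by
    have h := mul_le_mul_of_nonneg_left ha'b (inv_pos.mpr hν).le
    rw [← mul_assoc, inv_mul_cancel₀ hν.ne', one_mul] at h
    nlinarith [h]
  -- bound on ‖δ‖
  have hδb : κ * ‖δ‖ ≤ M * ‖u - w‖ * ‖t'‖ := by
    have h1 := hθ1 δ
    have h2 := hθ2 δ
    have hkey : bs (u - w) t' δ + κ * ‖δ‖ ^ 2 = 0 := by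
      have e1 : bs u t δ = bs u t' δ := by
        have h : t = δ + t' := by rw [hδ]; abel
        rw [h, map_add, LinearMap.add_apply, hbs0, zero_add]
      have e2 : ⟪t, δ⟫ - ⟪t', δ⟫ = ‖δ‖ ^ 2 := by
        rw [← inner_sub_left, ← hδ, real_inner_self_eq_norm_sq]
      have e3 : bs (u - w) t' δ = bs u t' δ - bs w t' δ := by
        simp [map_sub]
      linear_combination h1 - h2 + e3 - e1 - κ * e2
    have h3 : -(bs (u - w) t' δ) ≤ M * ‖u - w‖ * ‖t'‖ * ‖δ‖ :=
      (neg_le_abs _).trans (hbs (u - w) t' δ)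
    exact aux_div_sq (by positivity) (norm_nonneg _) (by linarith)
  -- bound on ‖e‖
  have heb : ν * ‖e‖ ≤ M * ‖u - w‖ * ‖a'‖ + Ri * CP ^ 2 * ‖δ‖ := by
    have h1 := hu1 e
    have h2 := hu2 e
    have hkey : b (u - w) a' e + ν * ‖e‖ ^ 2 = Ri * c δ e := by
      have e1 : b u a e = b u a' e := by
        have h : a = e + a' := by rw [he]; abel
        rw [h, map_add, LinearMap.add_apply, hb0, zero_add]
      have e2 : ⟪a, e⟫ - ⟪a', e⟫ = ‖e‖ ^ 2 := by
        rw [← inner_sub_left, ← he, real_inner_self_eq_norm_sq]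
      have e3 : b (u - w) a' e = b u a' e - b w a' e := by
        simp [map_sub]
      have e4 : c δ e = c t e - c t' e := by
        rw [hδ]; simp [map_sub]
      linear_combination h1 - h2 + e3 - e1 - ν * e2 - Ri * e4
    have h3 : -(b (u - w) a' e) ≤ M * ‖u - w‖ * ‖a'‖ * ‖e‖ :=
      (neg_le_abs _).trans (hb (u - w) a' e)
    have h4 : Ri * c δ e ≤ Ri * (CP ^ 2 * ‖δ‖ * ‖e‖) :=
      mul_le_mul_of_nonneg_left ((le_abs_self _).trans (hc δ e)) hRi.le
    have hrhs : (0:ℝ) ≤ M * ‖u - w‖ * ‖a'‖ + Ri * CP ^ 2 * ‖δ‖ :=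
      add_nonneg (mul_nonneg (mul_nonneg hM.le (norm_nonneg _)) (norm_nonneg _))
        (mul_nonneg (mul_nonneg hRi.le (sq_nonneg _)) (norm_nonneg _))
    have hineq : ν * ‖e‖ ^ 2 ≤ (M * ‖u - w‖ * ‖a'‖ + Ri * CP ^ 2 * ‖δ‖) * ‖e‖ := by
      linarith [h3, h4, hkey]
    exact aux_div_sq hrhs (norm_nonneg _) hineq
  -- Ri * CP ^ 2 ≤ κ
  have hRiCP : Ri * CP ^ 2 ≤ κ := by
    have hm : 0 < min ν κ := lt_min hν hκ
    have h1 : Ri * CP ^ 2 < min ν κ := by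
      have h := mul_lt_mul_of_pos_left hsd2 hm
      rw [mul_one] at h
      calc Ri * CP ^ 2 = min ν κ * ((min ν κ)⁻¹ * Ri * CP ^ 2) := by
            field_simp
        _ < min ν κ := h
    exact h1.le.trans (min_le_right _ _)
  -- combine
  have h5 : Ri * CP ^ 2 * ‖δ‖ ≤ κ * ‖δ‖ :=
    mul_le_mul_of_nonneg_right hRiCP (norm_nonneg _)
  have h6 : κ * ‖δ‖ ≤ M * ‖u - w‖ * (κ⁻¹ * ‖γ‖) :=
    hδb.trans (mul_le_mul_of_nonneg_left ht'n (by positivity))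
  have h7 : M * ‖u - w‖ * ‖a'‖ ≤
      M * ‖u - w‖ * (Ri * CP ^ 2 * ν⁻¹ * κ⁻¹ * ‖γ‖ + ν⁻¹ * ‖f‖) :=
    mul_le_mul_of_nonneg_left hK1 (by positivity)
  have hcomb : ν * ‖e‖ ≤
      M * ((Ri * CP ^ 2 * ν⁻¹ * κ⁻¹ * ‖γ‖ + ν⁻¹ * ‖f‖) + (κ⁻¹ * ‖γ‖)) * ‖u - w‖ := by
    linarith [heb, h5, h6, h7]
  calc ‖e‖ = ν⁻¹ * (ν * ‖e‖) := by field_simp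
    _ ≤ ν⁻¹ * (M * ((Ri * CP ^ 2 * ν⁻¹ * κ⁻¹ * ‖γ‖ + ν⁻¹ * ‖f‖) + (κ⁻¹ * ‖γ‖)) * ‖u - w‖) :=
        mul_le_mul_of_nonneg_left hcomb (by positivity)
    _ = ν⁻¹ * M * ((Ri * CP ^ 2 * ν⁻¹ * κ⁻¹ * ‖γ‖ + ν⁻¹ * ‖f‖) + (κ⁻¹ * ‖γ‖)) * ‖u - w‖ := by
        ring
end

section
/- (Lemma 3.3, Lipschitz continuity of G.) Assume the small data condition. Then the solution operator G is Lipschitz continuous in the B-norm with constant C_G = ν^{-1/2} η^{-1/2} M (2K₁² + 3K₂²)^{1/2}: for all (u,θ), (w,z) ∈ V × W, ‖G(u,θ) − G(w,z)‖_B ≤ C_G ‖(u,θ) − (w,z)‖_B. -/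
open scoped RealInnerProductSpace

lemma quad_div_aux {a C x : ℝ} (ha : 0 < a) (hC : 0 ≤ C) (hx : 0 ≤ x)
    (h : a * x ^ 2 ≤ C * x) : x ≤ a⁻¹ * C := by
  rcases hx.eq_or_lt with h0 | h0
  · rw [← h0]; positivity
  · have hx2 : a * x ^ 2 = (a * x) * x := by ring
    rw [hx2] at h
    have h2 : a * x ≤ C := le_of_mul_le_mul_right h h0
    calc x = a⁻¹ * (a * x) := by field_simp
    _ ≤ a⁻¹ * C := mul_le_mul_of_nonneg_left h2 (by positivity)

set_option maxHeartbeats 1000000 in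
/-- Lemma 3.3: the solution operator `G` is Lipschitz continuous in the B-norm with
constant `C_G = ν^(-1/2) η^(-1/2) M (2K₁² + 3K₂²)^(1/2)`. -/
theorem solution_operator_lipschitz_Bnorm
    {V W : Type*} [NormedAddCommGroup V] [InnerProductSpace ℝ V] [FiniteDimensional ℝ V]
    [NormedAddCommGroup W] [InnerProductSpace ℝ W] [FiniteDimensional ℝ W]
    (ν κ Ri M CP : ℝ) (hν : 0 < ν) (hκ : 0 < κ) (hRi : 0 < Ri) (hM : 0 < M) (hCP : 0 < CP)
    (b : V →ₗ[ℝ] V →ₗ[ℝ] V →ₗ[ℝ] ℝ)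
    (hb0 : ∀ u v : V, b u v v = 0)
    (hb : ∀ u v w : V, |b u v w| ≤ M * ‖u‖ * ‖v‖ * ‖w‖)
    (bs : V →ₗ[ℝ] W →ₗ[ℝ] W →ₗ[ℝ] ℝ)
    (hbs0 : ∀ (u : V) (φ : W), bs u φ φ = 0)
    (hbs : ∀ (u : V) (φ ψ : W), |bs u φ ψ| ≤ M * ‖u‖ * ‖φ‖ * ‖ψ‖)
    (c : W →ₗ[ℝ] V →ₗ[ℝ] ℝ)
    (hc : ∀ (θ : W) (v : V), |c θ v| ≤ CP ^ 2 * ‖θ‖ * ‖v‖)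
    (f : V →L[ℝ] ℝ) (γ : W →L[ℝ] ℝ)
    (G₁ : V → W → V) (G₂ : V → W → W)
    (hG : ∀ (u : V) (θ : W),
      (∀ v : V, b u (G₁ u θ) v + ν * ⟪G₁ u θ, v⟫ = Ri * c (G₂ u θ) v + f v) ∧
      (∀ χ : W, bs u (G₂ u θ) χ + κ * ⟪G₂ u θ, χ⟫ = γ χ))
    (hsd1 : (min ν κ)⁻¹ ^ 2 * M *
        (2 * (Ri * CP ^ 2 * κ⁻¹ * ‖γ‖ + ‖f‖) + κ⁻¹ ^ 2 * M * ‖γ‖ ^ 2) < 1)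
    (hsd2 : (min ν κ)⁻¹ * Ri * CP ^ 2 < 1)
    (u w : V) (θ z : W) :
    Real.sqrt (ν * ‖G₁ u θ - G₁ w z‖ ^ 2 + κ * ‖G₂ u θ - G₂ w z‖ ^ 2)
      ≤ ((Real.sqrt ν)⁻¹ * (Real.sqrt (min ν κ))⁻¹ * M * Real.sqrt (2 * (Ri * CP ^ 2 * ν⁻¹ * κ⁻¹ * ‖γ‖ + ν⁻¹ * ‖f‖) ^ 2 + 3 * (κ⁻¹ * ‖γ‖) ^ 2)) * Real.sqrt (ν * ‖u - w‖ ^ 2 + κ * ‖θ - z‖ ^ 2) := by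
  have hη : 0 < min ν κ := lt_min hν hκ
  obtain ⟨S, hSdef⟩ : ∃ x : ℝ,
      x = 2 * (Ri * CP ^ 2 * ν⁻¹ * κ⁻¹ * ‖γ‖ + ν⁻¹ * ‖f‖) ^ 2 + 3 * (κ⁻¹ * ‖γ‖) ^ 2 :=
    ⟨_, rfl⟩
  rw [← hSdef]
  set A := G₁ u θ with hAdef
  set B := G₁ w z with hBdef
  set P := G₂ u θ with hPdef
  set Q := G₂ w z with hQdef
  obtain ⟨K2, hK2def⟩ : ∃ x : ℝ, x = κ⁻¹ * ‖γ‖ := ⟨_, rfl⟩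
  obtain ⟨K1, hK1def⟩ : ∃ x : ℝ, x = ν⁻¹ * (Ri * CP ^ 2 * K2 + ‖f‖) := ⟨_, rfl⟩
  have hK2 : 0 ≤ K2 := by rw [hK2def]; positivity
  have hK1 : 0 ≤ K1 := by rw [hK1def, hK2def]; positivity
  have hS0 : 0 ≤ S := by rw [hSdef]; positivity
  have hSK : S = 2 * K1 ^ 2 + 3 * K2 ^ 2 := by rw [hSdef, hK1def, hK2def]; ring
  -- Ri CP² < min ν κ
  have hRiη : Ri * CP ^ 2 < min ν κ := by
    have h1 : min ν κ * ((min ν κ)⁻¹ * Ri * CP ^ 2) < min ν κ * 1 :=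
      mul_lt_mul_of_pos_left hsd2 hη
    rwa [mul_one, show min ν κ * ((min ν κ)⁻¹ * Ri * CP ^ 2)
        = (min ν κ * (min ν κ)⁻¹) * (Ri * CP ^ 2) by ring,
      mul_inv_cancel₀ hη.ne', one_mul] at h1
  -- a priori bound ‖P‖ ≤ K₂
  have hP : ‖P‖ ≤ K2 := by
    rw [hK2def]
    apply quad_div_aux hκ (norm_nonneg _) (norm_nonneg _)
    have h := (hG u θ).2 P
    rw [← hPdef, hbs0 u P, real_inner_self_eq_norm_sq, zero_add] at h
    have h2 : γ P ≤ ‖γ‖ * ‖P‖ := by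
      have := γ.le_opNorm P
      rw [Real.norm_eq_abs] at this
      exact (le_abs_self _).trans this
    linarith
  -- a priori bound ‖A‖ ≤ K₁
  have hA : ‖A‖ ≤ K1 := by
    rw [hK1def]
    apply quad_div_aux hν (add_nonneg (mul_nonneg (by positivity) hK2) (norm_nonneg _))
      (norm_nonneg _)
    have h := (hG u θ).1 A
    rw [← hAdef, ← hPdef, hb0 u A, real_inner_self_eq_norm_sq, zero_add] at h
    have h1 : c P A ≤ CP ^ 2 * ‖P‖ * ‖A‖ := (le_abs_self _).trans (hc P A)
    have h2 : f A ≤ ‖f‖ * ‖A‖ := by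
      have := f.le_opNorm A
      rw [Real.norm_eq_abs] at this
      exact (le_abs_self _).trans this
    have h3 : Ri * c P A ≤ Ri * CP ^ 2 * K2 * ‖A‖ := by
      have h4 : c P A ≤ CP ^ 2 * K2 * ‖A‖ := by
        have := mul_le_mul_of_nonneg_right
          (mul_le_mul_of_nonneg_left hP (by positivity : (0:ℝ) ≤ CP ^ 2)) (norm_nonneg A)
        linarith
      calc Ri * c P A ≤ Ri * (CP ^ 2 * K2 * ‖A‖) := mul_le_mul_of_nonneg_left h4 hRi.le
      _ = Ri * CP ^ 2 * K2 * ‖A‖ := by ring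
    linarith
  -- temperature difference estimate
  have key2 : κ * ‖P - Q‖ ^ 2 = -(bs (u - w) P (P - Q)) := by
    have h1 := (hG u θ).2 (P - Q)
    have h2 := (hG w z).2 (P - Q)
    rw [← hPdef] at h1
    rw [← hQdef] at h2
    have h3 := hbs0 w (P - Q)
    rw [← real_inner_self_eq_norm_sq]
    simp only [map_sub, LinearMap.sub_apply, inner_sub_left, inner_sub_right] at h1 h2 h3 ⊢
    linear_combination h1 - h2 - h3
  have hδ : ‖P - Q‖ ≤ κ⁻¹ * (M * ‖u - w‖ * K2) := by
    apply quad_div_aux hκ (mul_nonneg (mul_nonneg hM.le (norm_nonneg _)) hK2) (norm_nonneg _)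
    rw [key2]
    have h4 : -(bs (u - w) P (P - Q)) ≤ M * ‖u - w‖ * ‖P‖ * ‖P - Q‖ :=
      (neg_le_abs _).trans (hbs _ _ _)
    have h5 : M * ‖u - w‖ * ‖P‖ * ‖P - Q‖ ≤ M * ‖u - w‖ * K2 * ‖P - Q‖ :=
      mul_le_mul_of_nonneg_right
        (mul_le_mul_of_nonneg_left hP (by positivity : (0:ℝ) ≤ M * ‖u - w‖))
        (norm_nonneg _)
    linarith
  -- velocity difference estimate
  have key1 : ν * ‖A - B‖ ^ 2 = Ri * c (P - Q) (A - B) - b (u - w) A (A - B) := by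
    have h1 := (hG u θ).1 (A - B)
    have h2 := (hG w z).1 (A - B)
    rw [← hAdef, ← hPdef] at h1
    rw [← hBdef, ← hQdef] at h2
    have h3 := hb0 w (A - B)
    rw [← real_inner_self_eq_norm_sq]
    simp only [map_sub, LinearMap.sub_apply, inner_sub_left, inner_sub_right] at h1 h2 h3 ⊢
    linear_combination h1 - h2 - h3
  have he : ‖A - B‖ ≤ ν⁻¹ * (M * ‖u - w‖ * (K1 + K2)) := by
    apply quad_div_aux hν
      (mul_nonneg (mul_nonneg hM.le (norm_nonneg _)) (add_nonneg hK1 hK2)) (norm_nonneg _)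
    rw [key1]
    have h4 : Ri * c (P - Q) (A - B) ≤ Ri * CP ^ 2 * ‖P - Q‖ * ‖A - B‖ := by
      have h4a := (le_abs_self _).trans (hc (P - Q) (A - B))
      calc Ri * c (P - Q) (A - B) ≤ Ri * (CP ^ 2 * ‖P - Q‖ * ‖A - B‖) :=
        mul_le_mul_of_nonneg_left h4a hRi.le
      _ = Ri * CP ^ 2 * ‖P - Q‖ * ‖A - B‖ := by ring
    have h5 : -(b (u - w) A (A - B)) ≤ M * ‖u - w‖ * ‖A‖ * ‖A - B‖ :=
      (neg_le_abs _).trans (hb _ _ _)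
    have h6 : M * ‖u - w‖ * ‖A‖ * ‖A - B‖ ≤ M * ‖u - w‖ * K1 * ‖A - B‖ :=
      mul_le_mul_of_nonneg_right
        (mul_le_mul_of_nonneg_left hA (by positivity : (0:ℝ) ≤ M * ‖u - w‖))
        (norm_nonneg _)
    have h7 : Ri * CP ^ 2 * ‖P - Q‖ ≤ M * ‖u - w‖ * K2 := by
      have h8 : Ri * CP ^ 2 * ‖P - Q‖ ≤ κ * ‖P - Q‖ :=
        mul_le_mul_of_nonneg_right (hRiη.le.trans (min_le_right ν κ)) (norm_nonneg _)
      have h9 : κ * ‖P - Q‖ ≤ κ * (κ⁻¹ * (M * ‖u - w‖ * K2)) :=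
        mul_le_mul_of_nonneg_left hδ hκ.le
      have h10 : κ * (κ⁻¹ * (M * ‖u - w‖ * K2)) = M * ‖u - w‖ * K2 := by
        rw [show κ * (κ⁻¹ * (M * ‖u - w‖ * K2)) = (κ * κ⁻¹) * (M * ‖u - w‖ * K2) by ring,
          mul_inv_cancel₀ hκ.ne', one_mul]
      linarith
    have h11 : Ri * CP ^ 2 * ‖P - Q‖ * ‖A - B‖ ≤ M * ‖u - w‖ * K2 * ‖A - B‖ :=
      mul_le_mul_of_nonneg_right h7 (norm_nonneg _)
    have h12 : M * ‖u - w‖ * (K1 + K2) * ‖A - B‖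
        = M * ‖u - w‖ * K1 * ‖A - B‖ + M * ‖u - w‖ * K2 * ‖A - B‖ := by ring
    linarith
  -- combine
  obtain ⟨C, hCdef⟩ : ∃ x : ℝ,
      x = (Real.sqrt ν)⁻¹ * (Real.sqrt (min ν κ))⁻¹ * M * Real.sqrt S := ⟨_, rfl⟩
  rw [← hCdef]
  have hC0 : 0 ≤ C := by rw [hCdef]; positivity
  have hC2 : C ^ 2 = ν⁻¹ * (min ν κ)⁻¹ * M ^ 2 * S := by
    have h1 : C ^ 2 = ((Real.sqrt ν) ^ 2)⁻¹ * ((Real.sqrt (min ν κ)) ^ 2)⁻¹ * M ^ 2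
        * (Real.sqrt S) ^ 2 := by rw [hCdef]; ring
    rw [h1, Real.sq_sqrt hν.le, Real.sq_sqrt hη.le, Real.sq_sqrt hS0]
  have hX : ν * ‖A - B‖ ^ 2 + κ * ‖P - Q‖ ^ 2
      ≤ C ^ 2 * (ν * ‖u - w‖ ^ 2 + κ * ‖θ - z‖ ^ 2) := by
    rw [hC2, hSK]
    have hE2 : ‖A - B‖ ^ 2 ≤ (ν⁻¹ * (M * ‖u - w‖ * (K1 + K2))) ^ 2 :=
      pow_le_pow_left₀ (norm_nonneg _) he 2
    have hD2 : ‖P - Q‖ ^ 2 ≤ (κ⁻¹ * (M * ‖u - w‖ * K2)) ^ 2 :=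
      pow_le_pow_left₀ (norm_nonneg _) hδ 2
    have hνν : ν * ν⁻¹ = 1 := mul_inv_cancel₀ hν.ne'
    have hκκ : κ * κ⁻¹ = 1 := mul_inv_cancel₀ hκ.ne'
    have hinvν : ν⁻¹ ≤ (min ν κ)⁻¹ := inv_anti₀ hη (min_le_left ν κ)
    have hinvκ : κ⁻¹ ≤ (min ν κ)⁻¹ := inv_anti₀ hη (min_le_right ν κ)
    have hMs : (0:ℝ) ≤ M ^ 2 * ‖u - w‖ ^ 2 := by positivity
    have step1 : ν * ‖A - B‖ ^ 2 ≤ ν⁻¹ * M ^ 2 * ‖u - w‖ ^ 2 * (K1 + K2) ^ 2 := by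
      calc ν * ‖A - B‖ ^ 2 ≤ ν * (ν⁻¹ * (M * ‖u - w‖ * (K1 + K2))) ^ 2 :=
        mul_le_mul_of_nonneg_left hE2 hν.le
      _ = (ν * ν⁻¹) * ν⁻¹ * M ^ 2 * ‖u - w‖ ^ 2 * (K1 + K2) ^ 2 := by ring
      _ = ν⁻¹ * M ^ 2 * ‖u - w‖ ^ 2 * (K1 + K2) ^ 2 := by rw [hνν, one_mul]
    have step2 : κ * ‖P - Q‖ ^ 2 ≤ κ⁻¹ * M ^ 2 * ‖u - w‖ ^ 2 * K2 ^ 2 := by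
      calc κ * ‖P - Q‖ ^ 2 ≤ κ * (κ⁻¹ * (M * ‖u - w‖ * K2)) ^ 2 :=
        mul_le_mul_of_nonneg_left hD2 hκ.le
      _ = (κ * κ⁻¹) * κ⁻¹ * M ^ 2 * ‖u - w‖ ^ 2 * K2 ^ 2 := by ring
      _ = κ⁻¹ * M ^ 2 * ‖u - w‖ ^ 2 * K2 ^ 2 := by rw [hκκ, one_mul]
    have step3 : ν⁻¹ * M ^ 2 * ‖u - w‖ ^ 2 * (K1 + K2) ^ 2
        ≤ (min ν κ)⁻¹ * M ^ 2 * ‖u - w‖ ^ 2 * (2 * K1 ^ 2 + 2 * K2 ^ 2) := by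
      have hKK : (K1 + K2) ^ 2 ≤ 2 * K1 ^ 2 + 2 * K2 ^ 2 := by
        have hre : 2 * K1 ^ 2 + 2 * K2 ^ 2 - (K1 + K2) ^ 2 = (K1 - K2) ^ 2 := by ring
        have := sq_nonneg (K1 - K2)
        linarith
      calc ν⁻¹ * M ^ 2 * ‖u - w‖ ^ 2 * (K1 + K2) ^ 2
          = ν⁻¹ * (M ^ 2 * ‖u - w‖ ^ 2 * (K1 + K2) ^ 2) := by ring
        _ ≤ (min ν κ)⁻¹ * (M ^ 2 * ‖u - w‖ ^ 2 * (2 * K1 ^ 2 + 2 * K2 ^ 2)) :=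
            mul_le_mul hinvν (mul_le_mul_of_nonneg_left hKK hMs) (by positivity) (by positivity)
        _ = (min ν κ)⁻¹ * M ^ 2 * ‖u - w‖ ^ 2 * (2 * K1 ^ 2 + 2 * K2 ^ 2) := by ring
    have step4 : κ⁻¹ * M ^ 2 * ‖u - w‖ ^ 2 * K2 ^ 2
        ≤ (min ν κ)⁻¹ * M ^ 2 * ‖u - w‖ ^ 2 * K2 ^ 2 := by
      calc κ⁻¹ * M ^ 2 * ‖u - w‖ ^ 2 * K2 ^ 2
          = κ⁻¹ * (M ^ 2 * ‖u - w‖ ^ 2 * K2 ^ 2) := by ring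
        _ ≤ (min ν κ)⁻¹ * (M ^ 2 * ‖u - w‖ ^ 2 * K2 ^ 2) :=
            mul_le_mul_of_nonneg_right hinvκ (by positivity)
        _ = (min ν κ)⁻¹ * M ^ 2 * ‖u - w‖ ^ 2 * K2 ^ 2 := by ring
    have step5 : (min ν κ)⁻¹ * M ^ 2 * ‖u - w‖ ^ 2 * (2 * K1 ^ 2 + 3 * K2 ^ 2)
        ≤ ν⁻¹ * (min ν κ)⁻¹ * M ^ 2 * (2 * K1 ^ 2 + 3 * K2 ^ 2)
          * (ν * ‖u - w‖ ^ 2 + κ * ‖θ - z‖ ^ 2) := by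
      have hexp : ν⁻¹ * (min ν κ)⁻¹ * M ^ 2 * (2 * K1 ^ 2 + 3 * K2 ^ 2)
          * (ν * ‖u - w‖ ^ 2 + κ * ‖θ - z‖ ^ 2)
          = (ν * ν⁻¹) * ((min ν κ)⁻¹ * M ^ 2 * (2 * K1 ^ 2 + 3 * K2 ^ 2) * ‖u - w‖ ^ 2)
            + ν⁻¹ * (min ν κ)⁻¹ * M ^ 2 * (2 * K1 ^ 2 + 3 * K2 ^ 2)
              * (κ * ‖θ - z‖ ^ 2) := by ring
      rw [hexp, hνν, one_mul]
      have h2 : 0 ≤ ν⁻¹ * (min ν κ)⁻¹ * M ^ 2 * (2 * K1 ^ 2 + 3 * K2 ^ 2)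
          * (κ * ‖θ - z‖ ^ 2) := by positivity
      linarith
    linarith
  calc Real.sqrt (ν * ‖A - B‖ ^ 2 + κ * ‖P - Q‖ ^ 2)
      ≤ Real.sqrt (C ^ 2 * (ν * ‖u - w‖ ^ 2 + κ * ‖θ - z‖ ^ 2)) := Real.sqrt_le_sqrt hX
    _ = C * Real.sqrt (ν * ‖u - w‖ ^ 2 + κ * ‖θ - z‖ ^ 2) := by
        rw [Real.sqrt_mul (by positivity) _, Real.sqrt_sq hC0]
end

section
/- (Well-definedness of the candidate derivative G'.) For every (u,θ) ∈ V × W and every (h,s) ∈ V × W there exists a unique pair (g₁,g₂) ∈ V × W satisfying b(h,G₁(u,θ),v) + b(u,g₁,v) + ν⟨g₁,v⟩_V = Ri c(g₂,v) for all v ∈ V and b*(h,G₂(u,θ),χ) + b*(u,g₂,χ) + κ⟨g₂,χ⟩_W = 0 for all χ ∈ W. -/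
open scoped RealInnerProductSpace

/-- Finite-dimensional Lax–Milgram: a bilinear form that is definite on the diagonal
represents every linear functional uniquely. -/
lemma lax_milgram_fin {W : Type*} [NormedAddCommGroup W] [InnerProductSpace ℝ W]
    [FiniteDimensional ℝ W] (B : W →ₗ[ℝ] W →ₗ[ℝ] ℝ)
    (hB : ∀ g : W, B g g = 0 → g = 0) (L : W →ₗ[ℝ] ℝ) :
    ∃! g : W, ∀ χ : W, B g χ = L χ := by
  let T : W →ₗ[ℝ] W :=
    { toFun := fun g =>
        (InnerProductSpace.toDual ℝ W).symm (LinearMap.toContinuousLinearMap (B g))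
      map_add' := by
        intro g g'
        apply ext_inner_right ℝ
        intro χ
        simp [inner_add_left, InnerProductSpace.toDual_symm_apply]
      map_smul' := by
        intro r g
        apply ext_inner_right ℝ
        intro χ
        simp [real_inner_smul_left, InnerProductSpace.toDual_symm_apply] }
  have hT : ∀ (g χ : W), ⟪T g, χ⟫ = B g χ := by
    intro g χ
    simp [T, InnerProductSpace.toDual_symm_apply]
  have hinj : Function.Injective T := by
    rw [injective_iff_map_eq_zero T]
    intro g hg
    apply hB
    have := hT g g
    rw [hg, inner_zero_left] at this
    exact this.symm
  have hsurj : Function.Surjective T := (LinearMap.injective_iff_surjective).mp hinj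
  obtain ⟨g, hg⟩ := hsurj ((InnerProductSpace.toDual ℝ W).symm
    (LinearMap.toContinuousLinearMap L))
  refine ⟨g, ?_, ?_⟩
  · intro χ
    rw [← hT g χ, hg]
    simp [InnerProductSpace.toDual_symm_apply]
  · intro g' hg'
    apply hinj
    apply ext_inner_right ℝ
    intro χ
    rw [hT, hT, hg']
    rw [← hT g χ, hg]
    simp [InnerProductSpace.toDual_symm_apply]

/-- Well-definedness of the candidate derivative `G'`: for each `(u,θ)` and `(h,s)`
there is a unique pair `(g₁,g₂)` solving the derivative system. -/
theorem derivative_system_wellposed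
    {V W : Type*} [NormedAddCommGroup V] [InnerProductSpace ℝ V] [FiniteDimensional ℝ V]
    [NormedAddCommGroup W] [InnerProductSpace ℝ W] [FiniteDimensional ℝ W]
    (ν κ Ri M CP : ℝ) (hν : 0 < ν) (hκ : 0 < κ) (hRi : 0 < Ri) (hM : 0 < M) (hCP : 0 < CP)
    (b : V →ₗ[ℝ] V →ₗ[ℝ] V →ₗ[ℝ] ℝ)
    (hb0 : ∀ u v : V, b u v v = 0)
    (hb : ∀ u v w : V, |b u v w| ≤ M * ‖u‖ * ‖v‖ * ‖w‖)
    (bs : V →ₗ[ℝ] W →ₗ[ℝ] W →ₗ[ℝ] ℝ)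
    (hbs0 : ∀ (u : V) (φ : W), bs u φ φ = 0)
    (hbs : ∀ (u : V) (φ ψ : W), |bs u φ ψ| ≤ M * ‖u‖ * ‖φ‖ * ‖ψ‖)
    (c : W →ₗ[ℝ] V →ₗ[ℝ] ℝ)
    (hc : ∀ (θ : W) (v : V), |c θ v| ≤ CP ^ 2 * ‖θ‖ * ‖v‖)
    (f : V →L[ℝ] ℝ) (γ : W →L[ℝ] ℝ)
    (G₁ : V → W → V) (G₂ : V → W → W)
    (hG : ∀ (u : V) (θ : W),
      (∀ v : V, b u (G₁ u θ) v + ν * ⟪G₁ u θ, v⟫ = Ri * c (G₂ u θ) v + f v) ∧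
      (∀ χ : W, bs u (G₂ u θ) χ + κ * ⟪G₂ u θ, χ⟫ = γ χ))
    (u h : V) (θ s : W) :
    ∃! p : V × W,
      (∀ v : V, b h (G₁ u θ) v + b u p.1 v + ν * ⟪p.1, v⟫ = Ri * c p.2 v) ∧
      (∀ χ : W, bs h (G₂ u θ) χ + bs u p.2 χ + κ * ⟪p.2, χ⟫ = 0) := by
  -- The θ-equation
  set Bθ : W →ₗ[ℝ] W →ₗ[ℝ] ℝ := bs u + κ • innerₗ W with hBθ
  have hBθ_apply : ∀ g χ : W, Bθ g χ = bs u g χ + κ * ⟪g, χ⟫ := by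
    intro g χ; simp [hBθ, innerₗ]
  have hBθ_def : ∀ g : W, Bθ g g = 0 → g = 0 := by
    intro g hg
    rw [hBθ_apply, hbs0, zero_add, real_inner_self_eq_norm_sq] at hg
    have : ‖g‖ ^ 2 = 0 := by
      have := mul_eq_zero.mp hg
      rcases this with h' | h'
      · exact absurd h' hκ.ne'
      · exact h'
    simpa using pow_eq_zero_iff (n := 2) (by norm_num) |>.mp this
  obtain ⟨g₂, hg₂, hg₂u⟩ := lax_milgram_fin Bθ hBθ_def (-(bs h (G₂ u θ)))
  -- The u-equation (with g₂ fixed)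
  set Bv : V →ₗ[ℝ] V →ₗ[ℝ] ℝ := b u + ν • innerₗ V with hBv
  have hBv_apply : ∀ g v : V, Bv g v = b u g v + ν * ⟪g, v⟫ := by
    intro g v; simp [hBv, innerₗ]
  have hBv_def : ∀ g : V, Bv g g = 0 → g = 0 := by
    intro g hg
    rw [hBv_apply, hb0, zero_add, real_inner_self_eq_norm_sq] at hg
    have : ‖g‖ ^ 2 = 0 := by
      rcases mul_eq_zero.mp hg with h' | h'
      · exact absurd h' hν.ne'
      · exact h'
    simpa using pow_eq_zero_iff (n := 2) (by norm_num) |>.mp this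
  obtain ⟨g₁, hg₁, hg₁u⟩ :=
    lax_milgram_fin Bv hBv_def (Ri • (c g₂) - b h (G₁ u θ))
  refine ⟨(g₁, g₂), ⟨?_, ?_⟩, ?_⟩
  · intro v
    have := hg₁ v
    rw [hBv_apply] at this
    simp only [LinearMap.sub_apply, LinearMap.smul_apply, smul_eq_mul] at this
    linarith
  · intro χ
    have := hg₂ χ
    rw [hBθ_apply] at this
    simp only [LinearMap.neg_apply] at this
    linarith
  · rintro ⟨q₁, q₂⟩ ⟨hq1, hq2⟩
    have hq2' : q₂ = g₂ := by
      apply hg₂u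
      intro χ
      have := hq2 χ
      rw [hBθ_apply]
      simp only [LinearMap.neg_apply]
      linarith
    subst hq2'
    have hq1' : q₁ = g₁ := by
      apply hg₁u
      intro v
      have := hq1 v
      rw [hBv_apply]
      simp only [LinearMap.sub_apply, LinearMap.smul_apply, smul_eq_mul]
      linarith
    subst hq1'
    rfl
end

section
/- (Bound (3.17).) For every (u,θ), (h,s) ∈ V × W, the temperature component of G'(u,θ;h,s) satisfies ‖G₂'(u,θ;h,s)‖_W ≤ κ⁻¹ M K₂ ‖h‖_V. -/
open scoped RealInnerProductSpace

/-- Bound (3.17): `‖G₂'(u,θ;h,s)‖ ≤ κ⁻¹ M K₂ ‖h‖`. -/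
theorem derivative_temperature_bound
    {V W : Type*} [NormedAddCommGroup V] [InnerProductSpace ℝ V] [FiniteDimensional ℝ V]
    [NormedAddCommGroup W] [InnerProductSpace ℝ W] [FiniteDimensional ℝ W]
    (ν κ Ri M CP : ℝ) (hν : 0 < ν) (hκ : 0 < κ) (hRi : 0 < Ri) (hM : 0 < M) (hCP : 0 < CP)
    (b : V →ₗ[ℝ] V →ₗ[ℝ] V →ₗ[ℝ] ℝ)
    (hb0 : ∀ u v : V, b u v v = 0)
    (hb : ∀ u v w : V, |b u v w| ≤ M * ‖u‖ * ‖v‖ * ‖w‖)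
    (bs : V →ₗ[ℝ] W →ₗ[ℝ] W →ₗ[ℝ] ℝ)
    (hbs0 : ∀ (u : V) (φ : W), bs u φ φ = 0)
    (hbs : ∀ (u : V) (φ ψ : W), |bs u φ ψ| ≤ M * ‖u‖ * ‖φ‖ * ‖ψ‖)
    (c : W →ₗ[ℝ] V →ₗ[ℝ] ℝ)
    (hc : ∀ (θ : W) (v : V), |c θ v| ≤ CP ^ 2 * ‖θ‖ * ‖v‖)
    (f : V →L[ℝ] ℝ) (γ : W →L[ℝ] ℝ)
    (G₁ : V → W → V) (G₂ : V → W → W)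
    (hG : ∀ (u : V) (θ : W),
      (∀ v : V, b u (G₁ u θ) v + ν * ⟪G₁ u θ, v⟫ = Ri * c (G₂ u θ) v + f v) ∧
      (∀ χ : W, bs u (G₂ u θ) χ + κ * ⟪G₂ u θ, χ⟫ = γ χ))
    (G₁' : V → W → V → W → V) (G₂' : V → W → V → W → W)
    (hG' : ∀ (u : V) (θ : W) (h : V) (s : W),
      (∀ v : V, b h (G₁ u θ) v + b u (G₁' u θ h s) v + ν * ⟪G₁' u θ h s, v⟫
          = Ri * c (G₂' u θ h s) v) ∧
      (∀ χ : W, bs h (G₂ u θ) χ + bs u (G₂' u θ h s) χ + κ * ⟪G₂' u θ h s, χ⟫ = 0))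
    (u h : V) (θ s : W) :
    ‖G₂' u θ h s‖ ≤ κ⁻¹ * M * (κ⁻¹ * ‖γ‖) * ‖h‖ := by

  set g := G₂' u θ h s with hg
  set T := G₂ u θ with hT
  -- bound on ‖T‖
  have hT2 := (hG u θ).2 T
  rw [hbs0, real_inner_self_eq_norm_sq] at hT2
  have hTbound : ‖T‖ ≤ κ⁻¹ * ‖γ‖ := by
    rcases eq_or_lt_of_le (norm_nonneg T) with h0 | h0
    · rw [← h0]; positivity
    · have hγ : κ * ‖T‖ ^ 2 ≤ ‖γ‖ * ‖T‖ := by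
        rw [zero_add] at hT2
        calc κ * ‖T‖ ^ 2 = γ T := hT2
          _ ≤ |γ T| := le_abs_self _
          _ ≤ ‖γ‖ * ‖T‖ := γ.le_opNorm T
      have : κ * ‖T‖ ≤ ‖γ‖ := by
        have := (mul_le_mul_iff_of_pos_right h0).mp (by nlinarith : κ * ‖T‖ * ‖T‖ ≤ ‖γ‖ * ‖T‖)
        exact this
      rw [inv_mul_eq_div, le_div_iff₀ hκ]
      linarith [this]
  -- bound on ‖g‖
  have hg2 := (hG' u θ h s).2 g
  rw [hbs0, add_zero, real_inner_self_eq_norm_sq] at hg2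
  have key : κ * ‖g‖ ^ 2 ≤ M * ‖h‖ * ‖T‖ * ‖g‖ := by
    have : κ * ‖g‖ ^ 2 = -(bs h T g) := by linarith [hg2]
    calc κ * ‖g‖ ^ 2 = -(bs h T g) := this
      _ ≤ |bs h T g| := neg_le_abs _
      _ ≤ M * ‖h‖ * ‖T‖ * ‖g‖ := hbs h T g
  rcases eq_or_lt_of_le (norm_nonneg g) with h0 | h0
  · rw [← h0]; positivity
  · have h1 : κ * ‖g‖ ≤ M * ‖h‖ * ‖T‖ := by
      have := (mul_le_mul_iff_of_pos_right h0).mp (by nlinarith : κ * ‖g‖ * ‖g‖ ≤ M * ‖h‖ * ‖T‖ * ‖g‖)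
      exact this
    have h2 : M * ‖h‖ * ‖T‖ ≤ M * ‖h‖ * (κ⁻¹ * ‖γ‖) := by
      apply mul_le_mul_of_nonneg_left hTbound; positivity
    rw [show κ⁻¹ * M * (κ⁻¹ * ‖γ‖) * ‖h‖ = M * ‖h‖ * (κ⁻¹ * ‖γ‖) / κ by ring, le_div_iff₀ hκ]
    nlinarith
end

section
/- (Bound (3.18).) Assume the small data condition. Then for every (u,θ), (h,s) ∈ V × W, the velocity component of G'(u,θ;h,s) satisfies ‖G₁'(u,θ;h,s)‖_V ≤ ν⁻¹ M (K₁ + K₂) ‖h‖_V. -/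
open scoped RealInnerProductSpace


private lemma cancel_norm {a n C : ℝ} (ha : 0 < a) (hC : 0 ≤ C) (hn : 0 ≤ n)
    (h : a * n ^ 2 ≤ C * n) : n ≤ a⁻¹ * C := by
  rcases hn.eq_or_lt with h0 | h0
  · rw [← h0]; positivity
  · rw [inv_mul_eq_div, le_div_iff₀ ha]; nlinarith

/-- Bound (3.18): under the small data condition,
`‖G₁'(u,θ;h,s)‖ ≤ ν⁻¹ M (K₁ + K₂) ‖h‖`. -/
theorem derivative_velocity_bound
    {V W : Type*} [NormedAddCommGroup V] [InnerProductSpace ℝ V] [FiniteDimensional ℝ V]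
    [NormedAddCommGroup W] [InnerProductSpace ℝ W] [FiniteDimensional ℝ W]
    (ν κ Ri M CP : ℝ) (hν : 0 < ν) (hκ : 0 < κ) (hRi : 0 < Ri) (hM : 0 < M) (hCP : 0 < CP)
    (b : V →ₗ[ℝ] V →ₗ[ℝ] V →ₗ[ℝ] ℝ)
    (hb0 : ∀ u v : V, b u v v = 0)
    (hb : ∀ u v w : V, |b u v w| ≤ M * ‖u‖ * ‖v‖ * ‖w‖)
    (bs : V →ₗ[ℝ] W →ₗ[ℝ] W →ₗ[ℝ] ℝ)
    (hbs0 : ∀ (u : V) (φ : W), bs u φ φ = 0)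
    (hbs : ∀ (u : V) (φ ψ : W), |bs u φ ψ| ≤ M * ‖u‖ * ‖φ‖ * ‖ψ‖)
    (c : W →ₗ[ℝ] V →ₗ[ℝ] ℝ)
    (hc : ∀ (θ : W) (v : V), |c θ v| ≤ CP ^ 2 * ‖θ‖ * ‖v‖)
    (f : V →L[ℝ] ℝ) (γ : W →L[ℝ] ℝ)
    (G₁ : V → W → V) (G₂ : V → W → W)
    (hG : ∀ (u : V) (θ : W),
      (∀ v : V, b u (G₁ u θ) v + ν * ⟪G₁ u θ, v⟫ = Ri * c (G₂ u θ) v + f v) ∧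
      (∀ χ : W, bs u (G₂ u θ) χ + κ * ⟪G₂ u θ, χ⟫ = γ χ))
    (G₁' : V → W → V → W → V) (G₂' : V → W → V → W → W)
    (hG' : ∀ (u : V) (θ : W) (h : V) (s : W),
      (∀ v : V, b h (G₁ u θ) v + b u (G₁' u θ h s) v + ν * ⟪G₁' u θ h s, v⟫
          = Ri * c (G₂' u θ h s) v) ∧
      (∀ χ : W, bs h (G₂ u θ) χ + bs u (G₂' u θ h s) χ + κ * ⟪G₂' u θ h s, χ⟫ = 0))
    (hsd1 : (min ν κ)⁻¹ ^ 2 * M *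
        (2 * (Ri * CP ^ 2 * κ⁻¹ * ‖γ‖ + ‖f‖) + κ⁻¹ ^ 2 * M * ‖γ‖ ^ 2) < 1)
    (hsd2 : (min ν κ)⁻¹ * Ri * CP ^ 2 < 1)
    (u h : V) (θ s : W) :
    ‖G₁' u θ h s‖ ≤ ν⁻¹ * M * ((Ri * CP ^ 2 * ν⁻¹ * κ⁻¹ * ‖γ‖ + ν⁻¹ * ‖f‖) + (κ⁻¹ * ‖γ‖)) * ‖h‖ := by
  have hmin : (0:ℝ) < min ν κ := lt_min hν hκ
  have hRiCP : Ri * CP ^ 2 * κ⁻¹ ≤ 1 := by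
    have h1 : κ⁻¹ ≤ (min ν κ)⁻¹ := by
      apply inv_anti₀ hmin (min_le_right _ _)
    nlinarith [mul_pos hRi (pow_pos hCP 2)]
  set g₁ := G₁' u θ h s with hg₁def
  set g₂ := G₂' u θ h s with hg₂def
  set B₁ := G₁ u θ with hB₁def
  set B₂ := G₂ u θ with hB₂def
  -- bound on ‖B₂‖
  have hB2 : ‖B₂‖ ≤ κ⁻¹ * ‖γ‖ := by
    apply cancel_norm hκ (norm_nonneg _) (norm_nonneg _)
    have heq := (hG u θ).2 B₂
    rw [← hB₂def, hbs0, real_inner_self_eq_norm_sq] at heq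
    have hle : γ B₂ ≤ ‖γ‖ * ‖B₂‖ := by
      calc γ B₂ ≤ |γ B₂| := le_abs_self _
        _ = ‖γ B₂‖ := (Real.norm_eq_abs _).symm
        _ ≤ ‖γ‖ * ‖B₂‖ := γ.le_opNorm _
    linarith
  -- bound on ‖B₁‖
  have hB1 : ‖B₁‖ ≤ ν⁻¹ * (Ri * CP ^ 2 * (κ⁻¹ * ‖γ‖) + ‖f‖) := by
    apply cancel_norm hν (by positivity) (norm_nonneg _)
    have heq := (hG u θ).1 B₁
    rw [← hB₁def, ← hB₂def, hb0, real_inner_self_eq_norm_sq] at heq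
    have hc1 : c B₂ B₁ ≤ CP ^ 2 * ‖B₂‖ * ‖B₁‖ := (le_abs_self _).trans (hc _ _)
    have hf1 : f B₁ ≤ ‖f‖ * ‖B₁‖ := by
      calc f B₁ ≤ |f B₁| := le_abs_self _
        _ = ‖f B₁‖ := (Real.norm_eq_abs _).symm
        _ ≤ ‖f‖ * ‖B₁‖ := f.le_opNorm _
    have t1 : Ri * c B₂ B₁ ≤ Ri * (CP ^ 2 * ‖B₂‖ * ‖B₁‖) :=
      mul_le_mul_of_nonneg_left hc1 hRi.le
    have t2 : Ri * (CP ^ 2 * ‖B₂‖ * ‖B₁‖) ≤ Ri * (CP ^ 2 * (κ⁻¹ * ‖γ‖) * ‖B₁‖) := by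
      gcongr
    have : Ri * (CP ^ 2 * (κ⁻¹ * ‖γ‖) * ‖B₁‖) + ‖f‖ * ‖B₁‖
        = (Ri * CP ^ 2 * (κ⁻¹ * ‖γ‖) + ‖f‖) * ‖B₁‖ := by ring
    linarith
  -- bound on ‖g₂‖
  have hg2 : ‖g₂‖ ≤ κ⁻¹ * (M * ‖h‖ * (κ⁻¹ * ‖γ‖)) := by
    have step : ‖g₂‖ ≤ κ⁻¹ * (M * ‖h‖ * ‖B₂‖) := by
      apply cancel_norm hκ (by positivity) (norm_nonneg _)
      have heq := (hG' u θ h s).2 g₂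
      rw [← hg₂def, ← hB₂def, hbs0, real_inner_self_eq_norm_sq] at heq
      have hle : -(bs h B₂ g₂) ≤ M * ‖h‖ * ‖B₂‖ * ‖g₂‖ := (neg_le_abs _).trans (hbs _ _ _)
      linarith
    refine step.trans ?_
    gcongr
  -- bound on ‖g₁‖
  have hg1 : ‖g₁‖ ≤ ν⁻¹ * (M * ‖h‖ * ‖B₁‖ + Ri * CP ^ 2 * ‖g₂‖) := by
    apply cancel_norm hν (by positivity) (norm_nonneg _)
    have heq := (hG' u θ h s).1 g₁
    rw [← hg₁def, ← hg₂def, ← hB₁def, hb0, real_inner_self_eq_norm_sq] at heq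
    have hle : -(b h B₁ g₁) ≤ M * ‖h‖ * ‖B₁‖ * ‖g₁‖ := (neg_le_abs _).trans (hb _ _ _)
    have hc1 : Ri * c g₂ g₁ ≤ Ri * (CP ^ 2 * ‖g₂‖ * ‖g₁‖) :=
      mul_le_mul_of_nonneg_left ((le_abs_self _).trans (hc _ _)) hRi.le
    have : M * ‖h‖ * ‖B₁‖ * ‖g₁‖ + Ri * (CP ^ 2 * ‖g₂‖ * ‖g₁‖)
        = (M * ‖h‖ * ‖B₁‖ + Ri * CP ^ 2 * ‖g₂‖) * ‖g₁‖ := by ring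
    linarith
  -- combine
  have h1 : M * ‖h‖ * ‖B₁‖ ≤ M * (Ri * CP ^ 2 * ν⁻¹ * κ⁻¹ * ‖γ‖ + ν⁻¹ * ‖f‖) * ‖h‖ := by
    calc M * ‖h‖ * ‖B₁‖ ≤ M * ‖h‖ * (ν⁻¹ * (Ri * CP ^ 2 * (κ⁻¹ * ‖γ‖) + ‖f‖)) := by gcongr
      _ = M * (Ri * CP ^ 2 * ν⁻¹ * κ⁻¹ * ‖γ‖ + ν⁻¹ * ‖f‖) * ‖h‖ := by ring
  have h2 : Ri * CP ^ 2 * ‖g₂‖ ≤ M * (κ⁻¹ * ‖γ‖) * ‖h‖ := by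
    calc Ri * CP ^ 2 * ‖g₂‖ ≤ Ri * CP ^ 2 * (κ⁻¹ * (M * ‖h‖ * (κ⁻¹ * ‖γ‖))) := by
          have : (0:ℝ) < Ri * CP ^ 2 := by positivity
          exact mul_le_mul_of_nonneg_left hg2 this.le
      _ = (Ri * CP ^ 2 * κ⁻¹) * (M * (κ⁻¹ * ‖γ‖) * ‖h‖) := by ring
      _ ≤ 1 * (M * (κ⁻¹ * ‖γ‖) * ‖h‖) := by
          have hnn : (0:ℝ) ≤ M * (κ⁻¹ * ‖γ‖) * ‖h‖ := by positivity
          exact mul_le_mul_of_nonneg_right hRiCP hnn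
      _ = M * (κ⁻¹ * ‖γ‖) * ‖h‖ := one_mul _
  calc ‖g₁‖ ≤ ν⁻¹ * (M * ‖h‖ * ‖B₁‖ + Ri * CP ^ 2 * ‖g₂‖) := hg1
    _ ≤ ν⁻¹ * (M * (Ri * CP ^ 2 * ν⁻¹ * κ⁻¹ * ‖γ‖ + ν⁻¹ * ‖f‖) * ‖h‖ + M * (κ⁻¹ * ‖γ‖) * ‖h‖) :=
        mul_le_mul_of_nonneg_left (add_le_add h1 h2) (inv_nonneg.mpr hν.le)
    _ = ν⁻¹ * M * ((Ri * CP ^ 2 * ν⁻¹ * κ⁻¹ * ‖γ‖ + ν⁻¹ * ‖f‖) + (κ⁻¹ * ‖γ‖)) * ‖h‖ := by ring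
end

section
/- (Lemma 3.5, uniform bound on G'.) Assume the small data condition. Then for every (u,θ), (h,s) ∈ V × W, ‖G'(u,θ;h,s)‖_B ≤ C_G ‖(h,s)‖_B, where C_G = ν^{-1/2} η^{-1/2} M (2K₁² + 3K₂²)^{1/2}. -/
open scoped RealInnerProductSpace

private lemma cancel_aux {a c x : ℝ} (ha : 0 < a) (hx : 0 ≤ x) (hc : 0 ≤ c)
    (h : a * x ^ 2 ≤ c * x) : a * x ≤ c := by
  rcases hx.eq_or_lt with h0 | h0
  · rw [← h0]; simpa using hc
  · nlinarith

private lemma div_bound {a c x : ℝ} (ha : 0 < a) (h : a * x ≤ c) : x ≤ a⁻¹ * c := by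
  have := mul_le_mul_of_nonneg_left h (inv_pos.mpr ha).le
  rwa [← mul_assoc, inv_mul_cancel₀ ha.ne', one_mul] at this

private lemma mono4 {M h t B g : ℝ} (hM : 0 ≤ M) (hh : 0 ≤ h) (hg : 0 ≤ g) (ht : t ≤ B) :
    M * h * t * g ≤ M * B * h * g := by
  calc M * h * t * g = (M * h * g) * t := by ring
    _ ≤ (M * h * g) * B := mul_le_mul_of_nonneg_left ht (mul_nonneg (mul_nonneg hM hh) hg)
    _ = M * B * h * g := by ring

private lemma sq_comb (A B : ℝ) : (A + B) ^ 2 + B ^ 2 ≤ 2 * A ^ 2 + 3 * B ^ 2 := by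
  nlinarith [sq_nonneg (A - B)]

private lemma step2_aux {νi κi ηi d1 d2 S H : ℝ} (h1 : νi ≤ ηi) (h2 : κi ≤ ηi)
    (hd1 : 0 ≤ d1) (hd2 : 0 ≤ d2) (hηi : 0 ≤ ηi) (hS : d1 + d2 ≤ S) (hH : 0 ≤ H) :
    νi * (d1 * H) + κi * (d2 * H) ≤ ηi * (S * H) := by
  calc νi * (d1 * H) + κi * (d2 * H)
      ≤ ηi * (d1 * H) + ηi * (d2 * H) :=
        add_le_add (mul_le_mul_of_nonneg_right h1 (mul_nonneg hd1 hH))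
          (mul_le_mul_of_nonneg_right h2 (mul_nonneg hd2 hH))
    _ = ηi * ((d1 + d2) * H) := by ring
    _ ≤ ηi * (S * H) := mul_le_mul_of_nonneg_left (mul_le_mul_of_nonneg_right hS hH) hηi

set_option maxHeartbeats 1000000 in
/-- Lemma 3.5 (uniform bound on `G'`): `‖G'(u,θ;h,s)‖_B ≤ C_G ‖(h,s)‖_B`. -/
theorem derivative_uniform_bound_Bnorm
    {V W : Type*} [NormedAddCommGroup V] [InnerProductSpace ℝ V] [FiniteDimensional ℝ V]
    [NormedAddCommGroup W] [InnerProductSpace ℝ W] [FiniteDimensional ℝ W]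
    (ν κ Ri M CP : ℝ) (hν : 0 < ν) (hκ : 0 < κ) (hRi : 0 < Ri) (hM : 0 < M) (hCP : 0 < CP)
    (b : V →ₗ[ℝ] V →ₗ[ℝ] V →ₗ[ℝ] ℝ)
    (hb0 : ∀ u v : V, b u v v = 0)
    (hb : ∀ u v w : V, |b u v w| ≤ M * ‖u‖ * ‖v‖ * ‖w‖)
    (bs : V →ₗ[ℝ] W →ₗ[ℝ] W →ₗ[ℝ] ℝ)
    (hbs0 : ∀ (u : V) (φ : W), bs u φ φ = 0)
    (hbs : ∀ (u : V) (φ ψ : W), |bs u φ ψ| ≤ M * ‖u‖ * ‖φ‖ * ‖ψ‖)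
    (c : W →ₗ[ℝ] V →ₗ[ℝ] ℝ)
    (hc : ∀ (θ : W) (v : V), |c θ v| ≤ CP ^ 2 * ‖θ‖ * ‖v‖)
    (f : V →L[ℝ] ℝ) (γ : W →L[ℝ] ℝ)
    (G₁ : V → W → V) (G₂ : V → W → W)
    (hG : ∀ (u : V) (θ : W),
      (∀ v : V, b u (G₁ u θ) v + ν * ⟪G₁ u θ, v⟫ = Ri * c (G₂ u θ) v + f v) ∧
      (∀ χ : W, bs u (G₂ u θ) χ + κ * ⟪G₂ u θ, χ⟫ = γ χ))
    (G₁' : V → W → V → W → V) (G₂' : V → W → V → W → W)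
    (hG' : ∀ (u : V) (θ : W) (h : V) (s : W),
      (∀ v : V, b h (G₁ u θ) v + b u (G₁' u θ h s) v + ν * ⟪G₁' u θ h s, v⟫
          = Ri * c (G₂' u θ h s) v) ∧
      (∀ χ : W, bs h (G₂ u θ) χ + bs u (G₂' u θ h s) χ + κ * ⟪G₂' u θ h s, χ⟫ = 0))
    (hsd1 : (min ν κ)⁻¹ ^ 2 * M *
        (2 * (Ri * CP ^ 2 * κ⁻¹ * ‖γ‖ + ‖f‖) + κ⁻¹ ^ 2 * M * ‖γ‖ ^ 2) < 1)
    (hsd2 : (min ν κ)⁻¹ * Ri * CP ^ 2 < 1)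
    (u h : V) (θ s : W) :
    Real.sqrt (ν * ‖G₁' u θ h s‖ ^ 2 + κ * ‖G₂' u θ h s‖ ^ 2)
      ≤ ((Real.sqrt ν)⁻¹ * (Real.sqrt (min ν κ))⁻¹ * M * Real.sqrt (2 * (Ri * CP ^ 2 * ν⁻¹ * κ⁻¹ * ‖γ‖ + ν⁻¹ * ‖f‖) ^ 2 + 3 * (κ⁻¹ * ‖γ‖) ^ 2)) * Real.sqrt (ν * ‖h‖ ^ 2 + κ * ‖s‖ ^ 2) := by
  set η : ℝ := min ν κ with hη
  have hη0 : 0 < η := lt_min hν hκ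
  set A : ℝ := Ri * CP ^ 2 * ν⁻¹ * κ⁻¹ * ‖γ‖ + ν⁻¹ * ‖f‖ with hA
  set B : ℝ := κ⁻¹ * ‖γ‖ with hB
  have hγ0 : (0:ℝ) ≤ ‖γ‖ := norm_nonneg _
  have hf0 : (0:ℝ) ≤ ‖f‖ := norm_nonneg _
  have hA0 : 0 ≤ A := by positivity
  have hB0 : 0 ≤ B := by positivity
  set ut : V := G₁ u θ with hut
  set tt : W := G₂ u θ with htt
  set g₁ : V := G₁' u θ h s with hg₁
  set g₂ : W := G₂' u θ h s with hg₂
  -- Ri * CP^2 ≤ κ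
  have hRiCP : Ri * CP ^ 2 ≤ κ := by
    have h1 : Ri * CP ^ 2 < η := by
      have h2 : η⁻¹ * (Ri * CP ^ 2) < 1 := by linarith [hsd2]
      have := (inv_mul_lt_iff₀ hη0).mp h2
      linarith
    exact h1.le.trans (min_le_right _ _)
  -- bound on ‖tt‖
  have e2 := (hG u θ).2 tt
  rw [hbs0, zero_add, real_inner_self_eq_norm_sq] at e2
  have htt1 : κ * ‖tt‖ ≤ ‖γ‖ := by
    apply cancel_aux hκ (norm_nonneg _) hγ0
    rw [e2]
    calc γ tt ≤ |γ tt| := le_abs_self _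
      _ ≤ ‖γ‖ * ‖tt‖ := by
          have := γ.le_opNorm tt
          rwa [Real.norm_eq_abs] at this
  have httB : ‖tt‖ ≤ B := div_bound hκ htt1
  -- bound on ‖ut‖
  have e1 := (hG u θ).1 ut
  rw [hb0, zero_add, real_inner_self_eq_norm_sq] at e1
  have hut1 : ν * ‖ut‖ ≤ Ri * CP ^ 2 * B + ‖f‖ := by
    apply cancel_aux hν (norm_nonneg _) (by positivity)
    rw [e1]
    have hcb : Ri * c tt ut ≤ Ri * CP ^ 2 * B * ‖ut‖ := by
      have h1 : c tt ut ≤ CP ^ 2 * ‖tt‖ * ‖ut‖ := (le_abs_self _).trans (hc tt ut)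
      have h2 : CP ^ 2 * ‖tt‖ * ‖ut‖ ≤ CP ^ 2 * B * ‖ut‖ := by
        apply mul_le_mul_of_nonneg_right _ (norm_nonneg _)
        exact mul_le_mul_of_nonneg_left httB (by positivity)
      have h3 := mul_le_mul_of_nonneg_left (h1.trans h2) hRi.le
      have h4 : Ri * (CP ^ 2 * B * ‖ut‖) = Ri * CP ^ 2 * B * ‖ut‖ := by ring
      linarith
    have hfb : f ut ≤ ‖f‖ * ‖ut‖ := by
      have := f.le_opNorm ut
      rw [Real.norm_eq_abs] at this
      exact (le_abs_self _).trans this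
    have h5 : (Ri * CP ^ 2 * B + ‖f‖) * ‖ut‖ = Ri * CP ^ 2 * B * ‖ut‖ + ‖f‖ * ‖ut‖ := by
      ring
    linarith
  have hutA : ‖ut‖ ≤ A := by
    have h1 := div_bound hν hut1
    have h2 : ν⁻¹ * (Ri * CP ^ 2 * B + ‖f‖) = A := by rw [hA, hB]; ring
    linarith [h2 ▸ h1]
  -- bound on ‖g₂‖
  have eg2 := (hG' u θ h s).2 g₂
  rw [hbs0, real_inner_self_eq_norm_sq] at eg2
  have hg2a : κ * ‖g₂‖ ≤ M * B * ‖h‖ := by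
    apply cancel_aux hκ (norm_nonneg _) (by positivity)
    have heq : κ * ‖g₂‖ ^ 2 = -(bs h tt g₂) := by linarith
    rw [heq]
    calc -(bs h tt g₂) ≤ |bs h tt g₂| := neg_le_abs _
      _ ≤ M * ‖h‖ * ‖tt‖ * ‖g₂‖ := hbs h tt g₂
      _ ≤ M * B * ‖h‖ * ‖g₂‖ := mono4 hM.le (norm_nonneg _) (norm_nonneg _) httB
  have hg2b : ‖g₂‖ ≤ κ⁻¹ * (M * B) * ‖h‖ := by
    have h1 := div_bound hκ hg2a
    have h2 : κ⁻¹ * (M * B * ‖h‖) = κ⁻¹ * (M * B) * ‖h‖ := by ring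
    linarith [h2 ▸ h1]
  -- bound on ‖g₁‖
  have eg1 := (hG' u θ h s).1 g₁
  rw [hb0, real_inner_self_eq_norm_sq] at eg1
  have hg1a : ν * ‖g₁‖ ≤ M * (A + B) * ‖h‖ := by
    apply cancel_aux hν (norm_nonneg _) (by positivity)
    have heq : ν * ‖g₁‖ ^ 2 = Ri * c g₂ g₁ - b h ut g₁ := by linarith
    rw [heq]
    have h1 : Ri * c g₂ g₁ ≤ Ri * CP ^ 2 * ‖g₂‖ * ‖g₁‖ := by
      have h1a := mul_le_mul_of_nonneg_left ((le_abs_self _).trans (hc g₂ g₁)) hRi.le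
      have h1b : Ri * (CP ^ 2 * ‖g₂‖ * ‖g₁‖) = Ri * CP ^ 2 * ‖g₂‖ * ‖g₁‖ := by ring
      linarith
    have h2 : -(b h ut g₁) ≤ M * A * ‖h‖ * ‖g₁‖ := by
      calc -(b h ut g₁) ≤ |b h ut g₁| := neg_le_abs _
        _ ≤ M * ‖h‖ * ‖ut‖ * ‖g₁‖ := hb h ut g₁
        _ ≤ M * A * ‖h‖ * ‖g₁‖ := mono4 hM.le (norm_nonneg _) (norm_nonneg _) hutA
    have h3 : Ri * CP ^ 2 * ‖g₂‖ ≤ M * B * ‖h‖ := by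
      have h3a := mul_le_mul_of_nonneg_left hg2b (by positivity : (0:ℝ) ≤ Ri * CP ^ 2)
      have h3b : Ri * CP ^ 2 * (κ⁻¹ * (M * B) * ‖h‖) ≤ M * B * ‖h‖ := by
        have h3c : Ri * CP ^ 2 * (κ⁻¹ * (M * B) * ‖h‖)
            = (Ri * CP ^ 2 * κ⁻¹) * (M * B * ‖h‖) := by ring
        rw [h3c]
        apply mul_le_of_le_one_left (by positivity)
        rw [← mul_inv_cancel₀ hκ.ne']
        exact mul_le_mul_of_nonneg_right hRiCP (by positivity)
      linarith
    have h4 := mul_le_mul_of_nonneg_right h3 (norm_nonneg g₁)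
    have h5 : (M * A * ‖h‖ + M * B * ‖h‖) * ‖g₁‖ = M * (A + B) * ‖h‖ * ‖g₁‖ := by ring
    nlinarith [h1, h2, h4, h5]
  have hg1b : ‖g₁‖ ≤ ν⁻¹ * (M * (A + B)) * ‖h‖ := by
    have h1 := div_bound hν hg1a
    have h2 : ν⁻¹ * (M * (A + B) * ‖h‖) = ν⁻¹ * (M * (A + B)) * ‖h‖ := by ring
    linarith [h2 ▸ h1]
  -- combine
  have hg1sq : ‖g₁‖ ^ 2 ≤ (ν⁻¹ * (M * (A + B)) * ‖h‖) ^ 2 :=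
    pow_le_pow_left₀ (norm_nonneg _) hg1b 2
  have hg2sq : ‖g₂‖ ^ 2 ≤ (κ⁻¹ * (M * B) * ‖h‖) ^ 2 :=
    pow_le_pow_left₀ (norm_nonneg _) hg2b 2
  have hνη : ν⁻¹ ≤ η⁻¹ := inv_anti₀ hη0 (min_le_left _ _)
  have hκη : κ⁻¹ ≤ η⁻¹ := inv_anti₀ hη0 (min_le_right _ _)
  set S : ℝ := 2 * A ^ 2 + 3 * B ^ 2 with hS
  set Bn : ℝ := ν * ‖h‖ ^ 2 + κ * ‖s‖ ^ 2 with hBn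
  have hS0 : 0 ≤ S := by positivity
  have hBn0 : 0 ≤ Bn := by positivity
  have hD : ν * ‖g₁‖ ^ 2 + κ * ‖g₂‖ ^ 2 ≤ ν⁻¹ * (η⁻¹ * (M ^ 2 * (S * Bn))) := by
    have t1 := mul_le_mul_of_nonneg_left hg1sq hν.le
    have t2 := mul_le_mul_of_nonneg_left hg2sq hκ.le
    have e1' : ν * (ν⁻¹ * (M * (A + B)) * ‖h‖) ^ 2
        = ν⁻¹ * (M ^ 2 * (A + B) ^ 2 * ‖h‖ ^ 2) := by
      field_simp
    have e2' : κ * (κ⁻¹ * (M * B) * ‖h‖) ^ 2 = κ⁻¹ * (M ^ 2 * B ^ 2 * ‖h‖ ^ 2) := by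
      field_simp
    have hstep2 : ν⁻¹ * (M ^ 2 * (A + B) ^ 2 * ‖h‖ ^ 2) + κ⁻¹ * (M ^ 2 * B ^ 2 * ‖h‖ ^ 2)
        ≤ η⁻¹ * (M ^ 2 * S * ‖h‖ ^ 2) := by
      have hsum : M ^ 2 * (A + B) ^ 2 + M ^ 2 * B ^ 2 ≤ M ^ 2 * S := by
        have := mul_le_mul_of_nonneg_left (sq_comb A B) (by positivity : (0:ℝ) ≤ M ^ 2)
        rw [hS]; linarith [this, (by ring : M ^ 2 * ((A + B) ^ 2 + B ^ 2)
          = M ^ 2 * (A + B) ^ 2 + M ^ 2 * B ^ 2)]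
      have := step2_aux hνη hκη (by positivity : (0:ℝ) ≤ M ^ 2 * (A + B) ^ 2)
        (by positivity : (0:ℝ) ≤ M ^ 2 * B ^ 2) (by positivity) hsum
        (sq_nonneg ‖h‖)
      calc ν⁻¹ * (M ^ 2 * (A + B) ^ 2 * ‖h‖ ^ 2) + κ⁻¹ * (M ^ 2 * B ^ 2 * ‖h‖ ^ 2)
          = ν⁻¹ * (M ^ 2 * (A + B) ^ 2 * ‖h‖ ^ 2) + κ⁻¹ * (M ^ 2 * B ^ 2 * ‖h‖ ^ 2) := rfl
        _ ≤ η⁻¹ * (M ^ 2 * S * ‖h‖ ^ 2) := by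
            have e3 : η⁻¹ * (M ^ 2 * S * ‖h‖ ^ 2) = η⁻¹ * ((M ^ 2 * S) * ‖h‖ ^ 2) := by ring
            linarith [this]
    have hstep3 : η⁻¹ * (M ^ 2 * S * ‖h‖ ^ 2) ≤ ν⁻¹ * (η⁻¹ * (M ^ 2 * (S * Bn))) := by
      have hh : ‖h‖ ^ 2 ≤ ν⁻¹ * Bn := by
        have e4 : ν⁻¹ * Bn = ν⁻¹ * ν * ‖h‖ ^ 2 + ν⁻¹ * (κ * ‖s‖ ^ 2) := by rw [hBn]; ring
        rw [e4, inv_mul_cancel₀ hν.ne', one_mul]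
        have : 0 ≤ ν⁻¹ * (κ * ‖s‖ ^ 2) := by positivity
        linarith
      calc η⁻¹ * (M ^ 2 * S * ‖h‖ ^ 2) ≤ η⁻¹ * (M ^ 2 * S * (ν⁻¹ * Bn)) := by
            apply mul_le_mul_of_nonneg_left _ (by positivity)
            exact mul_le_mul_of_nonneg_left hh (by positivity)
        _ = ν⁻¹ * (η⁻¹ * (M ^ 2 * (S * Bn))) := by ring
    linarith
  calc Real.sqrt (ν * ‖g₁‖ ^ 2 + κ * ‖g₂‖ ^ 2)
      ≤ Real.sqrt (ν⁻¹ * (η⁻¹ * (M ^ 2 * (S * Bn)))) := Real.sqrt_le_sqrt hD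
    _ = ((Real.sqrt ν)⁻¹ * (Real.sqrt η)⁻¹ * M * Real.sqrt S) * Real.sqrt Bn := by
        rw [Real.sqrt_mul (by positivity), Real.sqrt_mul (by positivity),
          Real.sqrt_mul (by positivity), Real.sqrt_mul hS0,
          Real.sqrt_inv, Real.sqrt_inv, Real.sqrt_sq hM.le]
        ring
end

section
/- (Lemma 3.5, Fréchet differentiability with quadratic remainder.) Assume the small data condition. Then for every (u,θ), (h,s) ∈ V × W, ‖G(u+h, θ+s) − G(u,θ) − G'(u,θ;h,s)‖_B ≤ 2 η^{-3/2} M C_G ‖(h,s)‖_B², where C_G = ν^{-1/2} η^{-1/2} M (2K₁² + 3K₂²)^{1/2}. In particular, G is Fréchet differentiable at every point of V × W with derivative G'(u,θ;·,·). -/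
open scoped RealInnerProductSpace

private lemma cancel_aux_s12 {ν A x : ℝ} (hν : 0 < ν) (hA : 0 ≤ A) (hx : 0 ≤ x)
    (h : ν * x ^ 2 ≤ A * x) : x ≤ ν⁻¹ * A := by
  rcases hx.eq_or_lt with h0 | h0
  · rw [← h0]; positivity
  · have h1 : ν * x ≤ A := by
      have h2 : (ν * x) * x ≤ A * x := by nlinarith
      exact le_of_mul_le_mul_right h2 h0
    calc x = ν⁻¹ * (ν * x) := by field_simp
      _ ≤ ν⁻¹ * A := mul_le_mul_of_nonneg_left h1 (by positivity)

private lemma sq_push {κ z x : ℝ} (hκ : 0 < κ) (hx : 0 ≤ x) (h : x ≤ κ⁻¹ * z) :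
    κ * x ^ 2 ≤ κ⁻¹ * z ^ 2 := by
  have t : x ^ 2 ≤ (κ⁻¹ * z) ^ 2 := by nlinarith
  calc κ * x ^ 2 ≤ κ * (κ⁻¹ * z) ^ 2 := mul_le_mul_of_nonneg_left t hκ.le
    _ = κ⁻¹ * z ^ 2 := by field_simp

private lemma sq_push2 {ν A B x : ℝ} (hν : 0 < ν) (hx : 0 ≤ x)
    (h : x ≤ ν⁻¹ * (A + B)) : ν * x ^ 2 ≤ 2 * ν⁻¹ * A ^ 2 + 2 * ν⁻¹ * B ^ 2 := by
  have h2 : x ^ 2 ≤ (ν⁻¹ * (A + B)) ^ 2 := by nlinarith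
  have h4 : ν * (ν⁻¹ * (A + B)) ^ 2 = ν⁻¹ * (A + B) ^ 2 := by field_simp
  have h5 : ν * x ^ 2 ≤ ν⁻¹ * (A + B) ^ 2 := by
    calc ν * x ^ 2 ≤ ν * (ν⁻¹ * (A + B)) ^ 2 := mul_le_mul_of_nonneg_left h2 hν.le
      _ = ν⁻¹ * (A + B) ^ 2 := h4
  nlinarith [mul_le_mul_of_nonneg_left
    (show (A + B) ^ 2 ≤ 2 * A ^ 2 + 2 * B ^ 2 by nlinarith [sq_nonneg (A - B)])
    (show (0:ℝ) ≤ ν⁻¹ by positivity)]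

private lemma absorb_aux {ν κ p x : ℝ} (hν : 0 < ν) (h : p ^ 2 ≤ ν * κ) :
    2 * ν⁻¹ * (p * x) ^ 2 ≤ 2 * κ * x ^ 2 := by
  have h2 : p ^ 2 * x ^ 2 ≤ (ν * κ) * x ^ 2 := mul_le_mul_of_nonneg_right h (sq_nonneg x)
  have h3 : 2 * ν⁻¹ * ((ν * κ) * x ^ 2) = 2 * κ * x ^ 2 := by field_simp
  nlinarith [mul_le_mul_of_nonneg_left h2 (show (0:ℝ) ≤ 2 * ν⁻¹ by positivity)]

private lemma inv_le_sq_aux {η κ : ℝ} (hη : 0 < η) (h : η ≤ κ) : κ⁻¹ ≤ η⁻¹ ^ 2 * κ := by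
  have hκ : 0 < κ := hη.trans_le h
  have h1 : η ^ 2 ≤ κ ^ 2 := by nlinarith
  have h2 : (κ ^ 2)⁻¹ ≤ (η ^ 2)⁻¹ := inv_anti₀ (by positivity) h1
  calc κ⁻¹ = (κ ^ 2)⁻¹ * κ := by field_simp
    _ ≤ (η ^ 2)⁻¹ * κ := mul_le_mul_of_nonneg_right h2 hκ.le
    _ = η⁻¹ ^ 2 * κ := by rw [inv_pow]

private lemma sqrt_le_of_sq_le {X R : ℝ} (hR : 0 ≤ R) (h : X ≤ R * R) : Real.sqrt X ≤ R := by
  calc Real.sqrt X ≤ Real.sqrt (R * R) := Real.sqrt_le_sqrt h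
    _ = R := Real.sqrt_mul_self hR

private lemma RR_eq_aux (η ν S B M : ℝ) (hη : 0 ≤ η) (hν : 0 ≤ ν) (hS : 0 ≤ S) :
    (2 * η⁻¹ * (Real.sqrt η)⁻¹ * M * ((Real.sqrt ν)⁻¹ * (Real.sqrt η)⁻¹ * M * Real.sqrt S * B)) *
    (2 * η⁻¹ * (Real.sqrt η)⁻¹ * M * ((Real.sqrt ν)⁻¹ * (Real.sqrt η)⁻¹ * M * Real.sqrt S * B))
      = 4 * M ^ 4 * η⁻¹ ^ 4 * ν⁻¹ * S * B ^ 2 := by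
  have h1 : (Real.sqrt η)⁻¹ * (Real.sqrt η)⁻¹ = η⁻¹ := by
    rw [← mul_inv, Real.mul_self_sqrt hη]
  have h2 : (Real.sqrt ν)⁻¹ * (Real.sqrt ν)⁻¹ = ν⁻¹ := by
    rw [← mul_inv, Real.mul_self_sqrt hν]
  have h3 : Real.sqrt S * Real.sqrt S = S := Real.mul_self_sqrt hS
  calc _ = 4 * M ^ 4 * η⁻¹ ^ 2 *
        (((Real.sqrt η)⁻¹ * (Real.sqrt η)⁻¹) * ((Real.sqrt η)⁻¹ * (Real.sqrt η)⁻¹)) *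
        ((Real.sqrt ν)⁻¹ * (Real.sqrt ν)⁻¹) * (Real.sqrt S * Real.sqrt S) * B ^ 2 := by ring
    _ = _ := by rw [h1, h2, h3]; ring

private lemma coord_bound_aux {η a X : ℝ} (hη : 0 < η) (ha : 0 ≤ a) (h : η * a ^ 2 ≤ X) :
    a ≤ (Real.sqrt η)⁻¹ * Real.sqrt X := by
  have h1 : Real.sqrt (η * a ^ 2) ≤ Real.sqrt X := Real.sqrt_le_sqrt h
  rw [Real.sqrt_mul hη.le, Real.sqrt_sq ha] at h1
  have hsη : 0 < Real.sqrt η := Real.sqrt_pos.2 hη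
  calc a = (Real.sqrt η)⁻¹ * (Real.sqrt η * a) := by field_simp
    _ ≤ (Real.sqrt η)⁻¹ * Real.sqrt X := mul_le_mul_of_nonneg_left h1 (by positivity)

set_option maxHeartbeats 1000000 in
/-- Lemma 3.5 (Fréchet differentiability with quadratic remainder): the remainder
`G(u+h,θ+s) - G(u,θ) - G'(u,θ;h,s)` is bounded by `2 η^(-3/2) M C_G ‖(h,s)‖_B²`
in the B-norm; in particular `G` is Fréchet differentiable everywhere with
derivative `G'(u,θ;·,·)`. -/
theorem solution_operator_frechet_differentiable
    {V W : Type*} [NormedAddCommGroup V] [InnerProductSpace ℝ V] [FiniteDimensional ℝ V]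
    [NormedAddCommGroup W] [InnerProductSpace ℝ W] [FiniteDimensional ℝ W]
    (ν κ Ri M CP : ℝ) (hν : 0 < ν) (hκ : 0 < κ) (hRi : 0 < Ri) (hM : 0 < M) (hCP : 0 < CP)
    (b : V →ₗ[ℝ] V →ₗ[ℝ] V →ₗ[ℝ] ℝ)
    (hb0 : ∀ u v : V, b u v v = 0)
    (hb : ∀ u v w : V, |b u v w| ≤ M * ‖u‖ * ‖v‖ * ‖w‖)
    (bs : V →ₗ[ℝ] W →ₗ[ℝ] W →ₗ[ℝ] ℝ)
    (hbs0 : ∀ (u : V) (φ : W), bs u φ φ = 0)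
    (hbs : ∀ (u : V) (φ ψ : W), |bs u φ ψ| ≤ M * ‖u‖ * ‖φ‖ * ‖ψ‖)
    (c : W →ₗ[ℝ] V →ₗ[ℝ] ℝ)
    (hc : ∀ (θ : W) (v : V), |c θ v| ≤ CP ^ 2 * ‖θ‖ * ‖v‖)
    (f : V →L[ℝ] ℝ) (γ : W →L[ℝ] ℝ)
    (G₁ : V → W → V) (G₂ : V → W → W)
    (hG : ∀ (u : V) (θ : W),
      (∀ v : V, b u (G₁ u θ) v + ν * ⟪G₁ u θ, v⟫ = Ri * c (G₂ u θ) v + f v) ∧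
      (∀ χ : W, bs u (G₂ u θ) χ + κ * ⟪G₂ u θ, χ⟫ = γ χ))
    (G₁' : V → W → V → W → V) (G₂' : V → W → V → W → W)
    (hG' : ∀ (u : V) (θ : W) (h : V) (s : W),
      (∀ v : V, b h (G₁ u θ) v + b u (G₁' u θ h s) v + ν * ⟪G₁' u θ h s, v⟫
          = Ri * c (G₂' u θ h s) v) ∧
      (∀ χ : W, bs h (G₂ u θ) χ + bs u (G₂' u θ h s) χ + κ * ⟪G₂' u θ h s, χ⟫ = 0))
    (hsd1 : (min ν κ)⁻¹ ^ 2 * M *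
        (2 * (Ri * CP ^ 2 * κ⁻¹ * ‖γ‖ + ‖f‖) + κ⁻¹ ^ 2 * M * ‖γ‖ ^ 2) < 1)
    (hsd2 : (min ν κ)⁻¹ * Ri * CP ^ 2 < 1)
 :
    (∀ (u h : V) (θ s : W),
      Real.sqrt (ν * ‖G₁ (u + h) (θ + s) - G₁ u θ - G₁' u θ h s‖ ^ 2
          + κ * ‖G₂ (u + h) (θ + s) - G₂ u θ - G₂' u θ h s‖ ^ 2)
        ≤ 2 * (min ν κ)⁻¹ * (Real.sqrt (min ν κ))⁻¹ * M * ((Real.sqrt ν)⁻¹ * (Real.sqrt (min ν κ))⁻¹ * M * Real.sqrt (2 * (Ri * CP ^ 2 * ν⁻¹ * κ⁻¹ * ‖γ‖ + ν⁻¹ * ‖f‖) ^ 2 + 3 * (κ⁻¹ * ‖γ‖) ^ 2))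
            * Real.sqrt (ν * ‖h‖ ^ 2 + κ * ‖s‖ ^ 2) ^ 2) ∧
    ∀ (u : V) (θ : W), ∃ D : (V × W) →L[ℝ] (V × W),
      (∀ (h : V) (s : W), D (h, s) = (G₁' u θ h s, G₂' u θ h s)) ∧
      HasFDerivAt (fun p : V × W => (G₁ p.1 p.2, G₂ p.1 p.2)) D (u, θ) := by
  have hη : 0 < min ν κ := lt_min hν hκ
  have hην : min ν κ ≤ ν := min_le_left _ _
  have hηκ : min ν κ ≤ κ := min_le_right _ _
  have hRC : Ri * CP ^ 2 < min ν κ := by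
    have h2 : (min ν κ)⁻¹ * (Ri * CP ^ 2) < 1 := by rw [← mul_assoc]; exact hsd2
    have h3 : min ν κ * ((min ν κ)⁻¹ * (Ri * CP ^ 2)) < min ν κ * 1 :=
      (mul_lt_mul_iff_right₀ hη).2 h2
    rwa [mul_one, ← mul_assoc, mul_inv_cancel₀ hη.ne', one_mul] at h3
  have hRC2 : (Ri * CP ^ 2) ^ 2 ≤ ν * κ := by
    nlinarith [mul_pos hRi (pow_pos hCP 2), mul_le_mul hην hηκ hη.le hν.le]
  have hγb : ∀ χ : W, γ χ ≤ ‖γ‖ * ‖χ‖ := fun χ =>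
    (le_abs_self _).trans ((Real.norm_eq_abs _) ▸ γ.le_opNorm χ)
  have hfb : ∀ v : V, f v ≤ ‖f‖ * ‖v‖ := fun v =>
    (le_abs_self _).trans ((Real.norm_eq_abs _) ▸ f.le_opNorm v)
  -- a priori bounds on the solution operator
  have hK2b : ∀ (u : V) (θ : W), ‖G₂ u θ‖ ≤ κ⁻¹ * ‖γ‖ := by
    intro u θ
    have e := (hG u θ).2 (G₂ u θ)
    rw [hbs0, real_inner_self_eq_norm_sq, zero_add] at e
    refine cancel_aux_s12 hκ (norm_nonneg _) (norm_nonneg _) ?_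
    rw [e]; exact hγb _
  have hK1b : ∀ (u : V) (θ : W),
      ‖G₁ u θ‖ ≤ Ri * CP ^ 2 * ν⁻¹ * κ⁻¹ * ‖γ‖ + ν⁻¹ * ‖f‖ := by
    intro u θ
    have e := (hG u θ).1 (G₁ u θ)
    rw [hb0, real_inner_self_eq_norm_sq, zero_add] at e
    have h1 : Ri * c (G₂ u θ) (G₁ u θ) ≤ Ri * (CP ^ 2 * ‖G₂ u θ‖ * ‖G₁ u θ‖) :=
      mul_le_mul_of_nonneg_left ((le_abs_self _).trans (hc _ _)) hRi.le
    have h2 := hfb (G₁ u θ)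
    have h3 : CP ^ 2 * ‖G₂ u θ‖ * ‖G₁ u θ‖ ≤ CP ^ 2 * (κ⁻¹ * ‖γ‖) * ‖G₁ u θ‖ :=
      mul_le_mul_of_nonneg_right
        (mul_le_mul_of_nonneg_left (hK2b u θ) (by positivity)) (norm_nonneg _)
    have h5 : ν * ‖G₁ u θ‖ ^ 2 ≤ (Ri * (CP ^ 2 * (κ⁻¹ * ‖γ‖)) + ‖f‖) * ‖G₁ u θ‖ := by
      linarith [mul_le_mul_of_nonneg_left h3 hRi.le, e, h1, h2]
    have h6 := cancel_aux_s12 hν (by positivity) (norm_nonneg _) h5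
    calc ‖G₁ u θ‖ ≤ ν⁻¹ * (Ri * (CP ^ 2 * (κ⁻¹ * ‖γ‖)) + ‖f‖) := h6
      _ = Ri * CP ^ 2 * ν⁻¹ * κ⁻¹ * ‖γ‖ + ν⁻¹ * ‖f‖ := by ring
  have main : ∀ (u h : V) (θ s : W),
      Real.sqrt (ν * ‖G₁ (u + h) (θ + s) - G₁ u θ - G₁' u θ h s‖ ^ 2
          + κ * ‖G₂ (u + h) (θ + s) - G₂ u θ - G₂' u θ h s‖ ^ 2)
        ≤ 2 * (min ν κ)⁻¹ * (Real.sqrt (min ν κ))⁻¹ * M * ((Real.sqrt ν)⁻¹ * (Real.sqrt (min ν κ))⁻¹ * M * Real.sqrt (2 * (Ri * CP ^ 2 * ν⁻¹ * κ⁻¹ * ‖γ‖ + ν⁻¹ * ‖f‖) ^ 2 + 3 * (κ⁻¹ * ‖γ‖) ^ 2))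
            * Real.sqrt (ν * ‖h‖ ^ 2 + κ * ‖s‖ ^ 2) ^ 2 := by
    intro u h θ s
    -- difference equations
    have Ed2 : ∀ χ : W, bs u (G₂ (u + h) (θ + s) - G₂ u θ) χ + bs h (G₂ (u + h) (θ + s)) χ
        + κ * ⟪G₂ (u + h) (θ + s) - G₂ u θ, χ⟫ = 0 := by
      intro χ
      have e1 := (hG (u + h) (θ + s)).2 χ
      have e2 := (hG u θ).2 χ
      simp only [map_add, map_sub, LinearMap.add_apply, LinearMap.sub_apply,
        inner_sub_left] at e1 e2 ⊢
      linarith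
    have Ed1 : ∀ v : V, b u (G₁ (u + h) (θ + s) - G₁ u θ) v + b h (G₁ (u + h) (θ + s)) v
        + ν * ⟪G₁ (u + h) (θ + s) - G₁ u θ, v⟫ = Ri * c (G₂ (u + h) (θ + s) - G₂ u θ) v := by
      intro v
      have e1 := (hG (u + h) (θ + s)).1 v
      have e2 := (hG u θ).1 v
      simp only [map_add, map_sub, LinearMap.add_apply, LinearMap.sub_apply,
        inner_sub_left] at e1 e2 ⊢
      linarith
    have Er2 : ∀ χ : W, bs u (G₂ (u + h) (θ + s) - G₂ u θ - G₂' u θ h s) χ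
        + bs h (G₂ (u + h) (θ + s) - G₂ u θ) χ
        + κ * ⟪G₂ (u + h) (θ + s) - G₂ u θ - G₂' u θ h s, χ⟫ = 0 := by
      intro χ
      have e1 := Ed2 χ
      have e2 := (hG' u θ h s).2 χ
      simp only [map_sub, LinearMap.sub_apply, inner_sub_left] at e1 e2 ⊢
      linarith
    have Er1 : ∀ v : V, b u (G₁ (u + h) (θ + s) - G₁ u θ - G₁' u θ h s) v
        + b h (G₁ (u + h) (θ + s) - G₁ u θ) v
        + ν * ⟪G₁ (u + h) (θ + s) - G₁ u θ - G₁' u θ h s, v⟫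
        = Ri * c (G₂ (u + h) (θ + s) - G₂ u θ - G₂' u θ h s) v := by
      intro v
      have e1 := Ed1 v
      have e2 := (hG' u θ h s).1 v
      simp only [map_sub, LinearMap.sub_apply, inner_sub_left] at e1 e2 ⊢
      linarith
    set d₁ := G₁ (u + h) (θ + s) - G₁ u θ with hd₁
    set d₂ := G₂ (u + h) (θ + s) - G₂ u θ with hd₂
    set r₁ := d₁ - G₁' u θ h s with hr₁
    set r₂ := d₂ - G₂' u θ h s with hr₂
    have I1 : ‖d₂‖ ≤ κ⁻¹ * (M * ‖h‖ * (κ⁻¹ * ‖γ‖)) := by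
      have e := Ed2 d₂
      rw [hbs0, real_inner_self_eq_norm_sq] at e
      have habs := hbs h (G₂ (u + h) (θ + s)) d₂
      have h4 : M * ‖h‖ * ‖G₂ (u + h) (θ + s)‖ * ‖d₂‖ ≤ M * ‖h‖ * (κ⁻¹ * ‖γ‖) * ‖d₂‖ :=
        mul_le_mul_of_nonneg_right
          (mul_le_mul_of_nonneg_left (hK2b _ _) (by positivity)) (norm_nonneg _)
      refine cancel_aux_s12 hκ (by positivity) (norm_nonneg _) ?_
      linarith [neg_abs_le (bs h (G₂ (u + h) (θ + s)) d₂)]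
    have I2 : ‖d₁‖ ≤ ν⁻¹ * (Ri * CP ^ 2 * ‖d₂‖
        + M * ‖h‖ * (Ri * CP ^ 2 * ν⁻¹ * κ⁻¹ * ‖γ‖ + ν⁻¹ * ‖f‖)) := by
      have e := Ed1 d₁
      rw [hb0, real_inner_self_eq_norm_sq] at e
      have habs := hb h (G₁ (u + h) (θ + s)) d₁
      have h4 : M * ‖h‖ * ‖G₁ (u + h) (θ + s)‖ * ‖d₁‖
          ≤ M * ‖h‖ * (Ri * CP ^ 2 * ν⁻¹ * κ⁻¹ * ‖γ‖ + ν⁻¹ * ‖f‖) * ‖d₁‖ :=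
        mul_le_mul_of_nonneg_right
          (mul_le_mul_of_nonneg_left (hK1b _ _) (by positivity)) (norm_nonneg _)
      have h5 : Ri * c d₂ d₁ ≤ Ri * (CP ^ 2 * ‖d₂‖ * ‖d₁‖) :=
        mul_le_mul_of_nonneg_left ((le_abs_self _).trans (hc _ _)) hRi.le
      refine cancel_aux_s12 hν (by positivity) (norm_nonneg _) ?_
      linarith [neg_abs_le (b h (G₁ (u + h) (θ + s)) d₁)]
    have I3 : ‖r₂‖ ≤ κ⁻¹ * (M * ‖h‖ * ‖d₂‖) := by
      have e := Er2 r₂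
      rw [hbs0, real_inner_self_eq_norm_sq] at e
      have habs := hbs h d₂ r₂
      refine cancel_aux_s12 hκ (by positivity) (norm_nonneg _) ?_
      linarith [neg_abs_le (bs h d₂ r₂)]
    have I4 : ‖r₁‖ ≤ ν⁻¹ * (Ri * CP ^ 2 * ‖r₂‖ + M * ‖h‖ * ‖d₁‖) := by
      have e := Er1 r₁
      rw [hb0, real_inner_self_eq_norm_sq] at e
      have habs := hb h d₁ r₁
      have h5 : Ri * c r₂ r₁ ≤ Ri * (CP ^ 2 * ‖r₂‖ * ‖r₁‖) :=
        mul_le_mul_of_nonneg_left ((le_abs_self _).trans (hc _ _)) hRi.le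
      refine cancel_aux_s12 hν (by positivity) (norm_nonneg _) ?_
      linarith [neg_abs_le (b h d₁ r₁)]
    -- arithmetic endgame
    have hC1 : κ * ‖r₂‖ ^ 2 ≤ κ⁻¹ * (M * ‖h‖ * ‖d₂‖) ^ 2 := sq_push hκ (norm_nonneg _) I3
    have hC2 : ν * ‖r₁‖ ^ 2 ≤ 2 * ν⁻¹ * (Ri * CP ^ 2 * ‖r₂‖) ^ 2
        + 2 * ν⁻¹ * (M * ‖h‖ * ‖d₁‖) ^ 2 := sq_push2 hν (norm_nonneg _) I4
    have hC3 : κ * ‖d₂‖ ^ 2 ≤ κ⁻¹ * (M * ‖h‖ * (κ⁻¹ * ‖γ‖)) ^ 2 :=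
      sq_push hκ (norm_nonneg _) I1
    have hC4 : ν * ‖d₁‖ ^ 2 ≤ 2 * ν⁻¹ * (Ri * CP ^ 2 * ‖d₂‖) ^ 2
        + 2 * ν⁻¹ * (M * ‖h‖ * (Ri * CP ^ 2 * ν⁻¹ * κ⁻¹ * ‖γ‖ + ν⁻¹ * ‖f‖)) ^ 2 :=
      sq_push2 hν (norm_nonneg _) I2
    have habs1 : 2 * ν⁻¹ * (Ri * CP ^ 2 * ‖r₂‖) ^ 2 ≤ 2 * κ * ‖r₂‖ ^ 2 := absorb_aux hν hRC2
    have habs2 : 2 * ν⁻¹ * (Ri * CP ^ 2 * ‖d₂‖) ^ 2 ≤ 2 * κ * ‖d₂‖ ^ 2 := absorb_aux hν hRC2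
    have hi1 := inv_le_sq_aux hη hηκ
    have hi2 := inv_le_sq_aux hη hην
    have hi3 : κ⁻¹ ≤ (min ν κ)⁻¹ := inv_anti₀ hη hηκ
    have hi4 : ν⁻¹ ≤ (min ν κ)⁻¹ := inv_anti₀ hη hην
    have m1 : κ⁻¹ * (M * ‖h‖ * ‖d₂‖) ^ 2 ≤ (min ν κ)⁻¹ ^ 2 * κ * (M * ‖h‖ * ‖d₂‖) ^ 2 :=
      mul_le_mul_of_nonneg_right hi1 (sq_nonneg _)
    have m2 : ν⁻¹ * (M * ‖h‖ * ‖d₁‖) ^ 2 ≤ (min ν κ)⁻¹ ^ 2 * ν * (M * ‖h‖ * ‖d₁‖) ^ 2 :=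
      mul_le_mul_of_nonneg_right hi2 (sq_nonneg _)
    have hnn1 : 0 ≤ (min ν κ)⁻¹ ^ 2 * ν * (M * ‖h‖ * ‖d₁‖) ^ 2 := by positivity
    have FX : ν * ‖r₁‖ ^ 2 + κ * ‖r₂‖ ^ 2
        ≤ 3 * (min ν κ)⁻¹ ^ 2 * M ^ 2 * ‖h‖ ^ 2 * (ν * ‖d₁‖ ^ 2 + κ * ‖d₂‖ ^ 2) := by
      linarith [hC1, hC2, habs1, m1, m2, hnn1]
    have m3 : κ⁻¹ * (M * ‖h‖ * (κ⁻¹ * ‖γ‖)) ^ 2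
        ≤ (min ν κ)⁻¹ * (M * ‖h‖ * (κ⁻¹ * ‖γ‖)) ^ 2 :=
      mul_le_mul_of_nonneg_right hi3 (sq_nonneg _)
    have m4 : ν⁻¹ * (M * ‖h‖ * (Ri * CP ^ 2 * ν⁻¹ * κ⁻¹ * ‖γ‖ + ν⁻¹ * ‖f‖)) ^ 2
        ≤ (min ν κ)⁻¹ * (M * ‖h‖ * (Ri * CP ^ 2 * ν⁻¹ * κ⁻¹ * ‖γ‖ + ν⁻¹ * ‖f‖)) ^ 2 :=
      mul_le_mul_of_nonneg_right hi4 (sq_nonneg _)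
    have FY : ν * ‖d₁‖ ^ 2 + κ * ‖d₂‖ ^ 2
        ≤ (min ν κ)⁻¹ * M ^ 2 * ‖h‖ ^ 2 *
          (2 * (Ri * CP ^ 2 * ν⁻¹ * κ⁻¹ * ‖γ‖ + ν⁻¹ * ‖f‖) ^ 2 + 3 * (κ⁻¹ * ‖γ‖) ^ 2) := by
      linarith [hC3, hC4, habs2, m3, m4]
    have FXY := mul_le_mul_of_nonneg_left FY
      (show (0:ℝ) ≤ 3 * (min ν κ)⁻¹ ^ 2 * M ^ 2 * ‖h‖ ^ 2 by positivity)
    have t5 : ν * ‖h‖ ^ 2 ≤ ν * ‖h‖ ^ 2 + κ * ‖s‖ ^ 2 := by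
      linarith [mul_nonneg hκ.le (sq_nonneg ‖s‖)]
    have t5' : ‖h‖ ^ 2 ≤ ν⁻¹ * (ν * ‖h‖ ^ 2 + κ * ‖s‖ ^ 2) := by
      have h7 := mul_le_mul_of_nonneg_left t5 (inv_nonneg.2 hν.le)
      rwa [← mul_assoc, inv_mul_cancel₀ hν.ne', one_mul] at h7
    have t6 : ‖h‖ ^ 2 * ‖h‖ ^ 2
        ≤ (ν⁻¹ * (ν * ‖h‖ ^ 2 + κ * ‖s‖ ^ 2)) * (ν⁻¹ * (ν * ‖h‖ ^ 2 + κ * ‖s‖ ^ 2)) :=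
      mul_le_mul t5' t5' (sq_nonneg _) ((sq_nonneg _).trans t5')
    have t7 := mul_le_mul_of_nonneg_left t6
      (show (0:ℝ) ≤ 3 * M ^ 4 * (min ν κ)⁻¹ ^ 3 *
        (2 * (Ri * CP ^ 2 * ν⁻¹ * κ⁻¹ * ‖γ‖ + ν⁻¹ * ‖f‖) ^ 2 + 3 * (κ⁻¹ * ‖γ‖) ^ 2)
        by positivity)
    have t8 := mul_le_mul_of_nonneg_left hi4
      (show (0:ℝ) ≤ 3 * M ^ 4 * (min ν κ)⁻¹ ^ 3 *
        (2 * (Ri * CP ^ 2 * ν⁻¹ * κ⁻¹ * ‖γ‖ + ν⁻¹ * ‖f‖) ^ 2 + 3 * (κ⁻¹ * ‖γ‖) ^ 2)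
        * (ν * ‖h‖ ^ 2 + κ * ‖s‖ ^ 2) ^ 2 * ν⁻¹ by positivity)
    have t9 : (0:ℝ) ≤ M ^ 4 * (min ν κ)⁻¹ ^ 4 * ν⁻¹ *
        (2 * (Ri * CP ^ 2 * ν⁻¹ * κ⁻¹ * ‖γ‖ + ν⁻¹ * ‖f‖) ^ 2 + 3 * (κ⁻¹ * ‖γ‖) ^ 2)
        * (ν * ‖h‖ ^ 2 + κ * ‖s‖ ^ 2) ^ 2 := by positivity
    have hB2nn : (0:ℝ) ≤ ν * ‖h‖ ^ 2 + κ * ‖s‖ ^ 2 := by positivity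
    rw [Real.sq_sqrt hB2nn]
    refine sqrt_le_of_sq_le (by positivity) ?_
    have hRR := RR_eq_aux (min ν κ) ν
      (2 * (Ri * CP ^ 2 * ν⁻¹ * κ⁻¹ * ‖γ‖ + ν⁻¹ * ‖f‖) ^ 2 + 3 * (κ⁻¹ * ‖γ‖) ^ 2)
      (ν * ‖h‖ ^ 2 + κ * ‖s‖ ^ 2) M hη.le hν.le (by positivity)
    linarith [FX, FXY, t7, t8, t9, hRR]
  refine ⟨main, ?_⟩
  intro u θ
  have huniq : ∀ (a₁ : V) (a₂ : W),
      (∀ v : V, b u a₁ v + ν * ⟪a₁, v⟫ = Ri * c a₂ v) →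
      (∀ χ : W, bs u a₂ χ + κ * ⟪a₂, χ⟫ = 0) → a₁ = 0 ∧ a₂ = 0 := by
    intro a₁ a₂ h1 h2
    have e2 := h2 a₂
    rw [hbs0, real_inner_self_eq_norm_sq, zero_add] at e2
    have ha₂ : a₂ = 0 := by
      have h3 : ‖a₂‖ ^ 2 = 0 := by
        rcases mul_eq_zero.mp e2 with h | h
        · exact absurd h hκ.ne'
        · exact h
      exact norm_eq_zero.mp (pow_eq_zero_iff two_ne_zero |>.mp h3)
    subst ha₂
    have e1 := h1 a₁
    rw [hb0, real_inner_self_eq_norm_sq, zero_add, map_zero] at e1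
    simp only [LinearMap.zero_apply, mul_zero] at e1
    have ha₁ : a₁ = 0 := by
      have h3 : ‖a₁‖ ^ 2 = 0 := by
        rcases mul_eq_zero.mp e1 with h | h
        · exact absurd h hν.ne'
        · exact h
      exact norm_eq_zero.mp (pow_eq_zero_iff two_ne_zero |>.mp h3)
    exact ⟨ha₁, rfl⟩
  have hadd : ∀ (h₁ : V) (s₁ : W) (h₂ : V) (s₂ : W),
      G₁' u θ (h₁ + h₂) (s₁ + s₂) = G₁' u θ h₁ s₁ + G₁' u θ h₂ s₂ ∧
      G₂' u θ (h₁ + h₂) (s₁ + s₂) = G₂' u θ h₁ s₁ + G₂' u θ h₂ s₂ := by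
    intro h₁ s₁ h₂ s₂
    obtain ⟨p1, p2⟩ := huniq
      (G₁' u θ (h₁ + h₂) (s₁ + s₂) - G₁' u θ h₁ s₁ - G₁' u θ h₂ s₂)
      (G₂' u θ (h₁ + h₂) (s₁ + s₂) - G₂' u θ h₁ s₁ - G₂' u θ h₂ s₂)
      (by
        intro v
        have E := (hG' u θ (h₁ + h₂) (s₁ + s₂)).1 v
        have E1 := (hG' u θ h₁ s₁).1 v
        have E2 := (hG' u θ h₂ s₂).1 v
        simp only [map_add, map_sub, LinearMap.add_apply, LinearMap.sub_apply,
          inner_sub_left] at E E1 E2 ⊢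
        linarith)
      (by
        intro χ
        have E := (hG' u θ (h₁ + h₂) (s₁ + s₂)).2 χ
        have E1 := (hG' u θ h₁ s₁).2 χ
        have E2 := (hG' u θ h₂ s₂).2 χ
        simp only [map_add, map_sub, LinearMap.add_apply, LinearMap.sub_apply,
          inner_sub_left] at E E1 E2 ⊢
        linarith)
    rw [sub_sub, sub_eq_zero] at p1 p2
    exact ⟨p1, p2⟩
  have hsmul : ∀ (r : ℝ) (h₁ : V) (s₁ : W),
      G₁' u θ (r • h₁) (r • s₁) = r • G₁' u θ h₁ s₁ ∧
      G₂' u θ (r • h₁) (r • s₁) = r • G₂' u θ h₁ s₁ := by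
    intro r h₁ s₁
    obtain ⟨p1, p2⟩ := huniq
      (G₁' u θ (r • h₁) (r • s₁) - r • G₁' u θ h₁ s₁)
      (G₂' u θ (r • h₁) (r • s₁) - r • G₂' u θ h₁ s₁)
      (by
        intro v
        have E := (hG' u θ (r • h₁) (r • s₁)).1 v
        have E1 : r * (b h₁ (G₁ u θ) v + b u (G₁' u θ h₁ s₁) v + ν * ⟪G₁' u θ h₁ s₁, v⟫)
            = r * (Ri * c (G₂' u θ h₁ s₁) v) := by rw [(hG' u θ h₁ s₁).1 v]
        simp only [map_smul, map_sub, LinearMap.smul_apply, LinearMap.sub_apply,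
          inner_sub_left, real_inner_smul_left, smul_eq_mul] at E E1 ⊢
        linarith
        )
      (by
        intro χ
        have E := (hG' u θ (r • h₁) (r • s₁)).2 χ
        have E1 : r * (bs h₁ (G₂ u θ) χ + bs u (G₂' u θ h₁ s₁) χ + κ * ⟪G₂' u θ h₁ s₁, χ⟫)
            = r * 0 := by rw [(hG' u θ h₁ s₁).2 χ]
        simp only [map_smul, map_sub, LinearMap.smul_apply, LinearMap.sub_apply,
          inner_sub_left, real_inner_smul_left, smul_eq_mul, mul_zero] at E E1 ⊢
        linarith)
    rw [sub_eq_zero] at p1 p2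
    exact ⟨p1, p2⟩
  let L : V × W →ₗ[ℝ] V × W :=
    { toFun := fun p => (G₁' u θ p.1 p.2, G₂' u θ p.1 p.2)
      map_add' := fun p q => Prod.ext (hadd p.1 p.2 q.1 q.2).1 (hadd p.1 p.2 q.1 q.2).2
      map_smul' := fun r p => Prod.ext (hsmul r p.1 p.2).1 (hsmul r p.1 p.2).2 }
  refine ⟨LinearMap.toContinuousLinearMap L, fun h s => rfl, ?_⟩
  rw [hasFDerivAt_iff_isLittleO_nhds_zero]
  have keybound : ∀ p : V × W,
      ‖(G₁ (u + p.1) (θ + p.2) - G₁ u θ - G₁' u θ p.1 p.2,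
        G₂ (u + p.1) (θ + p.2) - G₂ u θ - G₂' u θ p.1 p.2)‖
      ≤ (Real.sqrt (min ν κ))⁻¹ * (2 * (min ν κ)⁻¹ * (Real.sqrt (min ν κ))⁻¹ * M *
          ((Real.sqrt ν)⁻¹ * (Real.sqrt (min ν κ))⁻¹ * M *
            Real.sqrt (2 * (Ri * CP ^ 2 * ν⁻¹ * κ⁻¹ * ‖γ‖ + ν⁻¹ * ‖f‖) ^ 2
              + 3 * (κ⁻¹ * ‖γ‖) ^ 2)) * (ν + κ)) * ‖p‖ ^ 2 := by
    intro p
    have hb1 := main u p.1 θ p.2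
    have hB2nn : (0:ℝ) ≤ ν * ‖p.1‖ ^ 2 + κ * ‖p.2‖ ^ 2 := by positivity
    rw [Real.sq_sqrt hB2nn] at hb1
    set a₁ := G₁ (u + p.1) (θ + p.2) - G₁ u θ - G₁' u θ p.1 p.2 with ha₁
    set a₂ := G₂ (u + p.1) (θ + p.2) - G₂ u θ - G₂' u θ p.1 p.2 with ha₂
    have c1 := coord_bound_aux hη (norm_nonneg a₁)
      (show min ν κ * ‖a₁‖ ^ 2 ≤ ν * ‖a₁‖ ^ 2 + κ * ‖a₂‖ ^ 2 by
        linarith [mul_le_mul_of_nonneg_right hην (sq_nonneg ‖a₁‖),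
          mul_nonneg hκ.le (sq_nonneg ‖a₂‖)])
    have c2 := coord_bound_aux hη (norm_nonneg a₂)
      (show min ν κ * ‖a₂‖ ^ 2 ≤ ν * ‖a₁‖ ^ 2 + κ * ‖a₂‖ ^ 2 by
        linarith [mul_le_mul_of_nonneg_right hηκ (sq_nonneg ‖a₂‖),
          mul_nonneg hν.le (sq_nonneg ‖a₁‖)])
    have hBp : ν * ‖p.1‖ ^ 2 + κ * ‖p.2‖ ^ 2 ≤ (ν + κ) * ‖p‖ ^ 2 := by
      have q1 : ‖p.1‖ ^ 2 ≤ ‖p‖ ^ 2 := pow_le_pow_left₀ (norm_nonneg _) (norm_fst_le p) 2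
      have q2 : ‖p.2‖ ^ 2 ≤ ‖p‖ ^ 2 := pow_le_pow_left₀ (norm_nonneg _) (norm_snd_le p) 2
      linarith [mul_le_mul_of_nonneg_left q1 hν.le, mul_le_mul_of_nonneg_left q2 hκ.le]
    have step := mul_le_mul_of_nonneg_left hBp
      (show (0:ℝ) ≤ 2 * (min ν κ)⁻¹ * (Real.sqrt (min ν κ))⁻¹ * M *
        ((Real.sqrt ν)⁻¹ * (Real.sqrt (min ν κ))⁻¹ * M *
          Real.sqrt (2 * (Ri * CP ^ 2 * ν⁻¹ * κ⁻¹ * ‖γ‖ + ν⁻¹ * ‖f‖) ^ 2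
            + 3 * (κ⁻¹ * ‖γ‖) ^ 2)) by positivity)
    have hb2 := hb1.trans step
    have c1' := c1.trans (mul_le_mul_of_nonneg_left hb2
      (show (0:ℝ) ≤ (Real.sqrt (min ν κ))⁻¹ by positivity))
    have c2' := c2.trans (mul_le_mul_of_nonneg_left hb2
      (show (0:ℝ) ≤ (Real.sqrt (min ν κ))⁻¹ by positivity))
    rw [Prod.norm_def]
    refine le_trans (max_le c1' c2') (le_of_eq ?_)
    ring
  have hlittle : (fun p : V × W => ‖p‖ ^ 2) =o[nhds (0 : V × W)] (fun p => p) :=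
    Asymptotics.isLittleO_norm_pow_id (by norm_num)
  have hbigO : (fun p : V × W => (G₁ (u + p.1) (θ + p.2) - G₁ u θ - G₁' u θ p.1 p.2,
      G₂ (u + p.1) (θ + p.2) - G₂ u θ - G₂' u θ p.1 p.2)) =O[nhds (0 : V × W)]
      (fun p : V × W => ‖p‖ ^ 2) := by
    refine Asymptotics.isBigO_of_le' (c := (Real.sqrt (min ν κ))⁻¹ *
        (2 * (min ν κ)⁻¹ * (Real.sqrt (min ν κ))⁻¹ * M *
          ((Real.sqrt ν)⁻¹ * (Real.sqrt (min ν κ))⁻¹ * M *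
            Real.sqrt (2 * (Ri * CP ^ 2 * ν⁻¹ * κ⁻¹ * ‖γ‖ + ν⁻¹ * ‖f‖) ^ 2
              + 3 * (κ⁻¹ * ‖γ‖) ^ 2)) * (ν + κ))) (nhds (0 : V × W)) ?_
    intro p
    have hnrm : ‖‖p‖ ^ 2‖ = ‖p‖ ^ 2 := by
      rw [Real.norm_eq_abs, abs_of_nonneg (sq_nonneg _)]
    rw [hnrm]
    exact keybound p
  exact Asymptotics.IsBigO.trans_isLittleO hbigO hlittle
end

section
/- (Componentwise Lipschitz bounds on the derivative.) Assume the small data condition. For all (u,θ), (h,s), (w,z) ∈ V × W, writing e₁ = G₁'(u+h,θ+s;w,z) − G₁'(u,θ;w,z) and e₂ = G₂'(u+h,θ+s;w,z) − G₂'(u,θ;w,z), one has ‖e₂‖_W ≤ 2 M² κ⁻² K₂ ‖w‖_V ‖h‖_V and ‖e₁‖_V ≤ 2 ν⁻¹ η⁻¹ M² (K₁ + 2K₂) ‖w‖_V ‖h‖_V. -/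
open scoped RealInnerProductSpace

lemma aux_norm_le {E : Type*} [NormedAddCommGroup E] {a C : ℝ} (ha : 0 < a) (hC : 0 ≤ C)
    (x : E) (h : a * ‖x‖ ^ 2 ≤ C * ‖x‖) : ‖x‖ ≤ a⁻¹ * C := by
  rcases (norm_nonneg x).eq_or_lt' with h0 | h0
  · rw [h0]; positivity
  · rw [pow_two, ← mul_assoc] at h
    have h2 := le_of_mul_le_mul_right h h0
    calc ‖x‖ = a⁻¹ * (a * ‖x‖) := by field_simp
    _ ≤ a⁻¹ * C := by gcongr

set_option maxHeartbeats 1000000 in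
/-- Componentwise Lipschitz bounds on the derivative `G'`. -/
theorem derivative_componentwise_lipschitz
    {V W : Type*} [NormedAddCommGroup V] [InnerProductSpace ℝ V] [FiniteDimensional ℝ V]
    [NormedAddCommGroup W] [InnerProductSpace ℝ W] [FiniteDimensional ℝ W]
    (ν κ Ri M CP : ℝ) (hν : 0 < ν) (hκ : 0 < κ) (hRi : 0 < Ri) (hM : 0 < M) (hCP : 0 < CP)
    (b : V →ₗ[ℝ] V →ₗ[ℝ] V →ₗ[ℝ] ℝ)
    (hb0 : ∀ u v : V, b u v v = 0)
    (hb : ∀ u v w : V, |b u v w| ≤ M * ‖u‖ * ‖v‖ * ‖w‖)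
    (bs : V →ₗ[ℝ] W →ₗ[ℝ] W →ₗ[ℝ] ℝ)
    (hbs0 : ∀ (u : V) (φ : W), bs u φ φ = 0)
    (hbs : ∀ (u : V) (φ ψ : W), |bs u φ ψ| ≤ M * ‖u‖ * ‖φ‖ * ‖ψ‖)
    (c : W →ₗ[ℝ] V →ₗ[ℝ] ℝ)
    (hc : ∀ (θ : W) (v : V), |c θ v| ≤ CP ^ 2 * ‖θ‖ * ‖v‖)
    (f : V →L[ℝ] ℝ) (γ : W →L[ℝ] ℝ)
    (G₁ : V → W → V) (G₂ : V → W → W)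
    (hG : ∀ (u : V) (θ : W),
      (∀ v : V, b u (G₁ u θ) v + ν * ⟪G₁ u θ, v⟫ = Ri * c (G₂ u θ) v + f v) ∧
      (∀ χ : W, bs u (G₂ u θ) χ + κ * ⟪G₂ u θ, χ⟫ = γ χ))
    (G₁' : V → W → V → W → V) (G₂' : V → W → V → W → W)
    (hG' : ∀ (u : V) (θ : W) (h : V) (s : W),
      (∀ v : V, b h (G₁ u θ) v + b u (G₁' u θ h s) v + ν * ⟪G₁' u θ h s, v⟫
          = Ri * c (G₂' u θ h s) v) ∧
      (∀ χ : W, bs h (G₂ u θ) χ + bs u (G₂' u θ h s) χ + κ * ⟪G₂' u θ h s, χ⟫ = 0))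
    (hsd1 : (min ν κ)⁻¹ ^ 2 * M *
        (2 * (Ri * CP ^ 2 * κ⁻¹ * ‖γ‖ + ‖f‖) + κ⁻¹ ^ 2 * M * ‖γ‖ ^ 2) < 1)
    (hsd2 : (min ν κ)⁻¹ * Ri * CP ^ 2 < 1)
    (u h w : V) (θ s z : W) :
    ‖G₂' (u + h) (θ + s) w z - G₂' u θ w z‖
        ≤ 2 * M ^ 2 * κ⁻¹ ^ 2 * (κ⁻¹ * ‖γ‖) * ‖w‖ * ‖h‖ ∧
    ‖G₁' (u + h) (θ + s) w z - G₁' u θ w z‖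
        ≤ 2 * ν⁻¹ * (min ν κ)⁻¹ * M ^ 2 * ((Ri * CP ^ 2 * ν⁻¹ * κ⁻¹ * ‖γ‖ + ν⁻¹ * ‖f‖) + 2 * (κ⁻¹ * ‖γ‖)) * ‖w‖ * ‖h‖ := by
  have hη : 0 < min ν κ := lt_min hν hκ
  have hνη : ν⁻¹ ≤ (min ν κ)⁻¹ := inv_anti₀ hη (min_le_left _ _)
  have hκη : κ⁻¹ ≤ (min ν κ)⁻¹ := inv_anti₀ hη (min_le_right _ _)
  have hRiCP : Ri * CP ^ 2 < min ν κ :=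
    (div_lt_one hη).mp (by rw [div_eq_inv_mul, ← mul_assoc]; exact hsd2)
  -- a priori bound on G₂
  have hG2 : ∀ (u : V) (θ : W), ‖G₂ u θ‖ ≤ κ⁻¹ * ‖γ‖ := by
    intro u θ
    have e := (hG u θ).2 (G₂ u θ)
    rw [hbs0, real_inner_self_eq_norm_sq, zero_add] at e
    refine aux_norm_le hκ (norm_nonneg _) _ ?_
    rw [e]
    exact (Real.le_norm_self _).trans (γ.le_opNorm _)
  -- a priori bound on G₁
  have hG1 : ∀ (u : V) (θ : W),
      ‖G₁ u θ‖ ≤ ν⁻¹ * (Ri * CP ^ 2 * (κ⁻¹ * ‖γ‖) + ‖f‖) := by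
    intro u θ
    have e := (hG u θ).1 (G₁ u θ)
    rw [hb0, real_inner_self_eq_norm_sq, zero_add] at e
    refine aux_norm_le hν (by positivity) _ ?_
    rw [e]
    have h1 : Ri * c (G₂ u θ) (G₁ u θ) ≤ Ri * (CP ^ 2 * (κ⁻¹ * ‖γ‖) * ‖G₁ u θ‖) := by
      calc Ri * c (G₂ u θ) (G₁ u θ) ≤ Ri * (CP ^ 2 * ‖G₂ u θ‖ * ‖G₁ u θ‖) :=
        mul_le_mul_of_nonneg_left ((le_abs_self _).trans (hc _ _)) hRi.le
      _ ≤ Ri * (CP ^ 2 * (κ⁻¹ * ‖γ‖) * ‖G₁ u θ‖) := by gcongr; exact hG2 u θ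
    have h2 : f (G₁ u θ) ≤ ‖f‖ * ‖G₁ u θ‖ := (Real.le_norm_self _).trans (f.le_opNorm _)
    calc Ri * c (G₂ u θ) (G₁ u θ) + f (G₁ u θ)
        ≤ Ri * (CP ^ 2 * (κ⁻¹ * ‖γ‖) * ‖G₁ u θ‖) + ‖f‖ * ‖G₁ u θ‖ := add_le_add h1 h2
    _ = (Ri * CP ^ 2 * (κ⁻¹ * ‖γ‖) + ‖f‖) * ‖G₁ u θ‖ := by ring
  -- bound on G₂'
  have hg2 : ∀ (u : V) (θ : W) (h : V) (s : W),
      ‖G₂' u θ h s‖ ≤ κ⁻¹ * (M * ‖h‖ * (κ⁻¹ * ‖γ‖)) := by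
    intro u θ h s
    have e := (hG' u θ h s).2 (G₂' u θ h s)
    rw [hbs0, real_inner_self_eq_norm_sq] at e
    refine aux_norm_le hκ (by positivity) _ ?_
    have e2 : κ * ‖G₂' u θ h s‖ ^ 2 = -(bs h (G₂ u θ) (G₂' u θ h s)) := by linarith
    rw [e2]
    calc -(bs h (G₂ u θ) (G₂' u θ h s)) ≤ |bs h (G₂ u θ) (G₂' u θ h s)| := neg_le_abs _
    _ ≤ M * ‖h‖ * ‖G₂ u θ‖ * ‖G₂' u θ h s‖ := hbs _ _ _
    _ ≤ M * ‖h‖ * (κ⁻¹ * ‖γ‖) * ‖G₂' u θ h s‖ := by gcongr; exact hG2 u θ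
  -- bound on G₁'
  have hg1 : ∀ (u : V) (θ : W) (h : V) (s : W),
      ‖G₁' u θ h s‖ ≤ ν⁻¹ * (M * ‖h‖ * (ν⁻¹ * (Ri * CP ^ 2 * (κ⁻¹ * ‖γ‖) + ‖f‖))
        + Ri * CP ^ 2 * (κ⁻¹ * (M * ‖h‖ * (κ⁻¹ * ‖γ‖)))) := by
    intro u θ h s
    have e := (hG' u θ h s).1 (G₁' u θ h s)
    rw [hb0, real_inner_self_eq_norm_sq] at e
    refine aux_norm_le hν (by positivity) _ ?_
    have e2 : ν * ‖G₁' u θ h s‖ ^ 2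
        = Ri * c (G₂' u θ h s) (G₁' u θ h s) - b h (G₁ u θ) (G₁' u θ h s) := by linarith
    rw [e2]
    have t1 : -(b h (G₁ u θ) (G₁' u θ h s))
        ≤ M * ‖h‖ * (ν⁻¹ * (Ri * CP ^ 2 * (κ⁻¹ * ‖γ‖) + ‖f‖)) * ‖G₁' u θ h s‖ := by
      calc -(b h (G₁ u θ) (G₁' u θ h s)) ≤ |b h (G₁ u θ) (G₁' u θ h s)| := neg_le_abs _
      _ ≤ M * ‖h‖ * ‖G₁ u θ‖ * ‖G₁' u θ h s‖ := hb _ _ _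
      _ ≤ _ := by gcongr; exact hG1 u θ
    have t2 : Ri * c (G₂' u θ h s) (G₁' u θ h s)
        ≤ Ri * CP ^ 2 * (κ⁻¹ * (M * ‖h‖ * (κ⁻¹ * ‖γ‖))) * ‖G₁' u θ h s‖ := by
      calc Ri * c (G₂' u θ h s) (G₁' u θ h s)
          ≤ Ri * (CP ^ 2 * ‖G₂' u θ h s‖ * ‖G₁' u θ h s‖) :=
        mul_le_mul_of_nonneg_left ((le_abs_self _).trans (hc _ _)) hRi.le
      _ ≤ Ri * (CP ^ 2 * (κ⁻¹ * (M * ‖h‖ * (κ⁻¹ * ‖γ‖))) * ‖G₁' u θ h s‖) := by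
          gcongr; exact hg2 u θ h s
      _ = _ := by ring
    linarith [t1, t2]
  -- Lipschitz bound for G₂
  have hD2 : ‖G₂ (u + h) (θ + s) - G₂ u θ‖ ≤ κ⁻¹ * (M * ‖h‖ * (κ⁻¹ * ‖γ‖)) := by
    refine aux_norm_le hκ (by positivity) _ ?_
    have e1 := (hG (u + h) (θ + s)).2 (G₂ (u + h) (θ + s) - G₂ u θ)
    have e2 := (hG u θ).2 (G₂ (u + h) (θ + s) - G₂ u θ)
    simp only [map_add, LinearMap.add_apply] at e1
    have ez := hbs0 u (G₂ (u + h) (θ + s) - G₂ u θ)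
    rw [map_sub (bs u), LinearMap.sub_apply] at ez
    have key : κ * ‖G₂ (u + h) (θ + s) - G₂ u θ‖ ^ 2
        = -(bs h (G₂ (u + h) (θ + s)) (G₂ (u + h) (θ + s) - G₂ u θ)) := by
      rw [← real_inner_self_eq_norm_sq, inner_sub_left]
      linear_combination e1 - e2 - ez
    rw [key]
    calc -(bs h (G₂ (u + h) (θ + s)) (G₂ (u + h) (θ + s) - G₂ u θ))
        ≤ |bs h (G₂ (u + h) (θ + s)) (G₂ (u + h) (θ + s) - G₂ u θ)| := neg_le_abs _
    _ ≤ M * ‖h‖ * ‖G₂ (u + h) (θ + s)‖ * ‖G₂ (u + h) (θ + s) - G₂ u θ‖ := hbs _ _ _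
    _ ≤ M * ‖h‖ * (κ⁻¹ * ‖γ‖) * ‖G₂ (u + h) (θ + s) - G₂ u θ‖ := by gcongr; exact hG2 _ _
  -- Lipschitz bound for G₁
  have hD1 : ‖G₁ (u + h) (θ + s) - G₁ u θ‖
      ≤ ν⁻¹ * (M * ‖h‖ * (ν⁻¹ * (Ri * CP ^ 2 * (κ⁻¹ * ‖γ‖) + ‖f‖))
        + Ri * CP ^ 2 * (κ⁻¹ * (M * ‖h‖ * (κ⁻¹ * ‖γ‖)))) := by
    refine aux_norm_le hν (by positivity) _ ?_
    have e1 := (hG (u + h) (θ + s)).1 (G₁ (u + h) (θ + s) - G₁ u θ)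
    have e2 := (hG u θ).1 (G₁ (u + h) (θ + s) - G₁ u θ)
    simp only [map_add, LinearMap.add_apply] at e1
    have ez := hb0 u (G₁ (u + h) (θ + s) - G₁ u θ)
    rw [map_sub (b u), LinearMap.sub_apply] at ez
    have hcsub : c (G₂ (u + h) (θ + s)) (G₁ (u + h) (θ + s) - G₁ u θ)
        - c (G₂ u θ) (G₁ (u + h) (θ + s) - G₁ u θ)
        = c (G₂ (u + h) (θ + s) - G₂ u θ) (G₁ (u + h) (θ + s) - G₁ u θ) := by
      rw [c.map_sub, LinearMap.sub_apply]
    have key : ν * ‖G₁ (u + h) (θ + s) - G₁ u θ‖ ^ 2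
        = Ri * c (G₂ (u + h) (θ + s) - G₂ u θ) (G₁ (u + h) (θ + s) - G₁ u θ)
          - b h (G₁ (u + h) (θ + s)) (G₁ (u + h) (θ + s) - G₁ u θ) := by
      rw [← real_inner_self_eq_norm_sq, inner_sub_left]
      linear_combination e1 - e2 - ez + Ri * hcsub
    rw [key]
    have t1 : Ri * c (G₂ (u + h) (θ + s) - G₂ u θ) (G₁ (u + h) (θ + s) - G₁ u θ)
        ≤ Ri * CP ^ 2 * (κ⁻¹ * (M * ‖h‖ * (κ⁻¹ * ‖γ‖))) * ‖G₁ (u + h) (θ + s) - G₁ u θ‖ := by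
      calc Ri * c (G₂ (u + h) (θ + s) - G₂ u θ) (G₁ (u + h) (θ + s) - G₁ u θ)
          ≤ Ri * (CP ^ 2 * ‖G₂ (u + h) (θ + s) - G₂ u θ‖ * ‖G₁ (u + h) (θ + s) - G₁ u θ‖) :=
        mul_le_mul_of_nonneg_left ((le_abs_self _).trans (hc _ _)) hRi.le
      _ ≤ Ri * (CP ^ 2 * (κ⁻¹ * (M * ‖h‖ * (κ⁻¹ * ‖γ‖))) * ‖G₁ (u + h) (θ + s) - G₁ u θ‖) := by
          gcongr
      _ = _ := by ring
    have t2 : -(b h (G₁ (u + h) (θ + s)) (G₁ (u + h) (θ + s) - G₁ u θ))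
        ≤ M * ‖h‖ * (ν⁻¹ * (Ri * CP ^ 2 * (κ⁻¹ * ‖γ‖) + ‖f‖)) * ‖G₁ (u + h) (θ + s) - G₁ u θ‖ := by
      calc -(b h (G₁ (u + h) (θ + s)) (G₁ (u + h) (θ + s) - G₁ u θ))
          ≤ |b h (G₁ (u + h) (θ + s)) (G₁ (u + h) (θ + s) - G₁ u θ)| := neg_le_abs _
      _ ≤ M * ‖h‖ * ‖G₁ (u + h) (θ + s)‖ * ‖G₁ (u + h) (θ + s) - G₁ u θ‖ := hb _ _ _
      _ ≤ _ := by gcongr; exact hG1 _ _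
    linarith [t1, t2]
  -- the e₂ estimate
  have hE2 : ‖G₂' (u + h) (θ + s) w z - G₂' u θ w z‖
      ≤ κ⁻¹ * (M * ‖w‖ * (κ⁻¹ * (M * ‖h‖ * (κ⁻¹ * ‖γ‖)))
        + M * ‖h‖ * (κ⁻¹ * (M * ‖w‖ * (κ⁻¹ * ‖γ‖)))) := by
    refine aux_norm_le hκ (by positivity) _ ?_
    have e1 := (hG' (u + h) (θ + s) w z).2 (G₂' (u + h) (θ + s) w z - G₂' u θ w z)
    have e2 := (hG' u θ w z).2 (G₂' (u + h) (θ + s) w z - G₂' u θ w z)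
    simp only [map_add, LinearMap.add_apply] at e1
    have ez := hbs0 u (G₂' (u + h) (θ + s) w z - G₂' u θ w z)
    rw [map_sub (bs u), LinearMap.sub_apply] at ez
    have hbssub : bs w (G₂ (u + h) (θ + s)) (G₂' (u + h) (θ + s) w z - G₂' u θ w z)
        - bs w (G₂ u θ) (G₂' (u + h) (θ + s) w z - G₂' u θ w z)
        = bs w (G₂ (u + h) (θ + s) - G₂ u θ) (G₂' (u + h) (θ + s) w z - G₂' u θ w z) := by
      rw [(bs w).map_sub, LinearMap.sub_apply]
    have key : κ * ‖G₂' (u + h) (θ + s) w z - G₂' u θ w z‖ ^ 2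
        = -(bs w (G₂ (u + h) (θ + s) - G₂ u θ) (G₂' (u + h) (θ + s) w z - G₂' u θ w z))
          - bs h (G₂' (u + h) (θ + s) w z) (G₂' (u + h) (θ + s) w z - G₂' u θ w z) := by
      rw [← real_inner_self_eq_norm_sq, inner_sub_left]
      linear_combination e1 - e2 - ez - hbssub
    rw [key]
    have t1 : -(bs w (G₂ (u + h) (θ + s) - G₂ u θ) (G₂' (u + h) (θ + s) w z - G₂' u θ w z))
        ≤ M * ‖w‖ * (κ⁻¹ * (M * ‖h‖ * (κ⁻¹ * ‖γ‖))) * ‖G₂' (u + h) (θ + s) w z - G₂' u θ w z‖ := by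
      calc -(bs w (G₂ (u + h) (θ + s) - G₂ u θ) (G₂' (u + h) (θ + s) w z - G₂' u θ w z))
          ≤ |bs w (G₂ (u + h) (θ + s) - G₂ u θ) (G₂' (u + h) (θ + s) w z - G₂' u θ w z)| :=
        neg_le_abs _
      _ ≤ M * ‖w‖ * ‖G₂ (u + h) (θ + s) - G₂ u θ‖ * ‖G₂' (u + h) (θ + s) w z - G₂' u θ w z‖ :=
        hbs _ _ _
      _ ≤ _ := by gcongr
    have t2 : -(bs h (G₂' (u + h) (θ + s) w z) (G₂' (u + h) (θ + s) w z - G₂' u θ w z))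
        ≤ M * ‖h‖ * (κ⁻¹ * (M * ‖w‖ * (κ⁻¹ * ‖γ‖))) * ‖G₂' (u + h) (θ + s) w z - G₂' u θ w z‖ := by
      calc -(bs h (G₂' (u + h) (θ + s) w z) (G₂' (u + h) (θ + s) w z - G₂' u θ w z))
          ≤ |bs h (G₂' (u + h) (θ + s) w z) (G₂' (u + h) (θ + s) w z - G₂' u θ w z)| := neg_le_abs _
      _ ≤ M * ‖h‖ * ‖G₂' (u + h) (θ + s) w z‖ * ‖G₂' (u + h) (θ + s) w z - G₂' u θ w z‖ :=
        hbs _ _ _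
      _ ≤ _ := by gcongr; exact hg2 _ _ _ _
    linarith [t1, t2]
  -- first conclusion
  have R2 : ‖G₂' (u + h) (θ + s) w z - G₂' u θ w z‖
      ≤ 2 * M ^ 2 * κ⁻¹ ^ 2 * (κ⁻¹ * ‖γ‖) * ‖w‖ * ‖h‖ := by
    refine hE2.trans (le_of_eq ?_)
    ring
  refine ⟨R2, ?_⟩
  -- the e₁ estimate
  have hE1 : ‖G₁' (u + h) (θ + s) w z - G₁' u θ w z‖
      ≤ ν⁻¹ * (Ri * CP ^ 2 * ‖G₂' (u + h) (θ + s) w z - G₂' u θ w z‖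
        + M * ‖w‖ * ‖G₁ (u + h) (θ + s) - G₁ u θ‖
        + M * ‖h‖ * ‖G₁' (u + h) (θ + s) w z‖) := by
    refine aux_norm_le hν (by positivity) _ ?_
    have e1 := (hG' (u + h) (θ + s) w z).1 (G₁' (u + h) (θ + s) w z - G₁' u θ w z)
    have e2 := (hG' u θ w z).1 (G₁' (u + h) (θ + s) w z - G₁' u θ w z)
    simp only [map_add, LinearMap.add_apply] at e1
    have ez := hb0 u (G₁' (u + h) (θ + s) w z - G₁' u θ w z)
    rw [map_sub (b u), LinearMap.sub_apply] at ez
    have hbsub : b w (G₁ (u + h) (θ + s)) (G₁' (u + h) (θ + s) w z - G₁' u θ w z)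
        - b w (G₁ u θ) (G₁' (u + h) (θ + s) w z - G₁' u θ w z)
        = b w (G₁ (u + h) (θ + s) - G₁ u θ) (G₁' (u + h) (θ + s) w z - G₁' u θ w z) := by
      rw [(b w).map_sub, LinearMap.sub_apply]
    have hcsub : c (G₂' (u + h) (θ + s) w z) (G₁' (u + h) (θ + s) w z - G₁' u θ w z)
        - c (G₂' u θ w z) (G₁' (u + h) (θ + s) w z - G₁' u θ w z)
        = c (G₂' (u + h) (θ + s) w z - G₂' u θ w z) (G₁' (u + h) (θ + s) w z - G₁' u θ w z) := by
      rw [c.map_sub, LinearMap.sub_apply]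
    have key : ν * ‖G₁' (u + h) (θ + s) w z - G₁' u θ w z‖ ^ 2
        = Ri * c (G₂' (u + h) (θ + s) w z - G₂' u θ w z) (G₁' (u + h) (θ + s) w z - G₁' u θ w z)
          - b w (G₁ (u + h) (θ + s) - G₁ u θ) (G₁' (u + h) (θ + s) w z - G₁' u θ w z)
          - b h (G₁' (u + h) (θ + s) w z) (G₁' (u + h) (θ + s) w z - G₁' u θ w z) := by
      rw [← real_inner_self_eq_norm_sq, inner_sub_left]
      linear_combination e1 - e2 - ez - hbsub + Ri * hcsub
    rw [key]
    have t1 : Ri * c (G₂' (u + h) (θ + s) w z - G₂' u θ w z)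
          (G₁' (u + h) (θ + s) w z - G₁' u θ w z)
        ≤ Ri * CP ^ 2 * ‖G₂' (u + h) (θ + s) w z - G₂' u θ w z‖
          * ‖G₁' (u + h) (θ + s) w z - G₁' u θ w z‖ := by
      calc Ri * c (G₂' (u + h) (θ + s) w z - G₂' u θ w z)
            (G₁' (u + h) (θ + s) w z - G₁' u θ w z)
          ≤ Ri * (CP ^ 2 * ‖G₂' (u + h) (θ + s) w z - G₂' u θ w z‖
            * ‖G₁' (u + h) (θ + s) w z - G₁' u θ w z‖) :=
        mul_le_mul_of_nonneg_left ((le_abs_self _).trans (hc _ _)) hRi.le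
      _ = _ := by ring
    have t2 : -(b w (G₁ (u + h) (θ + s) - G₁ u θ) (G₁' (u + h) (θ + s) w z - G₁' u θ w z))
        ≤ M * ‖w‖ * ‖G₁ (u + h) (θ + s) - G₁ u θ‖
          * ‖G₁' (u + h) (θ + s) w z - G₁' u θ w z‖ :=
      (neg_le_abs _).trans (hb _ _ _)
    have t3 : -(b h (G₁' (u + h) (θ + s) w z) (G₁' (u + h) (θ + s) w z - G₁' u θ w z))
        ≤ M * ‖h‖ * ‖G₁' (u + h) (θ + s) w z‖ * ‖G₁' (u + h) (θ + s) w z - G₁' u θ w z‖ :=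
      (neg_le_abs _).trans (hb _ _ _)
    linarith [t1, t2, t3]
  -- scalar helper
  have hRν : Ri * CP ^ 2 ≤ ν := hRiCP.le.trans (min_le_left _ _)
  have hRκ : Ri * CP ^ 2 ≤ κ := hRiCP.le.trans (min_le_right _ _)
  have q2 : ν⁻¹ * (Ri * CP ^ 2) ≤ 1 := by
    calc ν⁻¹ * (Ri * CP ^ 2) ≤ ν⁻¹ * ν := by gcongr
    _ = 1 := inv_mul_cancel₀ hν.ne'
  have scalar : ∀ r : ℝ, 0 ≤ r →
      ν⁻¹ * (M * r * (ν⁻¹ * (Ri * CP ^ 2 * (κ⁻¹ * ‖γ‖) + ‖f‖))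
        + Ri * CP ^ 2 * (κ⁻¹ * (M * r * (κ⁻¹ * ‖γ‖))))
      ≤ (min ν κ)⁻¹ * M * ((Ri * CP ^ 2 * ν⁻¹ * κ⁻¹ * ‖γ‖ + ν⁻¹ * ‖f‖) + κ⁻¹ * ‖γ‖) * r := by
    intro r hr
    have t1 : ν⁻¹ * (M * r * (ν⁻¹ * (Ri * CP ^ 2 * (κ⁻¹ * ‖γ‖) + ‖f‖)))
        ≤ (min ν κ)⁻¹ * (M * r * (ν⁻¹ * (Ri * CP ^ 2 * (κ⁻¹ * ‖γ‖) + ‖f‖))) := by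
      have : (0:ℝ) ≤ M * r * (ν⁻¹ * (Ri * CP ^ 2 * (κ⁻¹ * ‖γ‖) + ‖f‖)) := by positivity
      exact mul_le_mul_of_nonneg_right hνη this
    have t2 : ν⁻¹ * (Ri * CP ^ 2 * (κ⁻¹ * (M * r * (κ⁻¹ * ‖γ‖))))
        ≤ (min ν κ)⁻¹ * (M * r * (κ⁻¹ * ‖γ‖)) := by
      calc ν⁻¹ * (Ri * CP ^ 2 * (κ⁻¹ * (M * r * (κ⁻¹ * ‖γ‖))))
          = (ν⁻¹ * (Ri * CP ^ 2)) * κ⁻¹ * (M * r * (κ⁻¹ * ‖γ‖)) := by ring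
      _ ≤ 1 * (min ν κ)⁻¹ * (M * r * (κ⁻¹ * ‖γ‖)) := by
          refine mul_le_mul (mul_le_mul q2 hκη (by positivity) zero_le_one) le_rfl
            (by positivity) (by positivity)
      _ = (min ν κ)⁻¹ * (M * r * (κ⁻¹ * ‖γ‖)) := by ring
    calc ν⁻¹ * (M * r * (ν⁻¹ * (Ri * CP ^ 2 * (κ⁻¹ * ‖γ‖) + ‖f‖))
          + Ri * CP ^ 2 * (κ⁻¹ * (M * r * (κ⁻¹ * ‖γ‖))))
        = ν⁻¹ * (M * r * (ν⁻¹ * (Ri * CP ^ 2 * (κ⁻¹ * ‖γ‖) + ‖f‖)))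
          + ν⁻¹ * (Ri * CP ^ 2 * (κ⁻¹ * (M * r * (κ⁻¹ * ‖γ‖)))) := by ring
    _ ≤ (min ν κ)⁻¹ * (M * r * (ν⁻¹ * (Ri * CP ^ 2 * (κ⁻¹ * ‖γ‖) + ‖f‖)))
          + (min ν κ)⁻¹ * (M * r * (κ⁻¹ * ‖γ‖)) := add_le_add t1 t2
    _ = (min ν κ)⁻¹ * M * ((Ri * CP ^ 2 * ν⁻¹ * κ⁻¹ * ‖γ‖ + ν⁻¹ * ‖f‖) + κ⁻¹ * ‖γ‖) * r := by
          ring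
  have hD1' : ‖G₁ (u + h) (θ + s) - G₁ u θ‖
      ≤ (min ν κ)⁻¹ * M * ((Ri * CP ^ 2 * ν⁻¹ * κ⁻¹ * ‖γ‖ + ν⁻¹ * ‖f‖) + κ⁻¹ * ‖γ‖) * ‖h‖ :=
    hD1.trans (scalar ‖h‖ (norm_nonneg _))
  have hg1' : ‖G₁' (u + h) (θ + s) w z‖
      ≤ (min ν κ)⁻¹ * M * ((Ri * CP ^ 2 * ν⁻¹ * κ⁻¹ * ‖γ‖ + ν⁻¹ * ‖f‖) + κ⁻¹ * ‖γ‖) * ‖w‖ :=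
    (hg1 (u + h) (θ + s) w z).trans (scalar ‖w‖ (norm_nonneg _))
  -- combine
  have q1 : Ri * CP ^ 2 * κ⁻¹ ^ 2 ≤ (min ν κ)⁻¹ := by
    calc Ri * CP ^ 2 * κ⁻¹ ^ 2 ≤ κ * κ⁻¹ ^ 2 := by gcongr
    _ = κ⁻¹ := by rw [pow_two, ← mul_assoc, mul_inv_cancel₀ hκ.ne', one_mul]
    _ ≤ (min ν κ)⁻¹ := hκη
  have P1 : Ri * CP ^ 2 * ‖G₂' (u + h) (θ + s) w z - G₂' u θ w z‖
      ≤ 2 * (min ν κ)⁻¹ * M ^ 2 * (κ⁻¹ * ‖γ‖) * ‖w‖ * ‖h‖ := by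
    calc Ri * CP ^ 2 * ‖G₂' (u + h) (θ + s) w z - G₂' u θ w z‖
        ≤ Ri * CP ^ 2 * (2 * M ^ 2 * κ⁻¹ ^ 2 * (κ⁻¹ * ‖γ‖) * ‖w‖ * ‖h‖) := by
          gcongr
    _ = (Ri * CP ^ 2 * κ⁻¹ ^ 2) * (2 * M ^ 2 * (κ⁻¹ * ‖γ‖) * ‖w‖ * ‖h‖) := by ring
    _ ≤ (min ν κ)⁻¹ * (2 * M ^ 2 * (κ⁻¹ * ‖γ‖) * ‖w‖ * ‖h‖) :=
          mul_le_mul_of_nonneg_right q1 (by positivity)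
    _ = 2 * (min ν κ)⁻¹ * M ^ 2 * (κ⁻¹ * ‖γ‖) * ‖w‖ * ‖h‖ := by ring
  have P2 : M * ‖w‖ * ‖G₁ (u + h) (θ + s) - G₁ u θ‖
      ≤ (min ν κ)⁻¹ * M ^ 2 * ((Ri * CP ^ 2 * ν⁻¹ * κ⁻¹ * ‖γ‖ + ν⁻¹ * ‖f‖) + κ⁻¹ * ‖γ‖)
        * ‖w‖ * ‖h‖ := by
    calc M * ‖w‖ * ‖G₁ (u + h) (θ + s) - G₁ u θ‖
        ≤ M * ‖w‖ * ((min ν κ)⁻¹ * M * ((Ri * CP ^ 2 * ν⁻¹ * κ⁻¹ * ‖γ‖ + ν⁻¹ * ‖f‖)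
            + κ⁻¹ * ‖γ‖) * ‖h‖) := by gcongr
    _ = (min ν κ)⁻¹ * M ^ 2 * ((Ri * CP ^ 2 * ν⁻¹ * κ⁻¹ * ‖γ‖ + ν⁻¹ * ‖f‖) + κ⁻¹ * ‖γ‖)
          * ‖w‖ * ‖h‖ := by ring
  have P3 : M * ‖h‖ * ‖G₁' (u + h) (θ + s) w z‖
      ≤ (min ν κ)⁻¹ * M ^ 2 * ((Ri * CP ^ 2 * ν⁻¹ * κ⁻¹ * ‖γ‖ + ν⁻¹ * ‖f‖) + κ⁻¹ * ‖γ‖)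
        * ‖w‖ * ‖h‖ := by
    calc M * ‖h‖ * ‖G₁' (u + h) (θ + s) w z‖
        ≤ M * ‖h‖ * ((min ν κ)⁻¹ * M * ((Ri * CP ^ 2 * ν⁻¹ * κ⁻¹ * ‖γ‖ + ν⁻¹ * ‖f‖)
            + κ⁻¹ * ‖γ‖) * ‖w‖) := by gcongr
    _ = (min ν κ)⁻¹ * M ^ 2 * ((Ri * CP ^ 2 * ν⁻¹ * κ⁻¹ * ‖γ‖ + ν⁻¹ * ‖f‖) + κ⁻¹ * ‖γ‖)
          * ‖w‖ * ‖h‖ := by ring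
  calc ‖G₁' (u + h) (θ + s) w z - G₁' u θ w z‖
      ≤ ν⁻¹ * (Ri * CP ^ 2 * ‖G₂' (u + h) (θ + s) w z - G₂' u θ w z‖
        + M * ‖w‖ * ‖G₁ (u + h) (θ + s) - G₁ u θ‖
        + M * ‖h‖ * ‖G₁' (u + h) (θ + s) w z‖) := hE1
  _ ≤ ν⁻¹ * (2 * (min ν κ)⁻¹ * M ^ 2 * (κ⁻¹ * ‖γ‖) * ‖w‖ * ‖h‖
        + (min ν κ)⁻¹ * M ^ 2 * ((Ri * CP ^ 2 * ν⁻¹ * κ⁻¹ * ‖γ‖ + ν⁻¹ * ‖f‖) + κ⁻¹ * ‖γ‖)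
          * ‖w‖ * ‖h‖
        + (min ν κ)⁻¹ * M ^ 2 * ((Ri * CP ^ 2 * ν⁻¹ * κ⁻¹ * ‖γ‖ + ν⁻¹ * ‖f‖) + κ⁻¹ * ‖γ‖)
          * ‖w‖ * ‖h‖) :=
      mul_le_mul_of_nonneg_left (add_le_add (add_le_add P1 P2) P3) (by positivity)
  _ = 2 * ν⁻¹ * (min ν κ)⁻¹ * M ^ 2 * ((Ri * CP ^ 2 * ν⁻¹ * κ⁻¹ * ‖γ‖ + ν⁻¹ * ‖f‖)
        + 2 * (κ⁻¹ * ‖γ‖)) * ‖w‖ * ‖h‖ := by ring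
end

section
/- (Lemma 3.5, Lipschitz continuity of G'.) Assume the small data condition. Then for all (u,θ), (h,s), (w,z) ∈ V × W, ‖G'(u+h, θ+s; w, z) − G'(u,θ; w, z)‖_B ≤ Ĉ_G ‖(h,s)‖_B ‖(w,z)‖_B, where Ĉ_G = 2 ν⁻¹ η^{-3/2} M² (2K₁² + 9K₂²)^{1/2}. -/
set_option maxHeartbeats 1000000

open scoped RealInnerProductSpace


lemma energy_bound' (a C x : ℝ) (ha : 0 < a) (hx : 0 ≤ x) (hC : 0 ≤ C)
    (h : a * x ^ 2 ≤ C * x) : x ≤ a⁻¹ * C := by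
  rcases eq_or_lt_of_le hx with h0 | h0
  · rw [← h0]; positivity
  · have h1 : a * x ≤ C := le_of_mul_le_mul_right (by nlinarith) h0
    calc x = a⁻¹ * (a * x) := by field_simp
    _ ≤ a⁻¹ * C := by gcongr

lemma gen2_bound {V W : Type*} [NormedAddCommGroup V] [InnerProductSpace ℝ V]
    [NormedAddCommGroup W] [InnerProductSpace ℝ W]
    (κ M : ℝ) (hκ : 0 < κ) (hM : 0 < M)
    (bs : V →ₗ[ℝ] W →ₗ[ℝ] W →ₗ[ℝ] ℝ)
    (hbs0 : ∀ (u : V) (φ : W), bs u φ φ = 0)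
    (hbs : ∀ (u : V) (φ ψ : W), |bs u φ ψ| ≤ M * ‖u‖ * ‖φ‖ * ‖ψ‖)
    (a₁ a₂ u' : V) (p₁ p₂ q : W)
    (heq : ∀ χ : W, bs a₁ p₁ χ + bs a₂ p₂ χ + bs u' q χ + κ * ⟪q, χ⟫ = 0) :
    ‖q‖ ≤ κ⁻¹ * (M * ‖a₁‖ * ‖p₁‖ + M * ‖a₂‖ * ‖p₂‖) := by
  have hq := heq q
  rw [hbs0, real_inner_self_eq_norm_sq] at hq
  have B1 : -(bs a₁ p₁ q) ≤ M * ‖a₁‖ * ‖p₁‖ * ‖q‖ := (neg_le_abs _).trans (hbs _ _ _)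
  have B2 : -(bs a₂ p₂ q) ≤ M * ‖a₂‖ * ‖p₂‖ * ‖q‖ := (neg_le_abs _).trans (hbs _ _ _)
  refine energy_bound' κ _ _ hκ (norm_nonneg _) (by positivity) ?_
  nlinarith [hq, B1, B2]

lemma gen1_bound {V W : Type*} [NormedAddCommGroup V] [InnerProductSpace ℝ V]
    [NormedAddCommGroup W] [InnerProductSpace ℝ W]
    (ν Ri M CP : ℝ) (hν : 0 < ν) (hRi : 0 < Ri) (hM : 0 < M) (hCP : 0 < CP)
    (b : V →ₗ[ℝ] V →ₗ[ℝ] V →ₗ[ℝ] ℝ)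
    (hb0 : ∀ u v : V, b u v v = 0)
    (hb : ∀ u v w : V, |b u v w| ≤ M * ‖u‖ * ‖v‖ * ‖w‖)
    (c : W →ₗ[ℝ] V →ₗ[ℝ] ℝ)
    (hc : ∀ (θ : W) (v : V), |c θ v| ≤ CP ^ 2 * ‖θ‖ * ‖v‖)
    (a₁ a₂ u' p₁ p₂ q : V) (g : W)
    (heq : ∀ v : V, b a₁ p₁ v + b a₂ p₂ v + b u' q v + ν * ⟪q, v⟫ = Ri * c g v) :
    ‖q‖ ≤ ν⁻¹ * (M * ‖a₁‖ * ‖p₁‖ + M * ‖a₂‖ * ‖p₂‖ + Ri * (CP ^ 2 * ‖g‖)) := by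
  have hq := heq q
  rw [hb0, real_inner_self_eq_norm_sq] at hq
  have B1 : -(b a₁ p₁ q) ≤ M * ‖a₁‖ * ‖p₁‖ * ‖q‖ := (neg_le_abs _).trans (hb _ _ _)
  have B2 : -(b a₂ p₂ q) ≤ M * ‖a₂‖ * ‖p₂‖ * ‖q‖ := (neg_le_abs _).trans (hb _ _ _)
  have B3 : Ri * c g q ≤ Ri * (CP ^ 2 * ‖g‖ * ‖q‖) :=
    mul_le_mul_of_nonneg_left ((le_abs_self _).trans (hc _ _)) hRi.le
  refine energy_bound' ν _ _ hν (norm_nonneg _) (by positivity) ?_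
  nlinarith [hq, B1, B2, B3]


lemma final_arith (ν κ M K₁ K₂ X Y S T d₁ d₂ : ℝ)
    (hν : 0 < ν) (hκ : 0 < κ) (hM : 0 < M)
    (hK₁ : 0 ≤ K₁) (hK₂ : 0 ≤ K₂) (hX : 0 ≤ X) (hY : 0 ≤ Y)
    (hd₁ : 0 ≤ d₁) (hd₂ : 0 ≤ d₂)
    (hS : ν * X ^ 2 ≤ S) (hT : ν * Y ^ 2 ≤ T)
    (h1 : d₁ ≤ ν⁻¹ * (2 * ν⁻¹ * M ^ 2 * (K₁ + K₂) * (X * Y) + 2 * κ⁻¹ * M ^ 2 * K₂ * (X * Y)))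
    (h2 : d₂ ≤ κ⁻¹ * (2 * κ⁻¹ * M ^ 2 * K₂ * (X * Y))) :
    Real.sqrt (ν * d₁ ^ 2 + κ * d₂ ^ 2)
      ≤ 2 * ν⁻¹ * (min ν κ)⁻¹ * (Real.sqrt (min ν κ))⁻¹ * M ^ 2
          * Real.sqrt (2 * K₁ ^ 2 + 9 * K₂ ^ 2) * Real.sqrt S * Real.sqrt T := by
  have hη : 0 < min ν κ := lt_min hν hκ
  have hS0 : 0 ≤ S := le_trans (by positivity) hS
  have hT0 : 0 ≤ T := le_trans (by positivity) hT
  have ha : ν⁻¹ ≤ (min ν κ)⁻¹ := inv_anti₀ hη (min_le_left ν κ)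
  have hbk : κ⁻¹ ≤ (min ν κ)⁻¹ := inv_anti₀ hη (min_le_right ν κ)
  set e := (min ν κ)⁻¹ with hedef
  have he : 0 < e := inv_pos.mpr hη
  set C := 2 * ν⁻¹ * e * (Real.sqrt (min ν κ))⁻¹ * M ^ 2
      * Real.sqrt (2 * K₁ ^ 2 + 9 * K₂ ^ 2) * Real.sqrt S * Real.sqrt T with hCdef
  have hC : 0 ≤ C := by positivity
  rw [← Real.sqrt_sq hC]
  apply Real.sqrt_le_sqrt
  have hCsq : C ^ 2 = 4 * ν⁻¹ ^ 2 * e ^ 2 * e * M ^ 4 * (2 * K₁ ^ 2 + 9 * K₂ ^ 2) * S * T := by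
    have e1 : ((Real.sqrt (min ν κ))⁻¹) ^ 2 = e := by
      rw [inv_pow, Real.sq_sqrt hη.le]
    have e2 : Real.sqrt (2 * K₁ ^ 2 + 9 * K₂ ^ 2) ^ 2 = 2 * K₁ ^ 2 + 9 * K₂ ^ 2 :=
      Real.sq_sqrt (by positivity)
    have e3 : Real.sqrt S ^ 2 = S := Real.sq_sqrt hS0
    have e4 : Real.sqrt T ^ 2 = T := Real.sq_sqrt hT0
    have expand : C ^ 2 = 4 * ν⁻¹ ^ 2 * e ^ 2 * (((Real.sqrt (min ν κ))⁻¹) ^ 2) * M ^ 4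
        * (Real.sqrt (2 * K₁ ^ 2 + 9 * K₂ ^ 2) ^ 2) * (Real.sqrt S ^ 2) * (Real.sqrt T ^ 2) := by
      rw [hCdef]; ring
    rw [expand, e1, e2, e3, e4]
  rw [hCsq]
  have hX2 : X ^ 2 ≤ ν⁻¹ * S := by
    have eq1 : X ^ 2 = ν⁻¹ * (ν * X ^ 2) := by field_simp
    rw [eq1]; gcongr
  have hY2 : Y ^ 2 ≤ ν⁻¹ * T := by
    have eq1 : Y ^ 2 = ν⁻¹ * (ν * Y ^ 2) := by field_simp
    rw [eq1]; gcongr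
  have h1' : d₁ ≤ ν⁻¹ * (2 * M ^ 2 * e * (K₁ + 2 * K₂) * (X * Y)) := by
    refine h1.trans ?_
    have hz : 2 * ν⁻¹ * M ^ 2 * (K₁ + K₂) * (X * Y) + 2 * κ⁻¹ * M ^ 2 * K₂ * (X * Y)
        ≤ 2 * e * M ^ 2 * (K₁ + K₂) * (X * Y) + 2 * e * M ^ 2 * K₂ * (X * Y) := by gcongr
    have hz2 : 2 * e * M ^ 2 * (K₁ + K₂) * (X * Y) + 2 * e * M ^ 2 * K₂ * (X * Y)
        = 2 * M ^ 2 * e * (K₁ + 2 * K₂) * (X * Y) := by ring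
    gcongr
    linarith [hz, hz2.le]
  have step1 : ν * d₁ ^ 2 ≤ 4 * ν⁻¹ ^ 2 * e ^ 2 * e * M ^ 4 * ((K₁ + 2 * K₂) ^ 2) * S * T := by
    have A : ν * d₁ ^ 2 ≤ ν * (ν⁻¹ * (2 * M ^ 2 * e * (K₁ + 2 * K₂) * (X * Y))) ^ 2 := by
      gcongr
    have B : ν * (ν⁻¹ * (2 * M ^ 2 * e * (K₁ + 2 * K₂) * (X * Y))) ^ 2
        = ν⁻¹ * (2 * M ^ 2 * e * (K₁ + 2 * K₂)) ^ 2 * (X ^ 2 * Y ^ 2) := by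
      field_simp
    have Cc : ν⁻¹ * (2 * M ^ 2 * e * (K₁ + 2 * K₂)) ^ 2 * (X ^ 2 * Y ^ 2)
        ≤ e * (2 * M ^ 2 * e * (K₁ + 2 * K₂)) ^ 2 * ((ν⁻¹ * S) * (ν⁻¹ * T)) := by
      gcongr
    have D : e * (2 * M ^ 2 * e * (K₁ + 2 * K₂)) ^ 2 * ((ν⁻¹ * S) * (ν⁻¹ * T))
        = 4 * ν⁻¹ ^ 2 * e ^ 2 * e * M ^ 4 * ((K₁ + 2 * K₂) ^ 2) * S * T := by ring
    rw [B] at A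
    linarith [A.trans Cc, D.le]
  have step2 : κ * d₂ ^ 2 ≤ 4 * ν⁻¹ ^ 2 * e ^ 2 * e * M ^ 4 * (K₂ ^ 2) * S * T := by
    have A : κ * d₂ ^ 2 ≤ κ * (κ⁻¹ * (2 * κ⁻¹ * M ^ 2 * K₂ * (X * Y))) ^ 2 := by gcongr
    have B : κ * (κ⁻¹ * (2 * κ⁻¹ * M ^ 2 * K₂ * (X * Y))) ^ 2
        = κ⁻¹ * (2 * κ⁻¹ * M ^ 2 * K₂) ^ 2 * (X ^ 2 * Y ^ 2) := by
      field_simp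
    have Cc : κ⁻¹ * (2 * κ⁻¹ * M ^ 2 * K₂) ^ 2 * (X ^ 2 * Y ^ 2)
        ≤ e * (2 * e * M ^ 2 * K₂) ^ 2 * ((ν⁻¹ * S) * (ν⁻¹ * T)) := by
      have hsq : (2 * κ⁻¹ * M ^ 2 * K₂) ^ 2 ≤ (2 * e * M ^ 2 * K₂) ^ 2 := by gcongr
      calc κ⁻¹ * (2 * κ⁻¹ * M ^ 2 * K₂) ^ 2 * (X ^ 2 * Y ^ 2)
          ≤ e * (2 * e * M ^ 2 * K₂) ^ 2 * (X ^ 2 * Y ^ 2) := by gcongr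
        _ ≤ e * (2 * e * M ^ 2 * K₂) ^ 2 * ((ν⁻¹ * S) * (ν⁻¹ * T)) := by gcongr
    have D : e * (2 * e * M ^ 2 * K₂) ^ 2 * ((ν⁻¹ * S) * (ν⁻¹ * T))
        = 4 * ν⁻¹ ^ 2 * e ^ 2 * e * M ^ 4 * (K₂ ^ 2) * S * T := by ring
    rw [B] at A
    linarith [A.trans Cc, D.le]
  have key : (K₁ + 2 * K₂) ^ 2 + K₂ ^ 2 ≤ 2 * K₁ ^ 2 + 9 * K₂ ^ 2 := by
    nlinarith [sq_nonneg (K₁ - 2 * K₂)]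
  have hST : 0 ≤ S * T := mul_nonneg hS0 hT0
  calc ν * d₁ ^ 2 + κ * d₂ ^ 2
      ≤ 4 * ν⁻¹ ^ 2 * e ^ 2 * e * M ^ 4 * ((K₁ + 2 * K₂) ^ 2) * S * T
        + 4 * ν⁻¹ ^ 2 * e ^ 2 * e * M ^ 4 * (K₂ ^ 2) * S * T := add_le_add step1 step2
    _ = 4 * ν⁻¹ ^ 2 * e ^ 2 * e * M ^ 4 * (((K₁ + 2 * K₂) ^ 2 + K₂ ^ 2) * (S * T)) := by ring
    _ ≤ 4 * ν⁻¹ ^ 2 * e ^ 2 * e * M ^ 4 * ((2 * K₁ ^ 2 + 9 * K₂ ^ 2) * (S * T)) := by gcongr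
    _ = 4 * ν⁻¹ ^ 2 * e ^ 2 * e * M ^ 4 * (2 * K₁ ^ 2 + 9 * K₂ ^ 2) * S * T := by ring

/-- Lemma 3.5 (Lipschitz continuity of `G'` in the B-norm) with constant
`Ĉ_G = 2 ν⁻¹ η^(-3/2) M² (2K₁² + 9K₂²)^(1/2)`. -/
theorem derivative_lipschitz_Bnorm
    {V W : Type*} [NormedAddCommGroup V] [InnerProductSpace ℝ V] [FiniteDimensional ℝ V]
    [NormedAddCommGroup W] [InnerProductSpace ℝ W] [FiniteDimensional ℝ W]
    (ν κ Ri M CP : ℝ) (hν : 0 < ν) (hκ : 0 < κ) (hRi : 0 < Ri) (hM : 0 < M) (hCP : 0 < CP)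
    (b : V →ₗ[ℝ] V →ₗ[ℝ] V →ₗ[ℝ] ℝ)
    (hb0 : ∀ u v : V, b u v v = 0)
    (hb : ∀ u v w : V, |b u v w| ≤ M * ‖u‖ * ‖v‖ * ‖w‖)
    (bs : V →ₗ[ℝ] W →ₗ[ℝ] W →ₗ[ℝ] ℝ)
    (hbs0 : ∀ (u : V) (φ : W), bs u φ φ = 0)
    (hbs : ∀ (u : V) (φ ψ : W), |bs u φ ψ| ≤ M * ‖u‖ * ‖φ‖ * ‖ψ‖)
    (c : W →ₗ[ℝ] V →ₗ[ℝ] ℝ)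
    (hc : ∀ (θ : W) (v : V), |c θ v| ≤ CP ^ 2 * ‖θ‖ * ‖v‖)
    (f : V →L[ℝ] ℝ) (γ : W →L[ℝ] ℝ)
    (G₁ : V → W → V) (G₂ : V → W → W)
    (hG : ∀ (u : V) (θ : W),
      (∀ v : V, b u (G₁ u θ) v + ν * ⟪G₁ u θ, v⟫ = Ri * c (G₂ u θ) v + f v) ∧
      (∀ χ : W, bs u (G₂ u θ) χ + κ * ⟪G₂ u θ, χ⟫ = γ χ))
    (G₁' : V → W → V → W → V) (G₂' : V → W → V → W → W)
    (hG' : ∀ (u : V) (θ : W) (h : V) (s : W),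
      (∀ v : V, b h (G₁ u θ) v + b u (G₁' u θ h s) v + ν * ⟪G₁' u θ h s, v⟫
          = Ri * c (G₂' u θ h s) v) ∧
      (∀ χ : W, bs h (G₂ u θ) χ + bs u (G₂' u θ h s) χ + κ * ⟪G₂' u θ h s, χ⟫ = 0))
    (hsd1 : (min ν κ)⁻¹ ^ 2 * M *
        (2 * (Ri * CP ^ 2 * κ⁻¹ * ‖γ‖ + ‖f‖) + κ⁻¹ ^ 2 * M * ‖γ‖ ^ 2) < 1)
    (hsd2 : (min ν κ)⁻¹ * Ri * CP ^ 2 < 1)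
    (u h w : V) (θ s z : W) :
    Real.sqrt (ν * ‖G₁' (u + h) (θ + s) w z - G₁' u θ w z‖ ^ 2
        + κ * ‖G₂' (u + h) (θ + s) w z - G₂' u θ w z‖ ^ 2)
      ≤ 2 * ν⁻¹ * (min ν κ)⁻¹ * (Real.sqrt (min ν κ))⁻¹ * M ^ 2
          * Real.sqrt (2 * (Ri * CP ^ 2 * ν⁻¹ * κ⁻¹ * ‖γ‖ + ν⁻¹ * ‖f‖) ^ 2 + 9 * (κ⁻¹ * ‖γ‖) ^ 2)
          * Real.sqrt (ν * ‖h‖ ^ 2 + κ * ‖s‖ ^ 2)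
          * Real.sqrt (ν * ‖w‖ ^ 2 + κ * ‖z‖ ^ 2) := by

  -- basic positivity
  have hη : 0 < min ν κ := lt_min hν hκ
  have hRC : Ri * CP ^ 2 ≤ κ := by
    have h2' := mul_lt_mul_of_pos_left hsd2 hη
    have h3' : min ν κ * ((min ν κ)⁻¹ * Ri * CP ^ 2) = Ri * CP ^ 2 := by field_simp
    have h4' : min ν κ ≤ κ := min_le_right _ _
    nlinarith
  set K2 := κ⁻¹ * ‖γ‖ with hK2def
  set K1 := Ri * CP ^ 2 * ν⁻¹ * κ⁻¹ * ‖γ‖ + ν⁻¹ * ‖f‖ with hK1def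
  have hK2 : 0 ≤ K2 := by rw [hK2def]; positivity
  have hK1 : 0 ≤ K1 := by rw [hK1def]; positivity
  -- bound on G₂
  have hG2b : ∀ (a : V) (p : W), ‖G₂ a p‖ ≤ K2 := by
    intro a p
    have heq := (hG a p).2 (G₂ a p)
    rw [hbs0, real_inner_self_eq_norm_sq, zero_add] at heq
    refine energy_bound' κ ‖γ‖ _ hκ (norm_nonneg _) (norm_nonneg _) ?_
    rw [heq]
    have := γ.le_opNorm (G₂ a p)
    rw [Real.norm_eq_abs] at this
    linarith [le_abs_self (γ (G₂ a p))]
  -- bound on G₁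
  have hG1b : ∀ (a : V) (p : W), ‖G₁ a p‖ ≤ K1 := by
    intro a p
    have heq := (hG a p).1 (G₁ a p)
    rw [hb0, real_inner_self_eq_norm_sq, zero_add] at heq
    have hub : ‖G₁ a p‖ ≤ ν⁻¹ * (Ri * (CP ^ 2 * K2) + ‖f‖) := by
      refine energy_bound' ν _ _ hν (norm_nonneg _) (by positivity) ?_
      rw [heq]
      have B3 : Ri * c (G₂ a p) (G₁ a p) ≤ Ri * (CP ^ 2 * K2 * ‖G₁ a p‖) := by
        have t1 : Ri * c (G₂ a p) (G₁ a p) ≤ Ri * (CP ^ 2 * ‖G₂ a p‖ * ‖G₁ a p‖) :=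
          mul_le_mul_of_nonneg_left ((le_abs_self _).trans (hc _ _)) hRi.le
        have t2 : Ri * (CP ^ 2 * ‖G₂ a p‖ * ‖G₁ a p‖) ≤ Ri * (CP ^ 2 * K2 * ‖G₁ a p‖) := by
          gcongr
          exact hG2b a p
        linarith
      have B4 : f (G₁ a p) ≤ ‖f‖ * ‖G₁ a p‖ := by
        have := f.le_opNorm (G₁ a p)
        rw [Real.norm_eq_abs] at this
        linarith [le_abs_self (f (G₁ a p))]
      nlinarith [B3, B4]
    refine hub.trans ?_
    rw [hK1def, hK2def]
    have : ν⁻¹ * (Ri * (CP ^ 2 * (κ⁻¹ * ‖γ‖)) + ‖f‖)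
        = Ri * CP ^ 2 * ν⁻¹ * κ⁻¹ * ‖γ‖ + ν⁻¹ * ‖f‖ := by ring
    exact this.le
  -- generic bound on G₂'
  have hg2'b : ∀ (a : V) (p : W) (ww : V) (zz : W), ‖G₂' a p ww zz‖ ≤ κ⁻¹ * M * K2 * ‖ww‖ := by
    intro a p ww zz
    have Eg2 : ∀ χ : W, bs ww (G₂ a p) χ + bs (0 : V) (0 : W) χ + bs a (G₂' a p ww zz) χ
        + κ * ⟪G₂' a p ww zz, χ⟫ = 0 := by
      intro χ
      have E1 := (hG' a p ww zz).2 χ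
      simp only [map_zero, LinearMap.zero_apply]
      linarith
    have t := gen2_bound κ M hκ hM bs hbs0 hbs ww 0 a (G₂ a p) 0 (G₂' a p ww zz) Eg2
    simp only [norm_zero, mul_zero, add_zero] at t
    refine t.trans ?_
    calc κ⁻¹ * (M * ‖ww‖ * ‖G₂ a p‖) ≤ κ⁻¹ * (M * ‖ww‖ * K2) := by gcongr; exact hG2b a p
    _ = κ⁻¹ * M * K2 * ‖ww‖ := by ring
  -- generic bound on G₁'
  have hg1'b : ∀ (a : V) (p : W) (ww : V) (zz : W),
      ‖G₁' a p ww zz‖ ≤ ν⁻¹ * M * (K1 + K2) * ‖ww‖ := by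
    intro a p ww zz
    have Eg1 : ∀ v : V, b ww (G₁ a p) v + b (0 : V) (0 : V) v + b a (G₁' a p ww zz) v
        + ν * ⟪G₁' a p ww zz, v⟫ = Ri * c (G₂' a p ww zz) v := by
      intro v
      have E1 := (hG' a p ww zz).1 v
      simp only [map_zero, LinearMap.zero_apply]
      linarith
    have t := gen1_bound ν Ri M CP hν hRi hM hCP b hb0 hb c hc ww 0 a (G₁ a p) 0
      (G₁' a p ww zz) (G₂' a p ww zz) Eg1
    simp only [norm_zero, mul_zero, add_zero] at t
    refine t.trans ?_
    have hq2 : Ri * (CP ^ 2 * ‖G₂' a p ww zz‖) ≤ M * K2 * ‖ww‖ := by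
      have t1 : Ri * (CP ^ 2 * ‖G₂' a p ww zz‖) ≤ Ri * (CP ^ 2 * (κ⁻¹ * M * K2 * ‖ww‖)) := by
        gcongr
        exact hg2'b a p ww zz
      have t2 : Ri * (CP ^ 2 * (κ⁻¹ * M * K2 * ‖ww‖))
          ≤ κ * (κ⁻¹ * (M * K2 * ‖ww‖)) := by
        have := mul_le_mul_of_nonneg_right hRC
          (show (0:ℝ) ≤ κ⁻¹ * (M * K2 * ‖ww‖) by positivity)
        calc Ri * (CP ^ 2 * (κ⁻¹ * M * K2 * ‖ww‖))
            = Ri * CP ^ 2 * (κ⁻¹ * (M * K2 * ‖ww‖)) := by ring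
        _ ≤ κ * (κ⁻¹ * (M * K2 * ‖ww‖)) := this
      have t3 : κ * (κ⁻¹ * (M * K2 * ‖ww‖)) = M * K2 * ‖ww‖ := by field_simp
      linarith
    have hq1 : M * ‖ww‖ * ‖G₁ a p‖ ≤ M * ‖ww‖ * K1 := by gcongr; exact hG1b a p
    calc ν⁻¹ * (M * ‖ww‖ * ‖G₁ a p‖ + Ri * (CP ^ 2 * ‖G₂' a p ww zz‖))
        ≤ ν⁻¹ * (M * ‖ww‖ * K1 + M * K2 * ‖ww‖) := by gcongr <;> try linarith
    _ = ν⁻¹ * M * (K1 + K2) * ‖ww‖ := by ring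
  -- Lipschitz bound for G₂
  have Ee2 : ∀ χ : W, bs h (G₂ (u + h) (θ + s)) χ + bs (0 : V) (0 : W) χ
      + bs u (G₂ (u + h) (θ + s) - G₂ u θ) χ
      + κ * ⟪G₂ (u + h) (θ + s) - G₂ u θ, χ⟫ = 0 := by
    intro χ
    have E1 := (hG (u + h) (θ + s)).2 χ
    have E2 := (hG u θ).2 χ
    simp only [map_add, LinearMap.add_apply] at E1
    simp only [map_zero, LinearMap.zero_apply, map_sub, LinearMap.sub_apply, inner_sub_left]
    linarith
  have he2 : ‖G₂ (u + h) (θ + s) - G₂ u θ‖ ≤ κ⁻¹ * M * K2 * ‖h‖ := by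
    have t := gen2_bound κ M hκ hM bs hbs0 hbs h 0 u (G₂ (u + h) (θ + s)) 0
      (G₂ (u + h) (θ + s) - G₂ u θ) Ee2
    simp only [norm_zero, mul_zero, add_zero] at t
    refine t.trans ?_
    calc κ⁻¹ * (M * ‖h‖ * ‖G₂ (u + h) (θ + s)‖) ≤ κ⁻¹ * (M * ‖h‖ * K2) := by
          gcongr; exact hG2b _ _
    _ = κ⁻¹ * M * K2 * ‖h‖ := by ring
  -- Lipschitz bound for G₁
  have Ee1 : ∀ v : V, b h (G₁ (u + h) (θ + s)) v + b (0 : V) (0 : V) v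
      + b u (G₁ (u + h) (θ + s) - G₁ u θ) v
      + ν * ⟪G₁ (u + h) (θ + s) - G₁ u θ, v⟫
      = Ri * c (G₂ (u + h) (θ + s) - G₂ u θ) v := by
    intro v
    have E1 := (hG (u + h) (θ + s)).1 v
    have E2 := (hG u θ).1 v
    simp only [map_add, LinearMap.add_apply] at E1
    simp only [map_zero, LinearMap.zero_apply, map_sub, LinearMap.sub_apply, inner_sub_left]
    linarith
  have he1 : ‖G₁ (u + h) (θ + s) - G₁ u θ‖ ≤ ν⁻¹ * M * (K1 + K2) * ‖h‖ := by
    have t := gen1_bound ν Ri M CP hν hRi hM hCP b hb0 hb c hc h 0 u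
      (G₁ (u + h) (θ + s)) 0 (G₁ (u + h) (θ + s) - G₁ u θ)
      (G₂ (u + h) (θ + s) - G₂ u θ) Ee1
    simp only [norm_zero, mul_zero, add_zero] at t
    refine t.trans ?_
    have hq2 : Ri * (CP ^ 2 * ‖G₂ (u + h) (θ + s) - G₂ u θ‖) ≤ M * K2 * ‖h‖ := by
      have t1 : Ri * (CP ^ 2 * ‖G₂ (u + h) (θ + s) - G₂ u θ‖)
          ≤ Ri * CP ^ 2 * (κ⁻¹ * (M * K2 * ‖h‖)) := by
        calc Ri * (CP ^ 2 * ‖G₂ (u + h) (θ + s) - G₂ u θ‖)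
            ≤ Ri * (CP ^ 2 * (κ⁻¹ * M * K2 * ‖h‖)) := by gcongr
        _ = Ri * CP ^ 2 * (κ⁻¹ * (M * K2 * ‖h‖)) := by ring
      have t2 := mul_le_mul_of_nonneg_right hRC
        (show (0:ℝ) ≤ κ⁻¹ * (M * K2 * ‖h‖) by positivity)
      have t3 : κ * (κ⁻¹ * (M * K2 * ‖h‖)) = M * K2 * ‖h‖ := by field_simp
      linarith
    have hq1 : M * ‖h‖ * ‖G₁ (u + h) (θ + s)‖ ≤ M * ‖h‖ * K1 := by gcongr; exact hG1b _ _
    calc ν⁻¹ * (M * ‖h‖ * ‖G₁ (u + h) (θ + s)‖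
          + Ri * (CP ^ 2 * ‖G₂ (u + h) (θ + s) - G₂ u θ‖))
        ≤ ν⁻¹ * (M * ‖h‖ * K1 + M * K2 * ‖h‖) := by gcongr <;> linarith
    _ = ν⁻¹ * M * (K1 + K2) * ‖h‖ := by ring
  -- bound on d₂
  have Ed2 : ∀ χ : W, bs w (G₂ (u + h) (θ + s) - G₂ u θ) χ
      + bs h (G₂' (u + h) (θ + s) w z) χ
      + bs u (G₂' (u + h) (θ + s) w z - G₂' u θ w z) χ
      + κ * ⟪G₂' (u + h) (θ + s) w z - G₂' u θ w z, χ⟫ = 0 := by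
    intro χ
    have E1 := (hG' (u + h) (θ + s) w z).2 χ
    have E2 := (hG' u θ w z).2 χ
    simp only [map_add, LinearMap.add_apply] at E1
    simp only [map_sub, LinearMap.sub_apply, inner_sub_left]
    linarith
  have hd2 : ‖G₂' (u + h) (θ + s) w z - G₂' u θ w z‖
      ≤ κ⁻¹ * (2 * κ⁻¹ * M ^ 2 * K2 * (‖h‖ * ‖w‖)) := by
    have t := gen2_bound κ M hκ hM bs hbs0 hbs w h u
      (G₂ (u + h) (θ + s) - G₂ u θ) (G₂' (u + h) (θ + s) w z)
      (G₂' (u + h) (θ + s) w z - G₂' u θ w z) Ed2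
    refine t.trans ?_
    calc κ⁻¹ * (M * ‖w‖ * ‖G₂ (u + h) (θ + s) - G₂ u θ‖
          + M * ‖h‖ * ‖G₂' (u + h) (θ + s) w z‖)
        ≤ κ⁻¹ * (M * ‖w‖ * (κ⁻¹ * M * K2 * ‖h‖) + M * ‖h‖ * (κ⁻¹ * M * K2 * ‖w‖)) := by
          have hgw := hg2'b (u + h) (θ + s) w z
          gcongr <;> try assumption
    _ = κ⁻¹ * (2 * κ⁻¹ * M ^ 2 * K2 * (‖h‖ * ‖w‖)) := by ring
  -- bound on d₁
  have Ed1 : ∀ v : V, b w (G₁ (u + h) (θ + s) - G₁ u θ) v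
      + b h (G₁' (u + h) (θ + s) w z) v
      + b u (G₁' (u + h) (θ + s) w z - G₁' u θ w z) v
      + ν * ⟪G₁' (u + h) (θ + s) w z - G₁' u θ w z, v⟫
      = Ri * c (G₂' (u + h) (θ + s) w z - G₂' u θ w z) v := by
    intro v
    have E1 := (hG' (u + h) (θ + s) w z).1 v
    have E2 := (hG' u θ w z).1 v
    simp only [map_add, LinearMap.add_apply] at E1
    simp only [map_sub, LinearMap.sub_apply, inner_sub_left]
    linarith
  have hd1 : ‖G₁' (u + h) (θ + s) w z - G₁' u θ w z‖
      ≤ ν⁻¹ * (2 * ν⁻¹ * M ^ 2 * (K1 + K2) * (‖h‖ * ‖w‖)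
          + 2 * κ⁻¹ * M ^ 2 * K2 * (‖h‖ * ‖w‖)) := by
    have t := gen1_bound ν Ri M CP hν hRi hM hCP b hb0 hb c hc w h u
      (G₁ (u + h) (θ + s) - G₁ u θ) (G₁' (u + h) (θ + s) w z)
      (G₁' (u + h) (θ + s) w z - G₁' u θ w z)
      (G₂' (u + h) (θ + s) w z - G₂' u θ w z) Ed1
    refine t.trans ?_
    have hq3 : Ri * (CP ^ 2 * ‖G₂' (u + h) (θ + s) w z - G₂' u θ w z‖)
        ≤ 2 * κ⁻¹ * M ^ 2 * K2 * (‖h‖ * ‖w‖) := by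
      have t1 : Ri * (CP ^ 2 * ‖G₂' (u + h) (θ + s) w z - G₂' u θ w z‖)
          ≤ Ri * CP ^ 2 * (κ⁻¹ * (2 * κ⁻¹ * M ^ 2 * K2 * (‖h‖ * ‖w‖))) := by
        calc Ri * (CP ^ 2 * ‖G₂' (u + h) (θ + s) w z - G₂' u θ w z‖)
            ≤ Ri * (CP ^ 2 * (κ⁻¹ * (2 * κ⁻¹ * M ^ 2 * K2 * (‖h‖ * ‖w‖)))) := by gcongr
        _ = Ri * CP ^ 2 * (κ⁻¹ * (2 * κ⁻¹ * M ^ 2 * K2 * (‖h‖ * ‖w‖))) := by ring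
      have t2 := mul_le_mul_of_nonneg_right hRC
        (show (0:ℝ) ≤ κ⁻¹ * (2 * κ⁻¹ * M ^ 2 * K2 * (‖h‖ * ‖w‖)) by positivity)
      have t3 : κ * (κ⁻¹ * (2 * κ⁻¹ * M ^ 2 * K2 * (‖h‖ * ‖w‖)))
          = 2 * κ⁻¹ * M ^ 2 * K2 * (‖h‖ * ‖w‖) := by field_simp
      linarith
    have hq1 : M * ‖w‖ * ‖G₁ (u + h) (θ + s) - G₁ u θ‖
        ≤ M * ‖w‖ * (ν⁻¹ * M * (K1 + K2) * ‖h‖) := by gcongr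
    have hq2 : M * ‖h‖ * ‖G₁' (u + h) (θ + s) w z‖
        ≤ M * ‖h‖ * (ν⁻¹ * M * (K1 + K2) * ‖w‖) := by gcongr; exact hg1'b _ _ _ _
    calc ν⁻¹ * (M * ‖w‖ * ‖G₁ (u + h) (θ + s) - G₁ u θ‖
          + M * ‖h‖ * ‖G₁' (u + h) (θ + s) w z‖
          + Ri * (CP ^ 2 * ‖G₂' (u + h) (θ + s) w z - G₂' u θ w z‖))
        ≤ ν⁻¹ * (M * ‖w‖ * (ν⁻¹ * M * (K1 + K2) * ‖h‖)
          + M * ‖h‖ * (ν⁻¹ * M * (K1 + K2) * ‖w‖)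
          + 2 * κ⁻¹ * M ^ 2 * K2 * (‖h‖ * ‖w‖)) := by gcongr <;> try linarith
    _ = ν⁻¹ * (2 * ν⁻¹ * M ^ 2 * (K1 + K2) * (‖h‖ * ‖w‖)
          + 2 * κ⁻¹ * M ^ 2 * K2 * (‖h‖ * ‖w‖)) := by ring
  exact final_arith ν κ M K1 K2 ‖h‖ ‖w‖ (ν * ‖h‖ ^ 2 + κ * ‖s‖ ^ 2) (ν * ‖w‖ ^ 2 + κ * ‖z‖ ^ 2)
    ‖G₁' (u + h) (θ + s) w z - G₁' u θ w z‖ ‖G₂' (u + h) (θ + s) w z - G₂' u θ w z‖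
    hν hκ hM hK1 hK2 (norm_nonneg _) (norm_nonneg _) (norm_nonneg _) (norm_nonneg _)
    (le_add_of_nonneg_right (by positivity)) (le_add_of_nonneg_right (by positivity)) hd1 hd2
end
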